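/- arXiv:1512.08344 — 4 statements merged into one kernel-verified Lean document; each statement's English description precedes it below -/
import Mathlib

section
/- Let G1 be a connected δ1-regular graph on n vertices and G2 be a connected δ2-regular graph on δ1 vertices, and write λi = λ(Gi) for i = 1,2. Then min{λ1, λ2} ≤ λ(G1®G2) ≤ min{λ1, δ2+1}. -/
open SimpleGraph

section Defs

variable {V : Type*}

/-- The set of edges of `G` with one endpoint in `X` and the other outside `X`. -/
def edgeBoundary (G : SimpleGraph V) (X : Set V) : Set (Sym2 V) :=
  {e | e ∈ G.edgeSet ∧ ∃ u ∈ X, ∃ v ∈ Xᶜ, e = s(u, v)}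

/-- The edge-connectivity `λ(G)`: the minimum number of edges whose removal disconnects `G`. -/
noncomputable def edgeConn (G : SimpleGraph V) : ℕ :=
  sInf {k | ∃ F : Set (Sym2 V), F ⊆ G.edgeSet ∧ F.ncard = k ∧ ¬(G.deleteEdges F).Connected}

/-- `F` is a restricted edge-cut of `G`: removing `F` disconnects `G` and leaves no
isolated vertices. -/
def IsRestrictedEdgeCut (G : SimpleGraph V) (F : Set (Sym2 V)) : Prop :=
  F ⊆ G.edgeSet ∧ ¬(G.deleteEdges F).Connected ∧ ∀ v : V, ∃ w : V, (G.deleteEdges F).Adj v w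

/-- The restricted edge-connectivity `λ'(G)`. -/
noncomputable def restrictedEdgeConn (G : SimpleGraph V) : ℕ :=
  sInf {k | ∃ F : Set (Sym2 V), IsRestrictedEdgeCut G F ∧ F.ncard = k}

/-- The vertex-connectivity `κ(G)`: the minimum size of a set of vertices whose removal
leaves a disconnected graph or a graph with at most one vertex. -/
noncomputable def vertexConn (G : SimpleGraph V) : ℕ :=
  sInf {k | ∃ S : Set V, S.ncard = k ∧
    (¬(G.induce (Sᶜ : Set V)).Connected ∨ (Sᶜ : Set V).ncard ≤ 1)}

/-- The minimum edge-degree `ξ(G) = min {d(u) + d(v) - 2 : uv ∈ E(G)}`. -/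
noncomputable def minEdgeDegree (G : SimpleGraph V) : ℕ :=
  sInf {k | ∃ u v : V, G.Adj u v ∧ (G.neighborSet u).ncard + (G.neighborSet v).ncard - 2 = k}

/-- `G` is `λ'`-optimal if `λ'(G) = ξ(G)`. -/
def LambdaPrimeOptimal (G : SimpleGraph V) : Prop :=
  restrictedEdgeConn G = minEdgeDegree G

/-- The replacement product of `G1` and `G2` with respect to an edge-labelling `ℓ`,
where `ℓ x i` is the other endpoint of the edge of `G1` labelled `i` at the vertex `x`.
Vertices `(x, i)` and `(y, j)` are adjacent iff either `x = y` and `i j ∈ E(G2)`, or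
`x y ∈ E(G1)` and the edge `x y` is labelled `i` at `x` and `j` at `y`. -/
def replacementProduct {V1 V2 : Type*} (G1 : SimpleGraph V1) (G2 : SimpleGraph V2)
    (ℓ : V1 → V2 → V1) : SimpleGraph (V1 × V2) where
  Adj p q := (p.1 = q.1 ∧ G2.Adj p.2 q.2) ∨
    (G1.Adj p.1 q.1 ∧ ℓ p.1 p.2 = q.1 ∧ ℓ q.1 q.2 = p.1)
  symm := by
    constructor
    rintro p q (⟨h1, h2⟩ | ⟨h1, h2, h3⟩)
    · exact Or.inl ⟨h1.symm, h2.symm⟩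
    · exact Or.inr ⟨h1.symm, h3, h2⟩
  loopless := by
    constructor
    rintro p (⟨_, h⟩ | ⟨h, _⟩)
    · exact G2.loopless.irrefl _ h
    · exact G1.loopless.irrefl _ h

/-- `ℓ` is a valid edge-labelling of `G1` for the replacement product:
for each vertex `x`, `ℓ x` is injective and `ℓ x i` is always a neighbour of `x`
(hence `ℓ x` enumerates the neighbours of `x` when `G1` is `|V2|`-regular). -/
def IsRPLabelling {V1 V2 : Type*} (G1 : SimpleGraph V1) (ℓ : V1 → V2 → V1) : Prop :=
  (∀ x, Function.Injective (ℓ x)) ∧ ∀ x i, G1.Adj x (ℓ x i)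

end Defs

section AuxProof

variable {V V1 V2 : Type*}

/-- Helper: `edgeConn G ≤ |F|` for any disconnecting set of edges `F`. -/
lemma edgeConn_le_of_cut {G : SimpleGraph V} {F : Set (Sym2 V)}
    (h1 : F ⊆ G.edgeSet) (h2 : ¬(G.deleteEdges F).Connected) : edgeConn G ≤ F.ncard :=
  Nat.sInf_le ⟨F, h1, rfl, h2⟩

/-- Helper: existence of a minimum cut once some cut exists. -/
lemma exists_min_cut {G : SimpleGraph V} {F0 : Set (Sym2 V)}
    (h1 : F0 ⊆ G.edgeSet) (h2 : ¬(G.deleteEdges F0).Connected) :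
    ∃ F : Set (Sym2 V), F ⊆ G.edgeSet ∧ F.ncard = edgeConn G ∧ ¬(G.deleteEdges F).Connected := by
  have : edgeConn G ∈ {k | ∃ F : Set (Sym2 V), F ⊆ G.edgeSet ∧ F.ncard = k ∧
      ¬(G.deleteEdges F).Connected} := Nat.sInf_mem ⟨F0.ncard, F0, h1, rfl, h2⟩
  obtain ⟨F, hF1, hF2, hF3⟩ := this
  exact ⟨F, hF1, hF2, hF3⟩

lemma reachable_eq_of_isolated {G : SimpleGraph V} {u : V}
    (h : ∀ w, ¬ G.Adj u w) {v : V} (hr : G.Reachable u v) : u = v := by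
  obtain ⟨w⟩ := hr
  cases w with
  | nil => rfl
  | cons h' _ => exact absurd h' (h _)

lemma rp_adj (G1 : SimpleGraph V1) (G2 : SimpleGraph V2) (ℓ : V1 → V2 → V1) (p q : V1 × V2) :
    (replacementProduct G1 G2 ℓ).Adj p q ↔ (p.1 = q.1 ∧ G2.Adj p.2 q.2) ∨
      (G1.Adj p.1 q.1 ∧ ℓ p.1 p.2 = q.1 ∧ ℓ q.1 q.2 = p.1) := Iff.rfl

open Classical in
/-- A choice of label: `rpLab ℓ x y` is some `i` with `ℓ x i = y` when one exists. -/
noncomputable def rpLab [Nonempty V2] (ℓ : V1 → V2 → V1) (x y : V1) : V2 :=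
  if h : ∃ i, ℓ x i = y then h.choose else Classical.arbitrary V2

lemma rpLab_spec [Nonempty V2] (ℓ : V1 → V2 → V1) {x y : V1}
    (h : ∃ i, ℓ x i = y) : ℓ x (rpLab ℓ x y) = y := by
  rw [rpLab, dif_pos h]
  exact h.choose_spec

/-- Lift an edge of `G1` to the corresponding cross edge of the replacement product. -/
noncomputable def rpLift [Nonempty V2] (ℓ : V1 → V2 → V1) :
    Sym2 V1 → Sym2 (V1 × V2) :=
  Sym2.lift ⟨fun a b => s((a, rpLab ℓ a b), (b, rpLab ℓ b a)), fun _ _ => Sym2.eq_swap⟩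

lemma rpLift_pair [Nonempty V2] (ℓ : V1 → V2 → V1) (a b : V1) :
    rpLift ℓ s(a, b) = s((a, rpLab ℓ a b), (b, rpLab ℓ b a)) := rfl

lemma map_fst_rpLift [Nonempty V2] (ℓ : V1 → V2 → V1) (e : Sym2 V1) :
    Sym2.map Prod.fst (rpLift ℓ e) = e := by
  induction e using Sym2.ind with
  | _ a b => rw [rpLift_pair, Sym2.map_pair_eq]

lemma rpLift_injective [Nonempty V2] (ℓ : V1 → V2 → V1) :
    Function.Injective (rpLift ℓ) := fun e e' h => by
  rw [← map_fst_rpLift ℓ e, ← map_fst_rpLift ℓ e', h]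

/-- Surjectivity of the labelling onto neighbours, from regularity. -/
lemma rp_surj [Fintype V1] [Fintype V2] (G1 : SimpleGraph V1) (ℓ : V1 → V2 → V1)
    (hℓ : IsRPLabelling G1 ℓ)
    (hreg : ∀ x, (G1.neighborSet x).ncard = Fintype.card V2) :
    ∀ x y, G1.Adj x y → ∃ i, ℓ x i = y := by
  intro x y hxy
  set f : V2 → G1.neighborSet x := fun i => ⟨ℓ x i, hℓ.2 x i⟩ with hf
  have hinj : Function.Injective f := fun a b h => hℓ.1 x (congrArg Subtype.val h)
  have hcard : Nat.card V2 = Nat.card (G1.neighborSet x) := by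
    rw [Nat.card_eq_fintype_card, Nat.card_coe_set_eq, hreg x]
  have hbij : Function.Bijective f := (Nat.bijective_iff_injective_and_card f).mpr ⟨hinj, hcard⟩
  obtain ⟨i, hi⟩ := hbij.2 ⟨y, hxy⟩
  exact ⟨i, congrArg Subtype.val hi⟩

/-- Projection of reachability in the replacement product minus `F` to `G1` minus `F1`. -/
lemma rp_proj (G1 : SimpleGraph V1) (G2 : SimpleGraph V2) (ℓ : V1 → V2 → V1)
    (F : Set (Sym2 (V1 × V2))) (F1 : Set (Sym2 V1))
    (hF : ∀ a b i j, G1.Adj a b → ℓ a i = b → ℓ b j = a →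
      s(a, b) ∈ F1 → s((a, i), (b, j)) ∈ F)
    {p q : V1 × V2}
    (h : ((replacementProduct G1 G2 ℓ).deleteEdges F).Reachable p q) :
    (G1.deleteEdges F1).Reachable p.1 q.1 := by
  obtain ⟨w⟩ := h
  induction w with
  | nil => exact Reachable.refl _
  | @cons u v r h w ih =>
    rw [SimpleGraph.deleteEdges_adj] at h
    obtain ⟨(⟨h1, -⟩ | ⟨h1, h2, h3⟩), hne⟩ := h
    · rw [show u.1 = v.1 from h1]; exact ih
    · refine (SimpleGraph.Adj.reachable ?_).trans ih
      rw [SimpleGraph.deleteEdges_adj]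
      exact ⟨h1, fun hm => hne (hF _ _ _ _ h1 h2 h3 hm)⟩

/-- Lifting reachability inside one cloud. -/
lemma rp_cloud_lift (G1 : SimpleGraph V1) (G2 : SimpleGraph V2) (ℓ : V1 → V2 → V1)
    (F : Set (Sym2 (V1 × V2))) (F2 : Set (Sym2 V2)) (x : V1)
    (hF : ∀ i j, G2.Adj i j → s((x, i), (x, j)) ∈ F → s(i, j) ∈ F2)
    {i j : V2} (h : (G2.deleteEdges F2).Reachable i j) :
    ((replacementProduct G1 G2 ℓ).deleteEdges F).Reachable (x, i) (x, j) := by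
  obtain ⟨w⟩ := h
  induction w with
  | nil => exact Reachable.refl _
  | @cons u v r h w ih =>
    rw [SimpleGraph.deleteEdges_adj] at h
    refine (SimpleGraph.Adj.reachable ?_).trans ih
    rw [SimpleGraph.deleteEdges_adj]
    exact ⟨Or.inl ⟨rfl, h.1⟩, fun hm => h.2 (hF _ _ h.1 hm)⟩

/-- Lifting reachability in `G1` to the replacement product when all clouds are connected. -/
lemma rp_lift (G1 : SimpleGraph V1) (G2 : SimpleGraph V2) (ℓ : V1 → V2 → V1)
    (F : Set (Sym2 (V1 × V2))) (F1 : Set (Sym2 V1))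
    (hsurj : ∀ a b, G1.Adj a b → ∃ i, ℓ a i = b)
    (hcloud : ∀ x i j, ((replacementProduct G1 G2 ℓ).deleteEdges F).Reachable (x, i) (x, j))
    (hF : ∀ a b i j, G1.Adj a b → ℓ a i = b → ℓ b j = a →
      s((a, i), (b, j)) ∈ F → s(a, b) ∈ F1)
    {x y : V1} (h : (G1.deleteEdges F1).Reachable x y) (i j : V2) :
    ((replacementProduct G1 G2 ℓ).deleteEdges F).Reachable (x, i) (y, j) := by
  obtain ⟨w⟩ := h
  induction w generalizing i j with
  | nil => exact hcloud _ _ _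
  | @cons a b r h w ih =>
    rw [SimpleGraph.deleteEdges_adj] at h
    obtain ⟨i', hi'⟩ := hsurj a b h.1
    obtain ⟨j', hj'⟩ := hsurj b a h.1.symm
    have hedge : ((replacementProduct G1 G2 ℓ).deleteEdges F).Adj (a, i') (b, j') := by
      rw [SimpleGraph.deleteEdges_adj]
      exact ⟨Or.inr ⟨h.1, hi', hj'⟩, fun hm => h.2 (hF _ _ _ _ h.1 hi' hj' hm)⟩
    exact ((hcloud a i i').trans hedge.reachable).trans (ih j' j)

end AuxProof

/-- Theorem 3.1, bounds (3.1). If `G1` is a connected `δ1`-regular graph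
on `n` vertices and `G2` is a connected `δ2`-regular graph on `δ1` vertices, then
`min {λ1, λ2} ≤ λ(G1 ® G2) ≤ min {λ1, δ2 + 1}`. -/
theorem edgeConn_replacementProduct_bounds
    {V1 V2 : Type*} [Fintype V1] [Fintype V2] {n δ1 δ2 : ℕ}
    (G1 : SimpleGraph V1) (G2 : SimpleGraph V2) (ℓ : V1 → V2 → V1)
    (hℓ : IsRPLabelling G1 ℓ)
    (hc1 : G1.Connected) (hc2 : G2.Connected)
    (hr1 : ∀ x : V1, (G1.neighborSet x).ncard = δ1)
    (hr2 : ∀ i : V2, (G2.neighborSet i).ncard = δ2)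
    (hn : Fintype.card V1 = n) (hd : Fintype.card V2 = δ1) :
    min (edgeConn G1) (edgeConn G2) ≤ edgeConn (replacementProduct G1 G2 ℓ) ∧
    edgeConn (replacementProduct G1 G2 ℓ) ≤ min (edgeConn G1) (δ2 + 1) := by
  classical
  haveI hV1 : Nonempty V1 := hc1.nonempty
  haveI hV2 : Nonempty V2 := hc2.nonempty
  set R := replacementProduct G1 G2 ℓ with hRdef
  have hreg : ∀ x, (G1.neighborSet x).ncard = Fintype.card V2 := fun x => by rw [hr1 x, hd]
  have hsurj : ∀ a b, G1.Adj a b → ∃ i, ℓ a i = b := rp_surj G1 ℓ hℓ hreg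
  have hδ1pos : 0 < δ1 := hd ▸ Fintype.card_pos
  obtain ⟨x0⟩ := id hV1
  obtain ⟨i0⟩ := id hV2
  obtain ⟨y0, hy0⟩ : (G1.neighborSet x0).Nonempty :=
    Set.nonempty_of_ncard_ne_zero (by rw [hr1]; omega)
  have hadj0 : G1.Adj x0 y0 := hy0
  -- the neighbour set of a vertex in R
  have hnbrset : ∀ (x : V1) (i : V2), R.neighborSet (x, i) =
      (fun j => (x, j)) '' G2.neighborSet i ∪ {(ℓ x i, rpLab ℓ (ℓ x i) x)} := by
    intro x i
    ext ⟨c, d⟩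
    rw [SimpleGraph.mem_neighborSet, rp_adj, Set.mem_union, Set.mem_image,
      Set.mem_singleton_iff]
    dsimp only
    constructor
    · rintro (⟨h1, h2⟩ | ⟨h1, h2, h3⟩)
      · exact Or.inl ⟨d, h2, by rw [← h1]⟩
      · refine Or.inr ?_
        subst h2
        have hlab : ℓ (ℓ x i) (rpLab ℓ (ℓ x i) x) = x := rpLab_spec ℓ ⟨d, h3⟩
        have hd' : d = rpLab ℓ (ℓ x i) x := hℓ.1 (ℓ x i) (h3.trans hlab.symm)
        rw [hd']
    · rintro (⟨j, hj, hji⟩ | h)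
      · rw [Prod.mk.injEq] at hji
        obtain ⟨rfl, rfl⟩ := hji
        exact Or.inl ⟨rfl, hj⟩
      · rw [Prod.mk.injEq] at h
        obtain ⟨rfl, rfl⟩ := h
        exact Or.inr ⟨hℓ.2 x i, rfl, rpLab_spec ℓ (hsurj (ℓ x i) x (hℓ.2 x i).symm)⟩
  have hnbr : ∀ (x : V1) (i : V2), (R.neighborSet (x, i)).ncard = δ2 + 1 := by
    intro x i
    rw [hnbrset x i, Set.ncard_union_eq ?disj (Set.toFinite _) (Set.toFinite _),
      Set.ncard_image_of_injective _ (fun a b h => congrArg Prod.snd h), hr2,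
      Set.ncard_singleton]
    case disj =>
      rw [Set.disjoint_singleton_right]
      rintro ⟨j, -, hj⟩
      exact (hℓ.2 x i).ne (congrArg Prod.fst hj)
  -- the incidence set of (x0, i0) is a cut of R of size δ2 + 1
  have hWit : ∃ F : Set (Sym2 (V1 × V2)), F ⊆ R.edgeSet ∧ F.ncard = δ2 + 1 ∧
      ¬(R.deleteEdges F).Connected := by
    refine ⟨R.incidenceSet (x0, i0), R.incidenceSet_subset _, ?_, ?_⟩
    · rw [← Nat.card_coe_set_eq, Nat.card_congr (R.incidenceSetEquivNeighborSet (x0, i0)),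
        Nat.card_coe_set_eq, hnbr]
    · intro hcon
      have hiso : ∀ w, ¬ (R.deleteEdges (R.incidenceSet (x0, i0))).Adj (x0, i0) w := by
        intro w hw
        rw [SimpleGraph.deleteEdges_adj] at hw
        exact hw.2 ((R.mk'_mem_incidenceSet_left_iff).2 hw.1)
      have := reachable_eq_of_isolated hiso (hcon.preconnected (x0, i0) (y0, i0))
      exact hadj0.ne (congrArg Prod.fst this)
  obtain ⟨Fw, hFw1, hFw2, hFw3⟩ := hWit
  have hub2 : edgeConn R ≤ δ2 + 1 := hFw2 ▸ edgeConn_le_of_cut hFw1 hFw3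
  -- upper bound by λ(G1)
  have hub1 : edgeConn R ≤ edgeConn G1 := by
    have hcut0 : ¬(G1.deleteEdges G1.edgeSet).Connected := by
      intro hcon
      have hiso : ∀ w, ¬ (G1.deleteEdges G1.edgeSet).Adj x0 w := by
        intro w hw
        rw [SimpleGraph.deleteEdges_adj] at hw
        exact hw.2 hw.1
      exact hadj0.ne (reachable_eq_of_isolated hiso (hcon.preconnected x0 y0))
    obtain ⟨F1, hF1sub, hF1card, hF1dis⟩ := exists_min_cut subset_rfl hcut0
    set F : Set (Sym2 (V1 × V2)) := rpLift ℓ '' F1 with hFdef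
    have hFsub : F ⊆ R.edgeSet := by
      rintro e ⟨e1, he1, rfl⟩
      revert he1
      induction e1 using Sym2.ind with
      | _ a b =>
        intro he1
        have hab : G1.Adj a b := hF1sub he1
        rw [rpLift_pair, SimpleGraph.mem_edgeSet]
        exact Or.inr ⟨hab, rpLab_spec ℓ (hsurj a b hab), rpLab_spec ℓ (hsurj b a hab.symm)⟩
    have hproj : ∀ a b i j, G1.Adj a b → ℓ a i = b → ℓ b j = a →
        s(a, b) ∈ F1 → s((a, i), (b, j)) ∈ F := by
      intro a b i j hab hi hj hm
      have h1 : rpLab ℓ a b = i := hℓ.1 a (by rw [rpLab_spec ℓ ⟨i, hi⟩, hi])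
      have h2 : rpLab ℓ b a = j := hℓ.1 b (by rw [rpLab_spec ℓ ⟨j, hj⟩, hj])
      have : rpLift ℓ s(a, b) = s((a, i), (b, j)) := by rw [rpLift_pair, h1, h2]
      exact this ▸ Set.mem_image_of_mem _ hm
    have hFdis : ¬(R.deleteEdges F).Connected := by
      intro hcon
      have hnp : ¬ (G1.deleteEdges F1).Preconnected := fun hp => hF1dis ⟨hp⟩
      obtain ⟨x, y, hxy⟩ : ∃ x y, ¬ (G1.deleteEdges F1).Reachable x y := by
        by_contra hcon'
        push_neg at hcon'
        exact hnp fun u v => hcon' u v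
      exact hxy (rp_proj G1 G2 ℓ F F1 hproj (hcon.preconnected (x, i0) (y, i0)))
    have := edgeConn_le_of_cut hFsub hFdis
    rwa [hFdef, Set.ncard_image_of_injective _ (rpLift_injective ℓ), hF1card] at this
  -- lower bound
  have hlb : min (edgeConn G1) (edgeConn G2) ≤ edgeConn R := by
    obtain ⟨F, hFsub, hFcard, hFdis⟩ := exists_min_cut hFw1 hFw3
    by_cases hcase : ∀ (x : V1) (i j : V2), ((R).deleteEdges F).Reachable (x, i) (x, j)
    · -- all clouds internally connected: project to G1
      refine le_trans (min_le_left _ _) ?_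
      rw [← hFcard]
      set F1 : Set (Sym2 V1) := {e | ∃ a b i j, e = s(a, b) ∧ G1.Adj a b ∧
        ℓ a i = b ∧ ℓ b j = a ∧ s((a, i), (b, j)) ∈ F} with hF1def
      have hF1toF : ∀ a b i j, G1.Adj a b → ℓ a i = b → ℓ b j = a →
          s((a, i), (b, j)) ∈ F → s(a, b) ∈ F1 :=
        fun a b i j h1 h2 h3 h4 => ⟨a, b, i, j, rfl, h1, h2, h3, h4⟩
      have hF1sub : F1 ⊆ G1.edgeSet := by
        rintro e ⟨a, b, i, j, rfl, hab, -⟩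
        exact hab
      have hF1dis : ¬(G1.deleteEdges F1).Connected := by
        intro hcon
        have hnp : ¬ (R.deleteEdges F).Preconnected := fun hp => hFdis ⟨hp⟩
        obtain ⟨p, q, hpq⟩ : ∃ p q, ¬ (R.deleteEdges F).Reachable p q := by
          by_contra hcon'
          push_neg at hcon'
          exact hnp fun u v => hcon' u v
        exact hpq (rp_lift G1 G2 ℓ F F1 hsurj hcase hF1toF
          (hcon.preconnected p.1 q.1) p.2 q.2)
      have hle : edgeConn G1 ≤ F1.ncard := edgeConn_le_of_cut hF1sub hF1dis
      have hle2 : F1.ncard ≤ F.ncard := by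
        have himg : rpLift ℓ '' F1 ⊆ F := by
          rintro e ⟨e1, he1, rfl⟩
          obtain ⟨a, b, i, j, rfl, hab, hi, hj, hmem⟩ := he1
          have h1 : rpLab ℓ a b = i := hℓ.1 a (by rw [rpLab_spec ℓ ⟨i, hi⟩, hi])
          have h2 : rpLab ℓ b a = j := hℓ.1 b (by rw [rpLab_spec ℓ ⟨j, hj⟩, hj])
          rw [rpLift_pair, h1, h2]
          exact hmem
        calc F1.ncard = (rpLift ℓ '' F1).ncard :=
              (Set.ncard_image_of_injective _ (rpLift_injective ℓ)).symm
          _ ≤ F.ncard := Set.ncard_le_ncard himg (Set.toFinite F)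
      exact hle.trans hle2
    · -- some cloud is disconnected: project to G2
      push_neg at hcase
      obtain ⟨x, i, j, hij⟩ := hcase
      refine le_trans (min_le_right _ _) ?_
      rw [← hFcard]
      set F2 : Set (Sym2 V2) := {e | ∃ i j, e = s(i, j) ∧ G2.Adj i j ∧
        s((x, i), (x, j)) ∈ F} with hF2def
      have hF2toF : ∀ i j, G2.Adj i j → s((x, i), (x, j)) ∈ F → s(i, j) ∈ F2 :=
        fun i j h1 h2 => ⟨i, j, rfl, h1, h2⟩
      have hF2sub : F2 ⊆ G2.edgeSet := by
        rintro e ⟨a, b, rfl, hab, -⟩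
        exact hab
      have hF2dis : ¬(G2.deleteEdges F2).Connected := by
        intro hcon
        exact hij (rp_cloud_lift G1 G2 ℓ F F2 x hF2toF (hcon.preconnected i j))
      have hle : edgeConn G2 ≤ F2.ncard := edgeConn_le_of_cut hF2sub hF2dis
      have hle2 : F2.ncard ≤ F.ncard := by
        have himg : Sym2.map (fun j => (x, j)) '' F2 ⊆ F := by
          rintro e ⟨e2, he2, rfl⟩
          obtain ⟨a, b, rfl, hab, hmem⟩ := he2
          rw [Sym2.map_pair_eq]
          exact hmem
        calc F2.ncard = (Sym2.map (fun j => (x, j)) '' F2).ncard :=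
              (Set.ncard_image_of_injective _
                (Sym2.map.injective (fun a b h => congrArg Prod.snd h))).symm
          _ ≤ F.ncard := Set.ncard_le_ncard himg (Set.toFinite F)
      exact hle.trans hle2
  exact ⟨hlb, le_min hub1 hub2⟩
end

section
/- Let G1 be a connected δ1-regular graph on n vertices with δ1 ≥ 4 and G2 be a connected δ2-regular graph on δ1 vertices, and write κ1 = κ(G1) and λi = λ(Gi) for i = 1,2. If G2 is λ'-optimal and either κ1 ≥ λ1−λ2+1 or κ1 ≥ λ2+1, then λ'(G1®G2) = min{λ1, 2δ2}. -/
open SimpleGraph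

namespace RPaux

variable {V : Type*}

/-- If `S` is nonempty, its complement nonempty, and `S` is closed under adjacency,
then `G` is not connected. -/
lemma not_connected_of_closed (G : SimpleGraph V) (S : Set V) (hne : S.Nonempty)
    (hne' : Sᶜ.Nonempty) (hcl : ∀ ⦃u v : V⦄, G.Adj u v → u ∈ S → v ∈ S) :
    ¬ G.Connected := by
  intro h
  obtain ⟨u, hu⟩ := hne
  obtain ⟨v, hv⟩ := hne'
  obtain ⟨w⟩ := h.preconnected u v
  have key : ∀ {a b : V} (_ : G.Walk a b), a ∈ S → b ∈ S := by
    intro a b p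
    induction p with
    | nil => exact id
    | cons h p ih => exact fun ha => ih (hcl h ha)
  exact hv (key w hu)

lemma edgeBoundary_subset_edgeSet (G : SimpleGraph V) (D : Set V) :
    edgeBoundary G D ⊆ G.edgeSet := fun _ he => he.1

lemma mem_edgeBoundary (G : SimpleGraph V) {D : Set V} {u v : V}
    (h : G.Adj u v) (hu : u ∈ D) (hv : v ∉ D) : s(u, v) ∈ edgeBoundary G D :=
  ⟨h, u, hu, v, hv, rfl⟩

lemma mem_edgeBoundary' (G : SimpleGraph V) {D : Set V} {u v : V}
    (h : G.Adj u v) (hu : u ∉ D) (hv : v ∈ D) : s(u, v) ∈ edgeBoundary G D := by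
  rw [Sym2.eq_swap]; exact mem_edgeBoundary G h.symm hv hu

lemma not_mem_edgeBoundary_of_mem_mem (G : SimpleGraph V) {D : Set V} {u v : V}
    (hu : u ∈ D) (hv : v ∈ D) : s(u, v) ∉ edgeBoundary G D := by
  rintro ⟨-, a, ha, b, hb, he⟩
  rcases Sym2.eq_iff.1 he with ⟨h1, h2⟩ | ⟨h1, h2⟩
  · exact hb (h2.symm ▸ hv)
  · exact hb (h1.symm ▸ hu)

lemma not_mem_edgeBoundary_of_not_mem_not_mem (G : SimpleGraph V) {D : Set V} {u v : V}
    (hu : u ∉ D) (hv : v ∉ D) : s(u, v) ∉ edgeBoundary G D := by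
  rintro ⟨-, a, ha, b, hb, he⟩
  rcases Sym2.eq_iff.1 he with ⟨h1, h2⟩ | ⟨h1, h2⟩
  · exact hu (h1.symm ▸ ha)
  · exact hv (h2.symm ▸ ha)

lemma deleteEdges_boundary_closed (G : SimpleGraph V) (D : Set V) {u v : V}
    (h : (G.deleteEdges (edgeBoundary G D)).Adj u v) (hu : u ∈ D) : v ∈ D := by
  rw [deleteEdges_adj] at h
  by_contra hv
  exact h.2 (mem_edgeBoundary G h.1 hu hv)

lemma not_connected_deleteEdges_boundary (G : SimpleGraph V) (D : Set V)
    (hne : D.Nonempty) (hne' : Dᶜ.Nonempty) :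
    ¬ (G.deleteEdges (edgeBoundary G D)).Connected :=
  not_connected_of_closed _ D hne hne'
    (fun _ _ h hu => deleteEdges_boundary_closed G D h hu)

lemma edgeConn_le_boundary [Finite V] (G : SimpleGraph V) (D : Set V)
    (hne : D.Nonempty) (hne' : Dᶜ.Nonempty) :
    edgeConn G ≤ (edgeBoundary G D).ncard :=
  Nat.sInf_le ⟨edgeBoundary G D, edgeBoundary_subset_edgeSet G D, rfl,
    not_connected_deleteEdges_boundary G D hne hne'⟩

lemma restrictedEdgeConn_le_boundary (G : SimpleGraph V) (D : Set V)
    (hne : D.Nonempty) (hne' : Dᶜ.Nonempty)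
    (hD : ∀ v ∈ D, ∃ u ∈ D, G.Adj v u) (hD' : ∀ v ∈ Dᶜ, ∃ u ∈ Dᶜ, G.Adj v u) :
    restrictedEdgeConn G ≤ (edgeBoundary G D).ncard := by
  refine Nat.sInf_le ⟨edgeBoundary G D, ⟨edgeBoundary_subset_edgeSet G D,
    not_connected_deleteEdges_boundary G D hne hne', ?_⟩, rfl⟩
  intro v
  by_cases hv : v ∈ D
  · obtain ⟨u, hu, hadj⟩ := hD v hv
    exact ⟨u, deleteEdges_adj.2 ⟨hadj, not_mem_edgeBoundary_of_mem_mem G hv hu⟩⟩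
  · obtain ⟨u, hu, hadj⟩ := hD' v hv
    exact ⟨u, deleteEdges_adj.2 ⟨hadj, not_mem_edgeBoundary_of_not_mem_not_mem G hv hu⟩⟩

/-- The set of edges incident to `v` (as crossing edges from `v`). -/
def star (G : SimpleGraph V) (v : V) : Set (Sym2 V) :=
  (fun u => s(v, u)) '' G.neighborSet v

lemma ncard_star (G : SimpleGraph V) (v : V) :
    (star G v).ncard = (G.neighborSet v).ncard := by
  apply Set.ncard_image_of_injOn
  intro a ha b hb hab
  rcases Sym2.eq_iff.1 hab with ⟨-, h⟩ | ⟨h1, h2⟩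
  · exact h
  · exact absurd h2.symm (G.ne_of_adj ha)

lemma star_subset_edgeSet (G : SimpleGraph V) (v : V) : star G v ⊆ G.edgeSet := by
  rintro e ⟨u, hu, rfl⟩; exact hu

lemma mem_of_mem_star (G : SimpleGraph V) {v : V} {e : Sym2 V} (he : e ∈ star G v) :
    v ∈ e := by
  obtain ⟨u, hu, rfl⟩ := he; exact Sym2.mem_mk_left v u

lemma star_subset_boundary (G : SimpleGraph V) {D : Set V} {v : V} (hv : v ∈ D)
    (hiso : ∀ u ∈ D, ¬ G.Adj v u) : star G v ⊆ edgeBoundary G D := by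
  rintro e ⟨u, hu, rfl⟩
  refine mem_edgeBoundary G hu hv (fun hmem => hiso u hmem hu)

lemma star_subset_boundary' (G : SimpleGraph V) {D : Set V} {v : V} (hv : v ∉ D)
    (hiso : ∀ u, u ∉ D → ¬ G.Adj v u) : star G v ⊆ edgeBoundary G D := by
  rintro e ⟨u, hu, rfl⟩
  have hu' : u ∈ D := by by_contra h; exact hiso u h hu
  exact mem_edgeBoundary' G hu hv hu'

lemma exists_adj_of_connected (G : SimpleGraph V) (h : G.Connected) {u v : V}
    (huv : u ≠ v) : ∃ w, G.Adj u w := by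
  obtain ⟨p⟩ := h.preconnected u v
  cases p with
  | nil => exact absurd rfl huv
  | cons h _ => exact ⟨_, h⟩

end RPaux

set_option linter.unusedSectionVars false

namespace RPaux

variable {V : Type*} [Fintype V] {G : SimpleGraph V} {δ : ℕ}

lemma edgeBoundary_compl (G : SimpleGraph V) (D : Set V) :
    edgeBoundary G Dᶜ = edgeBoundary G D := by
  ext e
  constructor
  · rintro ⟨he, u, hu, v, hv, rfl⟩
    rw [compl_compl] at hv
    exact mem_edgeBoundary' G (G.mem_edgeSet.1 he) hu hv
  · rintro ⟨he, u, hu, v, hv, rfl⟩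
    rw [Sym2.eq_swap]
    exact mem_edgeBoundary G (G.mem_edgeSet.1 he).symm hv (by simpa using hu)

section Regular

variable (hr : ∀ v : V, (G.neighborSet v).ncard = δ) (hc : G.Connected)
  (hcard : 4 ≤ Fintype.card V)

include hr hc hcard

lemma exists_adj (v : V) : ∃ u, G.Adj v u := by
  have : Nontrivial V := Fintype.one_lt_card_iff_nontrivial.1 (by omega)
  obtain ⟨w, hw⟩ := exists_ne v
  exact exists_adj_of_connected G hc hw.symm

lemma delta_pos : 1 ≤ δ := by
  obtain ⟨v⟩ := hc.nonempty
  obtain ⟨u, hu⟩ := exists_adj hr hc hcard v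
  have hne : (G.neighborSet v).Nonempty := ⟨u, hu⟩
  have := hne.ncard_pos (Set.toFinite _)
  rw [hr v] at this
  omega

lemma delta_ge_two : 2 ≤ δ := by
  rcases Nat.lt_or_ge δ 2 with h | h
  · have h1 : δ = 1 := by have := delta_pos hr hc hcard; omega
    exfalso
    obtain ⟨u⟩ := hc.nonempty
    obtain ⟨j, hj⟩ : ∃ j, G.neighborSet u = {j} := by
      rw [← Set.ncard_eq_one]; rw [hr u, h1]
    have hadj_uj : G.Adj u j := by
      have : j ∈ G.neighborSet u := hj ▸ rfl
      exact this
    have hNj : G.neighborSet j = {u} := by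
      obtain ⟨c, hc'⟩ : ∃ c, G.neighborSet j = {c} := by
        rw [← Set.ncard_eq_one]; rw [hr j, h1]
      have : u ∈ G.neighborSet j := hadj_uj.symm
      rw [hc'] at this
      rw [hc', this]
    have hclosed : ∀ ⦃a b : V⦄, G.Adj a b → a ∈ ({u, j} : Set V) → b ∈ ({u, j} : Set V) := by
      rintro a b hab (rfl | rfl)
      · have : b ∈ G.neighborSet a := hab
        rw [hj] at this; exact Or.inr this
      · have : b ∈ G.neighborSet a := hab
        rw [hNj] at this; exact Or.inl this
    have hne' : ({u, j} : Set V)ᶜ.Nonempty := by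
      by_contra hemp
      rw [Set.not_nonempty_iff_eq_empty, ← Set.compl_univ, compl_inj_iff] at hemp
      have h2 : ({u, j} : Set V).ncard ≤ 2 := by
        apply le_trans (Set.ncard_insert_le _ _)
        simp
      rw [hemp, Set.ncard_univ, Nat.card_eq_fintype_card] at h2
      omega
    exact not_connected_of_closed G {u, j} ⟨u, Or.inl rfl⟩ hne' hclosed hc
  · exact h

lemma star_eq_boundary_singleton (v : V) : edgeBoundary G ({v} : Set V) = star G v := by
  ext e
  constructor
  · rintro ⟨he, a, ha, b, hb, rfl⟩
    rcases ha with rfl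
    exact ⟨b, G.mem_edgeSet.1 he, rfl⟩
  · rintro ⟨w, hw, rfl⟩
    exact mem_edgeBoundary G hw rfl (fun hb => G.ne_of_adj hw hb.symm)

lemma edgeConn_le_delta : edgeConn G ≤ δ := by
  have : Nontrivial V := Fintype.one_lt_card_iff_nontrivial.1 (by omega)
  obtain ⟨v⟩ := hc.nonempty
  obtain ⟨w, hw⟩ := exists_ne v
  have := edgeConn_le_boundary G ({v} : Set V) ⟨v, rfl⟩ ⟨w, hw⟩
  rwa [star_eq_boundary_singleton hr hc hcard, ncard_star, hr] at this

lemma edgeConn_set_nonempty :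
    {k | ∃ F : Set (Sym2 V), F ⊆ G.edgeSet ∧ F.ncard = k ∧
      ¬(G.deleteEdges F).Connected}.Nonempty := by
  have : Nontrivial V := Fintype.one_lt_card_iff_nontrivial.1 (by omega)
  obtain ⟨v⟩ := hc.nonempty
  obtain ⟨w, hw⟩ := exists_ne v
  refine ⟨_, G.edgeSet, le_refl _, rfl, ?_⟩
  apply not_connected_of_closed _ ({v} : Set V) ⟨v, rfl⟩ ⟨w, hw⟩
  rintro a b hab rfl
  rw [deleteEdges_adj] at hab
  exact absurd hab.1 hab.2

lemma minEdgeDegree_eq : minEdgeDegree G = 2 * δ - 2 := by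
  obtain ⟨v⟩ := hc.nonempty
  obtain ⟨u, hu⟩ := exists_adj hr hc hcard v
  have hset : {k | ∃ u v : V, G.Adj u v ∧
      (G.neighborSet u).ncard + (G.neighborSet v).ncard - 2 = k} = {2 * δ - 2} := by
    ext k
    simp only [Set.mem_setOf_eq, Set.mem_singleton_iff]
    constructor
    · rintro ⟨a, b, -, rfl⟩
      rw [hr a, hr b]; ring_nf
    · rintro rfl
      exact ⟨v, u, hu, by rw [hr v, hr u]; ring_nf⟩
  rw [minEdgeDegree, hset, csInf_singleton]

end Regular

end RPaux

set_option linter.unusedSectionVars false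

namespace RPaux

variable {V : Type*} [Fintype V] {G : SimpleGraph V} {δ : ℕ}

section Regular2

variable (hr : ∀ v : V, (G.neighborSet v).ncard = δ) (hc : G.Connected)
  (hcard : 4 ≤ Fintype.card V) (hopt : LambdaPrimeOptimal G)

include hr hc hcard hopt

lemma restrictedEdgeConn_eq : restrictedEdgeConn G = 2 * δ - 2 := by
  rw [hopt, minEdgeDegree_eq hr hc hcard]

lemma edgeConn_eq_delta : edgeConn G = δ := by
  refine le_antisymm (edgeConn_le_delta hr hc hcard) ?_
  by_contra hlt
  push_neg at hlt
  obtain ⟨F, hFsub, hFcard', hFdis⟩ := Nat.sInf_mem (edgeConn_set_nonempty hr hc hcard)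
  have hFcard : F.ncard = edgeConn G := hFcard'
  have hmindeg : ∀ v : V, ∃ w : V, (G.deleteEdges F).Adj v w := by
    intro v
    have hns : ¬ star G v ⊆ F := by
      intro hsub
      have := Set.ncard_le_ncard hsub (Set.toFinite F)
      rw [ncard_star, hr, hFcard] at this
      omega
    obtain ⟨e, he, hef⟩ := Set.not_subset.1 hns
    obtain ⟨u, hu, rfl⟩ := he
    exact ⟨u, deleteEdges_adj.2 ⟨hu, hef⟩⟩
  have hrc : IsRestrictedEdgeCut G F := ⟨hFsub, hFdis, hmindeg⟩
  have h1 : restrictedEdgeConn G ≤ edgeConn G := Nat.sInf_le ⟨F, hrc, hFcard⟩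
  rw [restrictedEdgeConn_eq hr hc hcard hopt] at h1
  have := delta_ge_two hr hc hcard
  omega

variable {D : Set V}

lemma cut_restricted (hne : D.Nonempty) (hne' : Dᶜ.Nonempty)
    (hD : ∀ v ∈ D, ∃ u ∈ D, G.Adj v u) (hD' : ∀ v ∈ Dᶜ, ∃ u ∈ Dᶜ, G.Adj v u) :
    2 * δ - 2 ≤ (edgeBoundary G D).ncard := by
  have := restrictedEdgeConn_le_boundary G D hne hne' hD hD'
  rwa [restrictedEdgeConn_eq hr hc hcard hopt] at this

lemma cut_ge_delta (hne : D.Nonempty) (hne' : Dᶜ.Nonempty) :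
    δ ≤ (edgeBoundary G D).ncard := by
  by_cases h1 : ∃ w ∈ D, ∀ u ∈ D, ¬ G.Adj w u
  · obtain ⟨w, hw, hiso⟩ := h1
    calc δ = (star G w).ncard := by rw [ncard_star, hr]
    _ ≤ _ := Set.ncard_le_ncard (star_subset_boundary G hw hiso) (Set.toFinite _)
  by_cases h2 : ∃ w ∈ Dᶜ, ∀ u, u ∉ D → ¬ G.Adj w u
  · obtain ⟨w, hw, hiso⟩ := h2
    calc δ = (star G w).ncard := by rw [ncard_star, hr]
    _ ≤ _ := Set.ncard_le_ncard (star_subset_boundary' G hw hiso) (Set.toFinite _)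
  push_neg at h1 h2
  have := cut_restricted hr hc hcard hopt hne hne' h1 (fun v hv => by
    obtain ⟨u, hu, hadj⟩ := h2 v hv
    exact ⟨u, hu, hadj⟩)
  have := delta_ge_two hr hc hcard
  omega

lemma cut_two_iso {w1 w2 : V} (hw1 : w1 ∈ D) (hw2 : w2 ∈ D) (hne12 : w1 ≠ w2)
    (hiso1 : ∀ u ∈ D, ¬ G.Adj w1 u) (hiso2 : ∀ u ∈ D, ¬ G.Adj w2 u) :
    2 * δ ≤ (edgeBoundary G D).ncard := by
  have hsub : star G w1 ∪ star G w2 ⊆ edgeBoundary G D :=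
    Set.union_subset (star_subset_boundary G hw1 hiso1) (star_subset_boundary G hw2 hiso2)
  have hdisj : Disjoint (star G w1) (star G w2) := by
    rw [Set.disjoint_left]
    rintro e ⟨u, hu, rfl⟩ he2
    have hw2e : w2 ∈ s(w1, u) := mem_of_mem_star G he2
    rcases Sym2.mem_iff.1 hw2e with h | h
    · exact hne12 h.symm
    · exact hiso1 w2 hw2 (h ▸ hu)
  calc 2 * δ = (star G w1).ncard + (star G w2).ncard := by
        rw [ncard_star, ncard_star, hr, hr]; ring
  _ = (star G w1 ∪ star G w2).ncard :=
        (Set.ncard_union_eq hdisj (Set.toFinite _) (Set.toFinite _)).symm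
  _ ≤ _ := Set.ncard_le_ncard hsub (Set.toFinite _)

lemma cut_iso_both {w1 w2 : V} (hw1 : w1 ∈ D) (hw2 : w2 ∉ D)
    (hiso1 : ∀ u ∈ D, ¬ G.Adj w1 u) (hiso2 : ∀ u, u ∉ D → ¬ G.Adj w2 u) :
    2 * δ - 1 ≤ (edgeBoundary G D).ncard := by
  have hsub : star G w1 ∪ star G w2 ⊆ edgeBoundary G D :=
    Set.union_subset (star_subset_boundary G hw1 hiso1) (star_subset_boundary' G hw2 hiso2)
  have hinter : star G w1 ∩ star G w2 ⊆ {s(w1, w2)} := by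
    rintro e ⟨⟨u, hu, rfl⟩, he2⟩
    have hw2e : w2 ∈ s(w1, u) := mem_of_mem_star G he2
    rcases Sym2.mem_iff.1 hw2e with h | h
    · exact absurd (h ▸ hw1) hw2
    · rw [← h]; rfl
  have hkey := Set.ncard_union_add_ncard_inter (star G w1) (star G w2)
    (Set.toFinite _) (Set.toFinite _)
  have h1 : (star G w1 ∩ star G w2).ncard ≤ 1 := by
    calc (star G w1 ∩ star G w2).ncard ≤ ({s(w1,w2)} : Set (Sym2 V)).ncard :=
      Set.ncard_le_ncard hinter (Set.toFinite _)
    _ = 1 := Set.ncard_singleton _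
  have h2 : (star G w1 ∪ star G w2).ncard ≤ (edgeBoundary G D).ncard :=
    Set.ncard_le_ncard hsub (Set.toFinite _)
  rw [ncard_star, ncard_star, hr, hr] at hkey
  omega

lemma cut_iso_plus {w : V} (hw : w ∈ D) (hiso : ∀ u ∈ D, ¬ G.Adj w u)
    (hne2 : (D \ {w}).Nonempty) (hne' : Dᶜ.Nonempty)
    (hmin : ∀ v ∈ D \ {w}, ∃ u ∈ D \ {w}, G.Adj v u)
    (hmin' : ∀ v ∈ Dᶜ, ∃ u ∈ Dᶜ, G.Adj v u) :
    2 * δ ≤ (edgeBoundary G D).ncard := by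
  have hS1sub : edgeBoundary G (D \ {w}) ⊆ edgeBoundary G D := by
    rintro e ⟨he, u, hu, v, hv, rfl⟩
    have hvD : v ∉ D := by
      intro hvD
      have hvw : v = w := by
        by_contra hvw
        exact hv ⟨hvD, hvw⟩
      subst hvw
      exact hiso u hu.1 (G.mem_edgeSet.1 he).symm
    exact mem_edgeBoundary G (G.mem_edgeSet.1 he) hu.1 hvD
  have hS2sub : star G w ⊆ edgeBoundary G D := star_subset_boundary G hw hiso
  have hdisj : Disjoint (edgeBoundary G (D \ {w})) (star G w) := by
    rw [Set.disjoint_left]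
    rintro e ⟨he, u, hu, v, hv, rfl⟩ hstar
    have hwmem : w ∈ s(u, v) := mem_of_mem_star G hstar
    have hvD : v ∉ D := by
      intro hvD
      have hvw : v = w := by
        by_contra hvw
        exact hv ⟨hvD, hvw⟩
      subst hvw
      exact hiso u hu.1 (G.mem_edgeSet.1 he).symm
    rcases Sym2.mem_iff.1 hwmem with h | h
    · exact hu.2 h.symm
    · exact hvD (h ▸ hw)
  have hrest : 2 * δ - 2 ≤ (edgeBoundary G (D \ {w})).ncard := by
    refine cut_restricted hr hc hcard hopt hne2 ⟨w, fun hmem => hmem.2 rfl⟩ hmin ?_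
    intro v hv
    rcases Classical.em (v = w) with rfl | hvw
    · obtain ⟨u, hadj⟩ := exists_adj hr hc hcard v
      have huD : u ∉ D := fun huD => hiso u huD hadj
      exact ⟨u, fun hmem => huD hmem.1, hadj⟩
    · have hvD : v ∉ D := fun hmem => hv ⟨hmem, hvw⟩
      obtain ⟨u, hu, hadj⟩ := hmin' v hvD
      exact ⟨u, fun hmem => hu hmem.1, hadj⟩
  have hunion : (edgeBoundary G (D \ {w}) ∪ star G w).ncard ≤ (edgeBoundary G D).ncard :=
    Set.ncard_le_ncard (Set.union_subset hS1sub hS2sub) (Set.toFinite _)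
  rw [Set.ncard_union_eq hdisj (Set.toFinite _) (Set.toFinite _)] at hunion
  have hstar : (star G w).ncard = δ := by rw [ncard_star, hr]
  have := delta_ge_two hr hc hcard
  omega

end Regular2

end RPaux

set_option linter.unusedSectionVars false

namespace RPaux

section Product

variable {V1 V2 : Type*} [Fintype V1] [Fintype V2]
  {G1 : SimpleGraph V1} {G2 : SimpleGraph V2} {ℓ : V1 → V2 → V1} {δ1 δ2 : ℕ}

/-- The label of the edge `x y` at `x`: the `i` with `ℓ x i = y` (if it exists). -/
noncomputable def lab [Nonempty V2] (ℓ : V1 → V2 → V1) (x y : V1) : V2 :=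
  Classical.epsilon (fun i => ℓ x i = y)

variable [Nonempty V2]

lemma lab_spec' {x y : V1} (h : ∃ i, ℓ x i = y) : ℓ x (lab ℓ x y) = y :=
  Classical.epsilon_spec h

lemma lab_eq (hℓ : IsRPLabelling G1 ℓ) {x : V1} {i : V2} : lab ℓ x (ℓ x i) = i :=
  hℓ.1 x (lab_spec' ⟨i, rfl⟩)

lemma lab_spec (hℓ : IsRPLabelling G1 ℓ)
    (hr1 : ∀ x : V1, (G1.neighborSet x).ncard = δ1) (hd : Fintype.card V2 = δ1)
    {x y : V1} (hadj : G1.Adj x y) : ℓ x (lab ℓ x y) = y := by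
  have hrange : Set.range (ℓ x) = G1.neighborSet x := by
    apply Set.eq_of_subset_of_ncard_le
    · rintro z ⟨i, rfl⟩; exact hℓ.2 x i
    · rw [← Set.image_univ, Set.ncard_image_of_injective _ (hℓ.1 x), Set.ncard_univ,
        Nat.card_eq_fintype_card, hr1, hd]
    · exact Set.toFinite _
  have hy : y ∈ Set.range (ℓ x) := by rw [hrange]; exact hadj
  obtain ⟨i, hi⟩ := hy
  exact lab_spec' ⟨i, hi⟩

/-- The lift of a `G1`-edge to the matching edge of the replacement product. -/
noncomputable def Fmap (ℓ : V1 → V2 → V1) : Sym2 V1 → Sym2 (V1 × V2) :=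
  Sym2.lift ⟨fun x y => s((x, lab ℓ x y), (y, lab ℓ y x)), fun x y => Sym2.eq_swap⟩

lemma Fmap_pair (x y : V1) : Fmap ℓ s(x, y) = s((x, lab ℓ x y), (y, lab ℓ y x)) := rfl

lemma Fmap_fst (e : Sym2 V1) : Sym2.map Prod.fst (Fmap ℓ e) = e := by
  induction e with
  | _ x y => rw [Fmap_pair, Sym2.map_pair_eq]

lemma Fmap_injective : Function.Injective (Fmap ℓ) := by
  intro e1 e2 h
  rw [← Fmap_fst (ℓ := ℓ) e1, ← Fmap_fst (ℓ := ℓ) e2, h]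

lemma Fmap_mem_edgeSet (hℓ : IsRPLabelling G1 ℓ)
    (hr1 : ∀ x : V1, (G1.neighborSet x).ncard = δ1) (hd : Fintype.card V2 = δ1)
    {x y : V1} (hadj : G1.Adj x y) :
    (replacementProduct G1 G2 ℓ).Adj (x, lab ℓ x y) (y, lab ℓ y x) :=
  Or.inr ⟨hadj, lab_spec hℓ hr1 hd hadj, lab_spec hℓ hr1 hd hadj.symm⟩

/-- The embedding of `G2`-edges into cloud edges at `x`. -/
def cloudMap (V2 : Type*) (x : V1) : Sym2 V2 → Sym2 (V1 × V2) :=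
  Sym2.map (fun i => (x, i))

lemma cloudMap_injective (x : V1) : Function.Injective (cloudMap V2 x) :=
  Sym2.map.injective (fun i j h => congrArg Prod.snd h)

lemma fst_eq_of_mem_cloudMap {x : V1} {e : Sym2 V2} {p : V1 × V2}
    (hp : p ∈ cloudMap V2 x e) : p.1 = x := by
  obtain ⟨i, -, rfl⟩ := Sym2.mem_map.1 hp
  rfl

lemma cloudMap_adj {x : V1} {e : Sym2 V2} (he : e ∈ G2.edgeSet) :
    cloudMap V2 x e ∈ (replacementProduct G1 G2 ℓ).edgeSet := by
  induction e with
  | _ i j =>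
    rw [cloudMap, Sym2.map_pair_eq]
    exact Or.inl ⟨rfl, he⟩

/-- cloud edges at `x` and matching edges are disjoint. -/
lemma cloudMap_ne_Fmap {x : V1} {e2 : Sym2 V2} {e1 : Sym2 V1} (he1 : e1 ∈ G1.edgeSet) :
    cloudMap V2 x e2 ≠ Fmap ℓ e1 := by
  intro h
  induction e1 with
  | _ a b =>
    have hab : a ≠ b := (G1.mem_edgeSet.1 he1).ne
    have ha : (a, lab ℓ a b) ∈ cloudMap V2 x e2 := by
      rw [h, Fmap_pair]; exact Sym2.mem_mk_left _ _
    have hb : (b, lab ℓ b a) ∈ cloudMap V2 x e2 := by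
      rw [h, Fmap_pair]; exact Sym2.mem_mk_right _ _
    exact hab ((fst_eq_of_mem_cloudMap ha).trans (fst_eq_of_mem_cloudMap hb).symm)

lemma cloudMap_ne_cloudMap {x y : V1} (hxy : x ≠ y) {e2 f2 : Sym2 V2} :
    cloudMap V2 x e2 ≠ cloudMap V2 y f2 := by
  intro h
  have hx : (x, e2.out.1) ∈ cloudMap V2 x e2 := Sym2.mem_map.2 ⟨e2.out.1, e2.out_fst_mem, rfl⟩
  rw [h] at hx
  exact hxy (fst_eq_of_mem_cloudMap hx : (x, e2.out.1).1 = y)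

end Product

end RPaux

set_option linter.unusedSectionVars false
set_option maxHeartbeats 1000000

namespace RPaux

lemma ncard_le_of_two_disjoint_subsets {α : Type*} {S T U : Set α} (hS : S ⊆ U) (hT : T ⊆ U)
    (hd : Disjoint S T) (hU : U.Finite) : S.ncard + T.ncard ≤ U.ncard := by
  rw [← Set.ncard_union_eq hd (hU.subset hS) (hU.subset hT)]
  exact Set.ncard_le_ncard (Set.union_subset hS hT) hU

section Product2

variable {V1 V2 : Type*} [Fintype V1] [Fintype V2] [Nonempty V2]
  {G1 : SimpleGraph V1} {G2 : SimpleGraph V2} {ℓ : V1 → V2 → V1} {δ1 δ2 : ℕ}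

/-- the part of the cloud over `y` that is inside `X` -/
def cloudSet (X : Set (V1 × V2)) (y : V1) : Set V2 := {i | (y, i) ∈ X}

lemma cloud_bd_subset (X : Set (V1 × V2)) (x : V1) :
    cloudMap V2 x '' (edgeBoundary G2 (cloudSet X x)) ⊆
      edgeBoundary (replacementProduct G1 G2 ℓ) X := by
  rintro e ⟨e2, he2, rfl⟩
  obtain ⟨he, i, hi, j, hj, rfl⟩ := he2
  rw [cloudMap, Sym2.map_pair_eq]
  exact mem_edgeBoundary _ (Or.inl ⟨rfl, G2.mem_edgeSet.1 he⟩) hi hj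

lemma Fmap_bd_subset (hℓ : IsRPLabelling G1 ℓ)
    (hr1 : ∀ x : V1, (G1.neighborSet x).ncard = δ1) (hd : Fintype.card V2 = δ1)
    {X : Set (V1 × V2)} {E : Set (Sym2 V1)} (hE : E ⊆ G1.edgeSet)
    (hcross : ∀ ⦃a b : V1⦄, G1.Adj a b → s(a, b) ∈ E →
      ((a, lab ℓ a b) ∈ X ∧ (b, lab ℓ b a) ∉ X) ∨
      ((a, lab ℓ a b) ∉ X ∧ (b, lab ℓ b a) ∈ X)) :
    Fmap ℓ '' E ⊆ edgeBoundary (replacementProduct G1 G2 ℓ) X := by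
  rintro e ⟨e1, he1, rfl⟩
  induction e1 with
  | _ a b =>
    have hadj : G1.Adj a b := G1.mem_edgeSet.1 (hE he1)
    rw [Fmap_pair]
    rcases hcross hadj he1 with ⟨h1, h2⟩ | ⟨h1, h2⟩
    · exact mem_edgeBoundary _ (Fmap_mem_edgeSet hℓ hr1 hd hadj) h1 h2
    · exact mem_edgeBoundary' _ (Fmap_mem_edgeSet hℓ hr1 hd hadj) h1 h2

lemma disjoint_cloud_Fmap (x : V1) {S2 : Set (Sym2 V2)} {E : Set (Sym2 V1)}
    (hE : E ⊆ G1.edgeSet) :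
    Disjoint (cloudMap V2 x '' S2) (Fmap ℓ '' E) := by
  rw [Set.disjoint_left]
  rintro e ⟨e2, he2, rfl⟩ ⟨e1, he1, heq⟩
  exact cloudMap_ne_Fmap (G1 := G1) (hE he1) heq.symm

end Product2

end RPaux

set_option linter.unusedSectionVars false
set_option maxHeartbeats 1000000

namespace RPaux

section Product3

variable {V1 V2 : Type*} [Fintype V1] [Fintype V2] [Nonempty V2]
  {G1 : SimpleGraph V1} {G2 : SimpleGraph V2} {ℓ : V1 → V2 → V1} {δ1 δ2 : ℕ}

lemma vertexConn_le_of_separator (G : SimpleGraph V1) (S C : Set V1)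
    (hCsub : C ⊆ Sᶜ) (hCne : C.Nonempty) (hC'ne : ∃ v, v ∈ Sᶜ ∧ v ∉ C)
    (hcl : ∀ u v : V1, G.Adj u v → u ∈ C → v ∈ Sᶜ → v ∈ C) :
    vertexConn G ≤ S.ncard := by
  refine Nat.sInf_le ⟨S, rfl, Or.inl ?_⟩
  obtain ⟨c, hc⟩ := hCne
  obtain ⟨v, hv1, hv2⟩ := hC'ne
  exact not_connected_of_closed _ {p : ↥(Sᶜ : Set V1) | p.1 ∈ C}
    ⟨⟨c, hCsub hc⟩, hc⟩ ⟨⟨v, hv1⟩, hv2⟩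
    (fun u w h hu => hcl u.1 w.1 h hu w.2)

lemma single_mixed_bound
    (hℓ : IsRPLabelling G1 ℓ) (hc1 : G1.Connected) (hc2 : G2.Connected)
    (hr1 : ∀ x : V1, (G1.neighborSet x).ncard = δ1)
    (hr2 : ∀ i : V2, (G2.neighborSet i).ncard = δ2)
    (hd : Fintype.card V2 = δ1) (hδ1 : 4 ≤ δ1)
    (hopt : LambdaPrimeOptimal G2)
    (hκ : edgeConn G1 + 1 ≤ vertexConn G1 + edgeConn G2 ∨
      edgeConn G2 + 1 ≤ vertexConn G1)
    (X : Set (V1 × V2))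
    (hXin : ∀ p ∈ X, ∃ q ∈ X, (replacementProduct G1 G2 ℓ).Adj p q)
    (hXout : ∀ p ∈ Xᶜ, ∃ q ∈ Xᶜ, (replacementProduct G1 G2 ℓ).Adj p q)
    (x : V1) (hx1 : (cloudSet X x).Nonempty) (hx2 : (cloudSet X x)ᶜ.Nonempty)
    (hfe : ∀ y : V1, y ≠ x → (cloudSet X y = ∅ ∨ cloudSet X y = Set.univ)) :
    min (edgeConn G1) (2 * δ2) ≤
      (edgeBoundary (replacementProduct G1 G2 ℓ) X).ncard := by
  classical
  have hcard2 : 4 ≤ Fintype.card V2 := by rw [hd]; exact hδ1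
  have hδ2 : 2 ≤ δ2 := delta_ge_two hr2 hc2 hcard2
  have hbdfin : (edgeBoundary (replacementProduct G1 G2 ℓ) X).Finite := Set.toFinite _
  set D : Set V2 := cloudSet X x with hDdef
  -- full and empty clouds
  set B : Set V1 := {y | y ≠ x ∧ ∀ i, (y, i) ∈ X} with hBdef
  set W : Set V1 := {y | y ≠ x ∧ ∀ i, (y, i) ∉ X} with hWdef
  have hBW : ∀ y : V1, y ≠ x → y ∈ B ∨ y ∈ W := by
    intro y hy
    rcases hfe y hy with h | h
    · right
      refine ⟨hy, fun i hi => ?_⟩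
      have : i ∈ cloudSet X y := hi
      rw [h] at this
      exact this
    · left
      refine ⟨hy, fun i => ?_⟩
      have : i ∈ cloudSet X y := by rw [h]; exact Set.mem_univ i
      exact this
  have hBWdisj : ∀ y : V1, y ∈ B → y ∈ W → False := by
    intro y hyB hyW
    exact hyW.2 (Classical.arbitrary V2) (hyB.2 _)
  have hxB : x ∉ B := fun h => h.1 rfl
  have hxW : x ∉ W := fun h => h.1 rfl
  -- the cloud boundary at x
  have hS0sub : cloudMap V2 x '' (edgeBoundary G2 D) ⊆
      edgeBoundary (replacementProduct G1 G2 ℓ) X := cloud_bd_subset X x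
  have hS0card : (cloudMap V2 x '' (edgeBoundary G2 D)).ncard = (edgeBoundary G2 D).ncard :=
    Set.ncard_image_of_injective _ (cloudMap_injective x)
  have hcbd : δ2 ≤ (edgeBoundary G2 D).ncard := cut_ge_delta hr2 hc2 hcard2 hopt hx1 hx2
  -- isolated vertices force matching edges into full/empty clouds
  have hIsoInB : ∀ w : V2, w ∈ D → (∀ u ∈ D, ¬ G2.Adj w u) → ℓ x w ∈ B := by
    intro w hw hiso
    obtain ⟨q, hqX, hadj⟩ := hXin (x, w) hw
    rcases hadj with ⟨h1, h2⟩ | ⟨h1, h2, h3⟩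
    · have h1' : x = q.1 := h1
      refine absurd h2 (hiso q.2 ?_)
      have hq : (q.1, q.2) ∈ X := by simpa using hqX
      rw [← h1'] at hq
      exact hq
    · have h1' : G1.Adj x q.1 := h1
      have h2' : ℓ x w = q.1 := h2
      have hq1 : q.1 ≠ x := fun h => G1.irrefl (h ▸ h1')
      rcases hBW q.1 hq1 with hB | hW
      · rw [h2']; exact hB
      · have hq : (q.1, q.2) ∈ X := by simpa using hqX
        exact absurd hq (hW.2 q.2)
  have hIsoOutW : ∀ w : V2, w ∉ D → (∀ u, u ∉ D → ¬ G2.Adj w u) → ℓ x w ∈ W := by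
    intro w hw hiso
    obtain ⟨q, hqX, hadj⟩ := hXout (x, w) hw
    rcases hadj with ⟨h1, h2⟩ | ⟨h1, h2, h3⟩
    · have h1' : x = q.1 := h1
      refine absurd h2 (hiso q.2 ?_)
      intro hq
      refine hqX ?_
      have hq2 : (q.1, q.2) ∈ X := by rw [← h1']; exact hq
      simpa using hq2
    · have h1' : G1.Adj x q.1 := h1
      have h2' : ℓ x w = q.1 := h2
      have hq1 : q.1 ≠ x := fun h => G1.irrefl (h ▸ h1')
      rcases hBW q.1 hq1 with hB | hW
      · refine absurd ?_ hqX
        have : (q.1, q.2) ∈ X := hB.2 q.2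
        simpa using this
      · rw [h2']; exact hW
  by_cases hBne : B.Nonempty
  · by_cases hWne : W.Nonempty
    · -- both full and empty clouds exist
      have hNV1 : Nonempty V1 := hc1.nonempty
      set EBW : Set (Sym2 V1) := {e | ∃ b ∈ B, ∃ w ∈ W, G1.Adj b w ∧ e = s(b, w)} with hEBWdef
      have hEBWsub : EBW ⊆ G1.edgeSet := by
        rintro e ⟨b, hb, w, hw, hadj, rfl⟩
        exact hadj
      have hFBW : Fmap ℓ '' EBW ⊆ edgeBoundary (replacementProduct G1 G2 ℓ) X := by
        refine Fmap_bd_subset hℓ hr1 hd hEBWsub ?_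
        rintro a b hadj ⟨b', hb', w', hw', hadj', heq⟩
        rcases Sym2.eq_iff.1 heq with ⟨rfl, rfl⟩ | ⟨rfl, rfl⟩
        · exact Or.inl ⟨hb'.2 _, fun hm => hw'.2 _ hm⟩
        · exact Or.inr ⟨fun hm => hw'.2 _ hm, hb'.2 _⟩
      have hdisjBW : Disjoint (cloudMap V2 x '' edgeBoundary G2 D) (Fmap ℓ '' EBW) :=
        disjoint_cloud_Fmap (G1 := G1) x hEBWsub
      have hbase := ncard_le_of_two_disjoint_subsets hS0sub hFBW hdisjBW hbdfin
      rw [hS0card, Set.ncard_image_of_injective _ Fmap_injective] at hbase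
      have hinjB : ∀ S : Set V1, S ⊆ B → (∀ b ∈ S, ∃ w ∈ W, G1.Adj b w) →
          S.ncard ≤ EBW.ncard := by
        intro S hSB hSW
        refine Set.ncard_le_ncard_of_injOn
          (fun b => s(b, Classical.epsilon (fun w => w ∈ W ∧ G1.Adj b w))) ?_ ?_ (Set.toFinite _)
        · intro b hb
          obtain ⟨w, hw, hadj⟩ := hSW b hb
          have hspec := Classical.epsilon_spec (p := fun w => w ∈ W ∧ G1.Adj b w) ⟨w, hw, hadj⟩
          exact ⟨b, hSB hb, _, hspec.1, hspec.2, rfl⟩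
        · intro b1 hb1 b2 hb2 heq
          rcases Sym2.eq_iff.1 heq with ⟨h, -⟩ | ⟨h, -⟩
          · exact h
          · obtain ⟨w, hw, hadj⟩ := hSW b2 hb2
            have hspec := Classical.epsilon_spec (p := fun w => w ∈ W ∧ G1.Adj b2 w) ⟨w, hw, hadj⟩
            exact absurd (hSB hb1) (fun hB => hBWdisj b1 hB (by rw [h]; exact hspec.1))
      have hinjW : ∀ S : Set V1, S ⊆ W → (∀ w ∈ S, ∃ b ∈ B, G1.Adj w b) →
          S.ncard ≤ EBW.ncard := by
        intro S hSW hSB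
        refine Set.ncard_le_ncard_of_injOn
          (fun w => s(Classical.epsilon (fun b => b ∈ B ∧ G1.Adj w b), w)) ?_ ?_ (Set.toFinite _)
        · intro w hw
          obtain ⟨b, hb, hadj⟩ := hSB w hw
          have hspec := Classical.epsilon_spec (p := fun b => b ∈ B ∧ G1.Adj w b) ⟨b, hb, hadj⟩
          exact ⟨_, hspec.1, w, hSW hw, hspec.2.symm, rfl⟩
        · intro w1 hw1 w2 hw2 heq
          rcases Sym2.eq_iff.1 heq with ⟨-, h⟩ | ⟨-, h⟩
          · exact h
          · obtain ⟨b, hb, hadj⟩ := hSB w2 hw2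
            have hspec := Classical.epsilon_spec (p := fun b => b ∈ B ∧ G1.Adj w2 b) ⟨b, hb, hadj⟩
            exact absurd (hSW hw1) (fun hW => hBWdisj w1 (by rw [h]; exact hspec.1) hW)
      by_cases hα : (∃ b ∈ B, ∀ w ∈ W, ¬ G1.Adj b w) ∨ (∃ w ∈ W, ∀ b ∈ B, ¬ G1.Adj w b)
      · -- (α) : vertex-cut argument
        have hκle : vertexConn G1 ≤ 1 + EBW.ncard := by
          rcases hα with ⟨b0, hb0, hb0iso⟩ | ⟨w0, hw0, hw0iso⟩
          · set NB : Set V1 := {b | b ∈ B ∧ ∃ w ∈ W, G1.Adj b w} with hNBdef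
            have h1 : vertexConn G1 ≤ (insert x NB).ncard := by
              refine vertexConn_le_of_separator G1 (insert x NB) W ?_ hWne ⟨b0, ?_, ?_⟩ ?_
              · intro w hw hmem
                rcases hmem with rfl | hmem
                · exact hxW hw
                · exact hBWdisj w hmem.1 hw
              · intro hmem
                rcases hmem with rfl | hmem
                · exact hxB hb0
                · obtain ⟨w, hw, hadj⟩ := hmem.2
                  exact hb0iso w hw hadj
              · intro hw
                exact hBWdisj b0 hb0 hw
              · intro u v hadj hu hv
                have hvx : v ≠ x := by
                  intro h
                  exact hv (by rw [h]; exact Set.mem_insert _ _)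
                rcases hBW v hvx with hvB | hvW
                · refine absurd (Set.mem_insert_of_mem _ (?_ : v ∈ NB)) hv
                  exact ⟨hvB, u, hu, hadj.symm⟩
                · exact hvW
            have h2 : (insert x NB).ncard ≤ NB.ncard + 1 := Set.ncard_insert_le _ _
            have h3 : NB.ncard ≤ EBW.ncard :=
              hinjB NB (fun b hb => hb.1) (fun b hb => hb.2)
            omega
          · set NW : Set V1 := {w | w ∈ W ∧ ∃ b ∈ B, G1.Adj w b} with hNWdef
            have h1 : vertexConn G1 ≤ (insert x NW).ncard := by
              refine vertexConn_le_of_separator G1 (insert x NW) B ?_ hBne ⟨w0, ?_, ?_⟩ ?_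
              · intro b hb hmem
                rcases hmem with rfl | hmem
                · exact hxB hb
                · exact hBWdisj b hb hmem.1
              · intro hmem
                rcases hmem with rfl | hmem
                · exact hxW hw0
                · obtain ⟨b, hb, hadj⟩ := hmem.2
                  exact hw0iso b hb hadj
              · intro hb
                exact hBWdisj w0 hb hw0
              · intro u v hadj hu hv
                have hvx : v ≠ x := by
                  intro h
                  exact hv (by rw [h]; exact Set.mem_insert _ _)
                rcases hBW v hvx with hvB | hvW
                · exact hvB
                · refine absurd (Set.mem_insert_of_mem _ (?_ : v ∈ NW)) hv
                  exact ⟨hvW, u, hu, hadj.symm⟩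
            have h2 : (insert x NW).ncard ≤ NW.ncard + 1 := Set.ncard_insert_le _ _
            have h3 : NW.ncard ≤ EBW.ncard :=
              hinjW NW (fun w hw => hw.1) (fun w hw => hw.2)
            omega
        have hlam2 : edgeConn G2 = δ2 := edgeConn_eq_delta hr2 hc2 hcard2 hopt
        rcases hκ with hκ1 | hκ2
        · refine le_trans (min_le_left _ _) ?_
          rw [hlam2] at hκ1
          omega
        · refine le_trans (min_le_right _ _) ?_
          rw [hlam2] at hκ2
          omega
      · -- (β) : every full cloud sees an empty one and vice versa
        push_neg at hα
        obtain ⟨hβ1, hβ2⟩ := hα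
        have heB : B.ncard ≤ EBW.ncard := hinjB B (le_refl _) hβ1
        have heW : W.ncard ≤ EBW.ncard := hinjW W (le_refl _) hβ2
        have hBWunion : B ∪ W = ({x} : Set V1)ᶜ := by
          ext y
          simp only [Set.mem_union, Set.mem_compl_iff, Set.mem_singleton_iff]
          constructor
          · rintro (h | h) <;> exact h.1
          · intro h
            exact hBW y h
        have hdisjBW2 : Disjoint B W :=
          Set.disjoint_left.2 (fun a hb hw => hBWdisj a hb hw)
        have hBWcard : B.ncard + W.ncard = ({x} : Set V1)ᶜ.ncard := by
          rw [← hBWunion, Set.ncard_union_eq hdisjBW2 (Set.toFinite _) (Set.toFinite _)]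
        have hcompl : ({x} : Set V1).ncard + ({x} : Set V1)ᶜ.ncard = Nat.card V1 :=
          Set.ncard_add_ncard_compl _
        have hsing : ({x} : Set V1).ncard = 1 := Set.ncard_singleton _
        have hV1card : δ1 + 1 ≤ Nat.card V1 := by
          have hss : G1.neighborSet x ⊂ Set.univ := by
            rw [Set.ssubset_univ_iff]
            intro h
            have : x ∈ G1.neighborSet x := by rw [h]; trivial
            exact G1.irrefl this
          have hlt := Set.ncard_lt_ncard hss (Set.toFinite _)
          rw [hr1, Set.ncard_univ] at hlt
          omega
        have he2 : 2 ≤ EBW.ncard := by omega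
        -- now the case analysis on isolated vertices inside the cloud of x
        by_cases ht1 : ∃ w1 ∈ D, (∀ u ∈ D, ¬ G2.Adj w1 u) ∧
            ∃ w2 ∈ D, w1 ≠ w2 ∧ (∀ u ∈ D, ¬ G2.Adj w2 u)
        · obtain ⟨w1, hw1, hiso1, w2, hw2, hne12, hiso2⟩ := ht1
          refine le_trans (min_le_right _ _) ?_
          have hcc := cut_two_iso hr2 hc2 hcard2 hopt hw1 hw2 hne12 hiso1 hiso2
          calc 2 * δ2 ≤ (edgeBoundary G2 D).ncard := hcc
          _ = (cloudMap V2 x '' edgeBoundary G2 D).ncard := hS0card.symm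
          _ ≤ _ := Set.ncard_le_ncard hS0sub hbdfin
        by_cases ht2 : ∃ w1, w1 ∉ D ∧ (∀ u, u ∉ D → ¬ G2.Adj w1 u) ∧
            ∃ w2, w2 ∉ D ∧ w1 ≠ w2 ∧ (∀ u, u ∉ D → ¬ G2.Adj w2 u)
        · obtain ⟨w1, hw1, hiso1, w2, hw2, hne12, hiso2⟩ := ht2
          refine le_trans (min_le_right _ _) ?_
          have hcc := cut_two_iso (D := Dᶜ) hr2 hc2 hcard2 hopt hw1 hw2 hne12
            (fun u hu => hiso1 u hu) (fun u hu => hiso2 u hu)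
          rw [edgeBoundary_compl] at hcc
          calc 2 * δ2 ≤ (edgeBoundary G2 D).ncard := hcc
          _ = (cloudMap V2 x '' edgeBoundary G2 D).ncard := hS0card.symm
          _ ≤ _ := Set.ncard_le_ncard hS0sub hbdfin
        by_cases ht3 : (∃ w1 ∈ D, ∀ u ∈ D, ¬ G2.Adj w1 u) ∧
            (∃ w2, w2 ∉ D ∧ ∀ u, u ∉ D → ¬ G2.Adj w2 u)
        · obtain ⟨⟨w1, hw1, hiso1⟩, ⟨w2, hw2, hiso2⟩⟩ := ht3
          refine le_trans (min_le_right _ _) ?_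
          have hcc := cut_iso_both hr2 hc2 hcard2 hopt hw1 hw2 hiso1 hiso2
          omega
        by_cases ht4 : ∃ w ∈ D, ∀ u ∈ D, ¬ G2.Adj w u
        · obtain ⟨w, hwD, hisow⟩ := ht4
          have hnoOut : ∀ v, v ∉ D → ∃ u, u ∉ D ∧ G2.Adj v u := by
            intro v hv
            by_contra hcon
            push_neg at hcon
            exact ht3 ⟨⟨w, hwD, hisow⟩, ⟨v, hv, fun u hu => hcon u hu⟩⟩
          by_cases hD1 : D ⊆ {w}
          · -- D = {w} : the ∂B-trick
            have hxwB : ℓ x w ∈ B := hIsoInB w hwD hisow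
            have hBcne : Bᶜ.Nonempty := ⟨x, hxB⟩
            have hlamB : edgeConn G1 ≤ (edgeBoundary G1 B).ncard :=
              edgeConn_le_boundary G1 B hBne hBcne
            set E' : Set (Sym2 V1) := edgeBoundary G1 B \ {s(x, ℓ x w)} with hE'def
            have hE'sub : E' ⊆ G1.edgeSet := fun e he => edgeBoundary_subset_edgeSet G1 B he.1
            have hdiff : (edgeBoundary G1 B).ncard ≤ E'.ncard + 1 := by
              have hsub2 : edgeBoundary G1 B ⊆ insert s(x, ℓ x w) E' := by
                intro e he
                by_cases h : e = s(x, ℓ x w)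
                · rw [h]; exact Set.mem_insert _ _
                · exact Set.mem_insert_of_mem _ ⟨he, h⟩
              calc (edgeBoundary G1 B).ncard ≤ (insert s(x, ℓ x w) E').ncard :=
                    Set.ncard_le_ncard hsub2 (Set.toFinite _)
              _ ≤ E'.ncard + 1 := Set.ncard_insert_le _ _
            have key : ∀ a b : V1, G1.Adj a b → a ∈ B → b ∉ B → s(a, b) ≠ s(x, ℓ x w) →
                (a, lab ℓ a b) ∈ X ∧ (b, lab ℓ b a) ∉ X := by
              intro a b hadj haB hbB hnab
              refine ⟨haB.2 _, ?_⟩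
              intro hmem
              have hbx : b = x := by
                by_contra hbx
                rcases hBW b hbx with h | h
                · exact hbB h
                · exact h.2 _ hmem
              subst hbx
              have hmem' : lab ℓ b a ∈ D := hmem
              have hlw : lab ℓ b a = w := hD1 hmem'
              have hab : a = ℓ b w := by
                rw [← hlw]
                exact (lab_spec hℓ hr1 hd hadj.symm).symm
              refine hnab ?_
              rw [hab]
              exact Sym2.eq_swap
            have hcrossE : Fmap ℓ '' E' ⊆ edgeBoundary (replacementProduct G1 G2 ℓ) X := by
              refine Fmap_bd_subset hℓ hr1 hd hE'sub ?_
              rintro a b hadj ⟨⟨-, u, hu, v, hv, heq⟩, hne⟩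
              rcases Sym2.eq_iff.1 heq with ⟨rfl, rfl⟩ | ⟨rfl, rfl⟩
              · exact Or.inl (key a b hadj hu hv hne)
              · obtain ⟨k1, k2⟩ := key b a hadj.symm hu hv (fun h => hne (Sym2.eq_swap.trans h))
                exact Or.inr ⟨k2, k1⟩
            have hdisjE : Disjoint (cloudMap V2 x '' edgeBoundary G2 D) (Fmap ℓ '' E') :=
              disjoint_cloud_Fmap (G1 := G1) x hE'sub
            have htot := ncard_le_of_two_disjoint_subsets hS0sub hcrossE hdisjE hbdfin
            rw [hS0card, Set.ncard_image_of_injective _ Fmap_injective] at htot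
            refine le_trans (min_le_left _ _) ?_
            omega
          · -- a second vertex in D : use cut_iso_plus
            obtain ⟨v0, hv0D, hv0w⟩ := Set.not_subset.1 hD1
            have hunique : ∀ v ∈ D \ {w}, ∃ u ∈ D \ {w}, G2.Adj v u := by
              intro v hv
              have hviso : ¬ ∀ u ∈ D, ¬ G2.Adj v u := by
                intro hisov
                exact ht1 ⟨w, hwD, hisow, v, hv.1, fun h => hv.2 (by rw [← h]; rfl), hisov⟩
              push_neg at hviso
              obtain ⟨u, hu, hadj⟩ := hviso
              refine ⟨u, ⟨hu, ?_⟩, hadj⟩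
              intro h
              rw [h] at hadj
              exact hisow v hv.1 hadj.symm
            refine le_trans (min_le_right _ _) ?_
            have hcc := cut_iso_plus hr2 hc2 hcard2 hopt hwD hisow ⟨v0, hv0D, hv0w⟩ hx2
              hunique (fun v hv => by
                obtain ⟨u, hu, hadj⟩ := hnoOut v hv
                exact ⟨u, hu, hadj⟩)
            calc 2 * δ2 ≤ (edgeBoundary G2 D).ncard := hcc
            _ = (cloudMap V2 x '' edgeBoundary G2 D).ncard := hS0card.symm
            _ ≤ _ := Set.ncard_le_ncard hS0sub hbdfin
        by_cases ht5 : ∃ w, w ∉ D ∧ ∀ u, u ∉ D → ¬ G2.Adj w u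
        · obtain ⟨w, hwD, hisow⟩ := ht5
          have hnoIn : ∀ v ∈ D, ∃ u ∈ D, G2.Adj v u := by
            intro v hv
            by_contra hcon
            push_neg at hcon
            exact ht4 ⟨v, hv, hcon⟩
          by_cases hD1 : Dᶜ ⊆ {w}
          · -- Dᶜ = {w} : the ∂W-trick
            have hxwW : ℓ x w ∈ W := hIsoOutW w hwD hisow
            have hWcne : Wᶜ.Nonempty := ⟨x, hxW⟩
            have hlamW : edgeConn G1 ≤ (edgeBoundary G1 W).ncard :=
              edgeConn_le_boundary G1 W hWne hWcne
            set E' : Set (Sym2 V1) := edgeBoundary G1 W \ {s(x, ℓ x w)} with hE'def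
            have hE'sub : E' ⊆ G1.edgeSet := fun e he => edgeBoundary_subset_edgeSet G1 W he.1
            have hdiff : (edgeBoundary G1 W).ncard ≤ E'.ncard + 1 := by
              have hsub2 : edgeBoundary G1 W ⊆ insert s(x, ℓ x w) E' := by
                intro e he
                by_cases h : e = s(x, ℓ x w)
                · rw [h]; exact Set.mem_insert _ _
                · exact Set.mem_insert_of_mem _ ⟨he, h⟩
              calc (edgeBoundary G1 W).ncard ≤ (insert s(x, ℓ x w) E').ncard :=
                    Set.ncard_le_ncard hsub2 (Set.toFinite _)
              _ ≤ E'.ncard + 1 := Set.ncard_insert_le _ _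
            have key : ∀ a b : V1, G1.Adj a b → a ∈ W → b ∉ W → s(a, b) ≠ s(x, ℓ x w) →
                (a, lab ℓ a b) ∉ X ∧ (b, lab ℓ b a) ∈ X := by
              intro a b hadj haW hbW hnab
              refine ⟨fun hm => haW.2 _ hm, ?_⟩
              by_cases hbx : b = x
              · subst hbx
                show lab ℓ b a ∈ D
                by_contra hmem
                have hlw : lab ℓ b a = w := hD1 hmem
                have hab : a = ℓ b w := by
                  rw [← hlw]
                  exact (lab_spec hℓ hr1 hd hadj.symm).symm
                refine hnab ?_
                rw [hab]
                exact Sym2.eq_swap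
              · rcases hBW b hbx with h | h
                · exact h.2 _
                · exact absurd h hbW
            have hcrossE : Fmap ℓ '' E' ⊆ edgeBoundary (replacementProduct G1 G2 ℓ) X := by
              refine Fmap_bd_subset hℓ hr1 hd hE'sub ?_
              rintro a b hadj ⟨⟨-, u, hu, v, hv, heq⟩, hne⟩
              rcases Sym2.eq_iff.1 heq with ⟨rfl, rfl⟩ | ⟨rfl, rfl⟩
              · exact Or.inr (key a b hadj hu hv hne)
              · obtain ⟨k1, k2⟩ := key b a hadj.symm hu hv (fun h => hne (Sym2.eq_swap.trans h))
                exact Or.inl ⟨k2, k1⟩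
            have hdisjE : Disjoint (cloudMap V2 x '' edgeBoundary G2 D) (Fmap ℓ '' E') :=
              disjoint_cloud_Fmap (G1 := G1) x hE'sub
            have htot := ncard_le_of_two_disjoint_subsets hS0sub hcrossE hdisjE hbdfin
            rw [hS0card, Set.ncard_image_of_injective _ Fmap_injective] at htot
            refine le_trans (min_le_left _ _) ?_
            omega
          · obtain ⟨v0, hv0D, hv0w⟩ := Set.not_subset.1 hD1
            have hunique : ∀ v ∈ Dᶜ \ {w}, ∃ u ∈ Dᶜ \ {w}, G2.Adj v u := by
              intro v hv
              have hviso : ¬ ∀ u, u ∉ D → ¬ G2.Adj v u := by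
                intro hisov
                exact ht2 ⟨w, hwD, hisow, v, hv.1, fun h => hv.2 (by rw [← h]; rfl), hisov⟩
              push_neg at hviso
              obtain ⟨u, hu, hadj⟩ := hviso
              refine ⟨u, ⟨hu, ?_⟩, hadj⟩
              intro h
              rw [h] at hadj
              exact hisow v hv.1 hadj.symm
            refine le_trans (min_le_right _ _) ?_
            have hcc := cut_iso_plus (D := Dᶜ) hr2 hc2 hcard2 hopt hwD
              (fun u hu => hisow u hu) ⟨v0, hv0D, hv0w⟩
              (by rw [compl_compl]; exact hx1)
              hunique
              (fun v hv => by
                have hvD : v ∈ D := by simpa using hv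
                obtain ⟨u, hu, hadj⟩ := hnoIn v hvD
                exact ⟨u, by simpa using hu, hadj⟩)
            rw [edgeBoundary_compl] at hcc
            calc 2 * δ2 ≤ (edgeBoundary G2 D).ncard := hcc
            _ = (cloudMap V2 x '' edgeBoundary G2 D).ncard := hS0card.symm
            _ ≤ _ := Set.ncard_le_ncard hS0sub hbdfin
        · -- no isolated vertex on either side : restricted cut
          push_neg at ht4 ht5
          have hcut := cut_restricted hr2 hc2 hcard2 hopt hx1 hx2 ht4
            (fun v hv => by
              obtain ⟨u, hu, hadj⟩ := ht5 v hv
              exact ⟨u, hu, hadj⟩)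
          refine le_trans (min_le_right _ _) ?_
          omega
    · -- W empty : every other cloud is full
      refine le_trans (min_le_right _ _) ?_
      have hAllB : ∀ y : V1, y ≠ x → y ∈ B := by
        intro y hy
        rcases hBW y hy with h | h
        · exact h
        · exact absurd ⟨y, h⟩ hWne
      have hnoIsoOut : ∀ w : V2, w ∉ D → ¬ (∀ u, u ∉ D → ¬ G2.Adj w u) := by
        intro w hw hiso
        exact absurd ⟨ℓ x w, hIsoOutW w hw hiso⟩ hWne
      have hDc : ∀ v, v ∉ D → ∃ u, u ∉ D ∧ G2.Adj v u := by
        intro v hv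
        by_contra hcon
        push_neg at hcon
        exact hnoIsoOut v hv (fun u hu hadj => hcon u hu hadj)
      -- matching edges from the complement part of cloud x
      have hS1sub : (fun i => Fmap ℓ s(x, ℓ x i)) '' Dᶜ ⊆
          edgeBoundary (replacementProduct G1 G2 ℓ) X := by
        rintro e ⟨i, hi, rfl⟩
        have hadj : G1.Adj x (ℓ x i) := hℓ.2 x i
        show Fmap ℓ s(x, ℓ x i) ∈ edgeBoundary (replacementProduct G1 G2 ℓ) X
        rw [Fmap_pair, lab_eq hℓ]
        have hadj2 := Fmap_mem_edgeSet (G2 := G2) hℓ hr1 hd hadj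
        rw [lab_eq hℓ] at hadj2
        refine mem_edgeBoundary' _ hadj2 hi ?_
        exact (hAllB (ℓ x i) (G1.ne_of_adj hadj).symm).2 _
      have hS1card : ((fun i => Fmap ℓ s(x, ℓ x i)) '' Dᶜ).ncard = Dᶜ.ncard := by
        apply Set.ncard_image_of_injOn
        intro i hi j hj hij
        have := Fmap_injective hij
        rcases Sym2.eq_iff.1 this with ⟨-, h⟩ | ⟨h1, -⟩
        · exact hℓ.1 x h
        · exact absurd h1 (G1.ne_of_adj (hℓ.2 x j))
      have hdisj : Disjoint (cloudMap V2 x '' (edgeBoundary G2 D))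
          ((fun i => Fmap ℓ s(x, ℓ x i)) '' Dᶜ) := by
        have himg : (fun i => Fmap ℓ s(x, ℓ x i)) '' Dᶜ =
            Fmap ℓ '' ((fun i => s(x, ℓ x i)) '' Dᶜ) := by
          rw [Set.image_image]
        rw [himg]
        refine disjoint_cloud_Fmap (G1 := G1) x ?_
        rintro e ⟨i, hi, rfl⟩
        exact hℓ.2 x i
      have htot := ncard_le_of_two_disjoint_subsets hS0sub hS1sub hdisj hbdfin
      rw [hS0card, hS1card] at htot
      by_cases hiso : ∃ w ∈ D, ∀ u ∈ D, ¬ G2.Adj w u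
      · -- an isolated vertex inside D: its star is in the cut and N(w) ⊆ Dᶜ is big
        obtain ⟨w, hw, hisow⟩ := hiso
        have hNsub : G2.neighborSet w ⊆ Dᶜ := by
          intro u hu
          by_contra hcon
          exact hisow u (by simpa using hcon) hu
        have hDge : δ2 ≤ Dᶜ.ncard := by
          rw [← hr2 w]
          exact Set.ncard_le_ncard hNsub (Set.toFinite _)
        omega
      · -- no isolated vertex in D either: restricted cut
        push_neg at hiso
        have hcut := cut_restricted hr2 hc2 hcard2 hopt hx1 hx2 hiso
          (fun v hv => by
            obtain ⟨u, hu, hadj⟩ := hDc v hv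
            exact ⟨u, hu, hadj⟩)
        have hD2 : 2 ≤ Dᶜ.ncard := by
          obtain ⟨v, hv⟩ := hx2
          obtain ⟨u, hu, hadj⟩ := hDc v hv
          have : ({v, u} : Set V2) ⊆ Dᶜ := by
            rintro z (rfl | rfl)
            · exact hv
            · exact hu
          calc 2 = ({v, u} : Set V2).ncard := (Set.ncard_pair (G2.ne_of_adj hadj)).symm
          _ ≤ _ := Set.ncard_le_ncard this (Set.toFinite _)
        omega
  · -- B empty : every other cloud is empty
    refine le_trans (min_le_right _ _) ?_
    have hAllW : ∀ y : V1, y ≠ x → y ∈ W := by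
      intro y hy
      rcases hBW y hy with h | h
      · exact absurd ⟨y, h⟩ hBne
      · exact h
    have hnoIsoIn : ∀ w : V2, w ∈ D → ¬ (∀ u ∈ D, ¬ G2.Adj w u) := by
      intro w hw hiso
      exact absurd ⟨ℓ x w, hIsoInB w hw hiso⟩ hBne
    have hDm : ∀ v ∈ D, ∃ u ∈ D, G2.Adj v u := by
      intro v hv
      by_contra hcon
      push_neg at hcon
      exact hnoIsoIn v hv hcon
    have hS1sub : (fun i => Fmap ℓ s(x, ℓ x i)) '' D ⊆
        edgeBoundary (replacementProduct G1 G2 ℓ) X := by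
      rintro e ⟨i, hi, rfl⟩
      have hadj : G1.Adj x (ℓ x i) := hℓ.2 x i
      show Fmap ℓ s(x, ℓ x i) ∈ edgeBoundary (replacementProduct G1 G2 ℓ) X
      rw [Fmap_pair, lab_eq hℓ]
      have hadj2 := Fmap_mem_edgeSet (G2 := G2) hℓ hr1 hd hadj
      rw [lab_eq hℓ] at hadj2
      refine mem_edgeBoundary _ hadj2 hi ?_
      exact (hAllW (ℓ x i) (G1.ne_of_adj hadj).symm).2 _
    have hS1card : ((fun i => Fmap ℓ s(x, ℓ x i)) '' D).ncard = D.ncard := by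
      apply Set.ncard_image_of_injOn
      intro i hi j hj hij
      have := Fmap_injective hij
      rcases Sym2.eq_iff.1 this with ⟨-, h⟩ | ⟨h1, -⟩
      · exact hℓ.1 x h
      · exact absurd h1 (G1.ne_of_adj (hℓ.2 x j))
    have hdisj : Disjoint (cloudMap V2 x '' (edgeBoundary G2 D))
        ((fun i => Fmap ℓ s(x, ℓ x i)) '' D) := by
      have himg : (fun i => Fmap ℓ s(x, ℓ x i)) '' D =
          Fmap ℓ '' ((fun i => s(x, ℓ x i)) '' D) := by
        rw [Set.image_image]
      rw [himg]
      refine disjoint_cloud_Fmap (G1 := G1) x ?_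
      rintro e ⟨i, hi, rfl⟩
      exact hℓ.2 x i
    have htot := ncard_le_of_two_disjoint_subsets hS0sub hS1sub hdisj hbdfin
    rw [hS0card, hS1card] at htot
    by_cases hiso : ∃ w, w ∉ D ∧ ∀ u, u ∉ D → ¬ G2.Adj w u
    · obtain ⟨w, hw, hisow⟩ := hiso
      have hNsub : G2.neighborSet w ⊆ D := by
        intro u hu
        by_contra hcon
        exact hisow u hcon hu
      have hDge : δ2 ≤ D.ncard := by
        rw [← hr2 w]
        exact Set.ncard_le_ncard hNsub (Set.toFinite _)
      omega
    · push_neg at hiso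
      have hcut := cut_restricted hr2 hc2 hcard2 hopt hx1 hx2 hDm
        (fun v hv => by
          obtain ⟨u, hu, hadj⟩ := hiso v hv
          exact ⟨u, hu, hadj⟩)
      have hD2 : 2 ≤ D.ncard := by
        obtain ⟨v, hv⟩ := hx1
        obtain ⟨u, hu, hadj⟩ := hDm v hv
        have hsub : ({v, u} : Set V2) ⊆ D := by
          rintro z (rfl | rfl)
          · exact hv
          · exact hu
        calc 2 = ({v, u} : Set V2).ncard := (Set.ncard_pair (G2.ne_of_adj hadj)).symm
        _ ≤ _ := Set.ncard_le_ncard hsub (Set.toFinite _)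
      omega

end Product3

end RPaux

set_option linter.unusedSectionVars false
set_option maxHeartbeats 1000000

namespace RPaux

section Product4

variable {V1 V2 : Type*} [Fintype V1] [Fintype V2] [Nonempty V2]
  {G1 : SimpleGraph V1} {G2 : SimpleGraph V2} {ℓ : V1 → V2 → V1} {δ1 δ2 : ℕ}

/-- Main lower bound: any "separating set with both sides having min degree one"
has at least `min λ1 (2 δ2)` boundary edges. -/
lemma boundary_lower_bound
    (hℓ : IsRPLabelling G1 ℓ) (hc1 : G1.Connected) (hc2 : G2.Connected)
    (hr1 : ∀ x : V1, (G1.neighborSet x).ncard = δ1)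
    (hr2 : ∀ i : V2, (G2.neighborSet i).ncard = δ2)
    (hd : Fintype.card V2 = δ1) (hδ1 : 4 ≤ δ1)
    (hopt : LambdaPrimeOptimal G2)
    (hκ : edgeConn G1 + 1 ≤ vertexConn G1 + edgeConn G2 ∨
      edgeConn G2 + 1 ≤ vertexConn G1)
    (X : Set (V1 × V2)) (hXne : X.Nonempty) (hXne' : Xᶜ.Nonempty)
    (hXin : ∀ p ∈ X, ∃ q ∈ X, (replacementProduct G1 G2 ℓ).Adj p q)
    (hXout : ∀ p ∈ Xᶜ, ∃ q ∈ Xᶜ, (replacementProduct G1 G2 ℓ).Adj p q) :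
    min (edgeConn G1) (2 * δ2) ≤
      (edgeBoundary (replacementProduct G1 G2 ℓ) X).ncard := by
  classical
  have hcard2 : 4 ≤ Fintype.card V2 := by rw [hd]; exact hδ1
  have hδ2 : 2 ≤ δ2 := delta_ge_two hr2 hc2 hcard2
  have hbdfin : (edgeBoundary (replacementProduct G1 G2 ℓ) X).Finite := Set.toFinite _
  -- a cloud's boundary, lower-bounded
  have hcloud : ∀ x : V1, (cloudSet X x).Nonempty → (cloudSet X x)ᶜ.Nonempty →
      δ2 ≤ (edgeBoundary G2 (cloudSet X x)).ncard := fun x h h' =>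
    cut_ge_delta hr2 hc2 hcard2 hopt h h'
  by_cases hM2 : ∃ x y : V1, x ≠ y ∧ ((cloudSet X x).Nonempty ∧ (cloudSet X x)ᶜ.Nonempty) ∧
      ((cloudSet X y).Nonempty ∧ (cloudSet X y)ᶜ.Nonempty)
  · -- two mixed clouds
    obtain ⟨x, y, hxy, ⟨hx1, hx2⟩, ⟨hy1, hy2⟩⟩ := hM2
    refine le_trans (min_le_right _ _) ?_
    have hdisj : Disjoint (cloudMap V2 x '' (edgeBoundary G2 (cloudSet X x)))
        (cloudMap V2 y '' (edgeBoundary G2 (cloudSet X y))) := by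
      rw [Set.disjoint_left]
      rintro e ⟨e2, he2, rfl⟩ ⟨f2, hf2, heq⟩
      exact cloudMap_ne_cloudMap (Ne.symm hxy) heq
    have := ncard_le_of_two_disjoint_subsets (cloud_bd_subset X x) (cloud_bd_subset X y)
      hdisj hbdfin
    rw [Set.ncard_image_of_injective _ (cloudMap_injective x),
      Set.ncard_image_of_injective _ (cloudMap_injective y)] at this
    have h1 := hcloud x hx1 hx2
    have h2 := hcloud y hy1 hy2
    omega
  by_cases hM0 : ∃ x : V1, (cloudSet X x).Nonempty ∧ (cloudSet X x)ᶜ.Nonempty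
  · -- exactly one mixed cloud
    obtain ⟨x, hx1, hx2⟩ := hM0
    -- every other cloud is full or empty
    have hfe : ∀ y : V1, y ≠ x → (cloudSet X y = ∅ ∨ cloudSet X y = Set.univ) := by
      intro y hy
      by_contra hcon
      push_neg at hcon
      refine hM2 ⟨y, x, hy, ⟨hcon.1, ?_⟩, hx1, hx2⟩
      exact Set.nonempty_compl.2 hcon.2
    exact single_mixed_bound hℓ hc1 hc2 hr1 hr2 hd hδ1 hopt hκ X hXin hXout x hx1 hx2 hfe
  · -- no mixed cloud
    push_neg at hM0
    refine le_trans (min_le_left _ _) ?_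
    set B : Set V1 := {y | (cloudSet X y).Nonempty} with hB
    have hfull : ∀ y ∈ B, cloudSet X y = Set.univ := by
      intro y hy
      by_contra hcon
      exact hcon (Set.compl_empty_iff.1 (hM0 y hy))
    have hBne : B.Nonempty := by
      obtain ⟨⟨y, i⟩, hyi⟩ := hXne
      exact ⟨y, ⟨i, hyi⟩⟩
    have hBne' : Bᶜ.Nonempty := by
      obtain ⟨⟨y, i⟩, hyi⟩ := hXne'
      refine ⟨y, fun hy => hyi (by have := (hfull y hy) ▸ Set.mem_univ i; exact this)⟩
    have hlam : edgeConn G1 ≤ (edgeBoundary G1 B).ncard :=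
      edgeConn_le_boundary G1 B hBne hBne'
    have hsub : Fmap ℓ '' (edgeBoundary G1 B) ⊆
        edgeBoundary (replacementProduct G1 G2 ℓ) X := by
      refine Fmap_bd_subset hℓ hr1 hd (edgeBoundary_subset_edgeSet G1 B) ?_
      rintro a b hadj ⟨-, u, hu, v, hv, heq⟩
      rcases Sym2.eq_iff.1 heq with ⟨rfl, rfl⟩ | ⟨rfl, rfl⟩
      · left
        refine ⟨?_, fun hmem => hv ⟨lab ℓ b a, hmem⟩⟩
        have : lab ℓ a b ∈ (Set.univ : Set V2) := Set.mem_univ _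
        rw [← hfull a hu] at this
        exact this
      · right
        refine ⟨fun hmem => hv ⟨lab ℓ a b, hmem⟩, ?_⟩
        have : lab ℓ b a ∈ (Set.univ : Set V2) := Set.mem_univ _
        rw [← hfull b hu] at this
        exact this
    calc edgeConn G1 ≤ (edgeBoundary G1 B).ncard := hlam
    _ = (Fmap ℓ '' (edgeBoundary G1 B)).ncard :=
        (Set.ncard_image_of_injective _ Fmap_injective).symm
    _ ≤ _ := Set.ncard_le_ncard hsub hbdfin

end Product4

end RPaux

set_option linter.unusedSectionVars false
set_option maxHeartbeats 1000000

namespace RPaux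

section Upper

variable {V1 V2 : Type*} [Fintype V1] [Fintype V2] [Nonempty V2]
  {G1 : SimpleGraph V1} {G2 : SimpleGraph V2} {ℓ : V1 → V2 → V1} {δ1 δ2 : ℕ}

lemma exists_restricted_cut_2d2
    (hℓ : IsRPLabelling G1 ℓ) (hc1 : G1.Connected) (hc2 : G2.Connected)
    (hr1 : ∀ x : V1, (G1.neighborSet x).ncard = δ1)
    (hr2 : ∀ i : V2, (G2.neighborSet i).ncard = δ2)
    (hd : Fintype.card V2 = δ1) (hδ1 : 4 ≤ δ1) :
    ∃ F : Set (Sym2 (V1 × V2)),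
      IsRestrictedEdgeCut (replacementProduct G1 G2 ℓ) F ∧ F.ncard ≤ 2 * δ2 := by
  classical
  have hcard2 : 4 ≤ Fintype.card V2 := by rw [hd]; exact hδ1
  have hδ2 : 2 ≤ δ2 := delta_ge_two hr2 hc2 hcard2
  obtain ⟨x0⟩ := hc1.nonempty
  obtain ⟨i0⟩ := (inferInstance : Nonempty V2)
  obtain ⟨j0, hj0⟩ := exists_adj hr2 hc2 hcard2 i0
  set P : Set (V1 × V2) := {(x0, i0), (x0, j0)} with hPdef
  set F := edgeBoundary (replacementProduct G1 G2 ℓ) P with hFdef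
  have hne12 : i0 ≠ j0 := G2.ne_of_adj hj0
  have hPmem1 : ((x0, i0) : V1 × V2) ∈ P := Set.mem_insert _ _
  have hPmem2 : ((x0, j0) : V1 × V2) ∈ P := Set.mem_insert_of_mem _ rfl
  -- vertices outside P
  have hPc : ∀ y : V1, ∀ k : V2, y ≠ x0 → ((y, k) : V1 × V2) ∉ P := by
    rintro y k hy (h | h)
    · exact hy (congrArg Prod.fst h)
    · exact hy (congrArg Prod.fst h)
  have hPc2 : ∀ k : V2, k ≠ i0 → k ≠ j0 → ((x0, k) : V1 × V2) ∉ P := by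
    rintro k h1 h2 (h | h)
    · exact h1 (congrArg Prod.snd h)
    · exact h2 (congrArg Prod.snd h)
  have hPcne : Pᶜ.Nonempty := by
    obtain ⟨k, hk⟩ : ∃ k : V2, k ≠ i0 ∧ k ≠ j0 := by
      by_contra hcon
      push_neg at hcon
      have hsub : (Set.univ : Set V2) ⊆ {i0, j0} := by
        intro k _
        rcases Classical.em (k = i0) with rfl | h
        · exact Set.mem_insert _ _
        · exact Set.mem_insert_of_mem _ (hcon k h)
      have h1 := Set.ncard_le_ncard hsub (Set.toFinite _)
      have h2 : ({i0, j0} : Set V2).ncard ≤ 2 := by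
        refine le_trans (Set.ncard_insert_le _ _) ?_
        simp
      rw [Set.ncard_univ, Nat.card_eq_fintype_card] at h1
      omega
    exact ⟨(x0, k), hPc2 k hk.1 hk.2⟩
  -- minimum degree after deleting F
  have hmd : ∀ p : V1 × V2, ∃ q,
      ((replacementProduct G1 G2 ℓ).deleteEdges F).Adj p q := by
    rintro ⟨y, k⟩
    by_cases hp : ((y, k) : V1 × V2) ∈ P
    · rcases hp with h | h
      · -- p = (x0, i0) : use the edge to (x0, j0)
        rw [h]
        refine ⟨(x0, j0), deleteEdges_adj.2 ⟨Or.inl ⟨rfl, hj0⟩, ?_⟩⟩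
        exact not_mem_edgeBoundary_of_mem_mem _ hPmem1 hPmem2
      · rw [h]
        refine ⟨(x0, i0), deleteEdges_adj.2 ⟨Or.inl ⟨rfl, hj0.symm⟩, ?_⟩⟩
        exact not_mem_edgeBoundary_of_mem_mem _ hPmem2 hPmem1
    · by_cases hy : y = x0
      · -- same cloud as P but different vertex: use its matching edge
        subst hy
        refine ⟨(ℓ y k, lab ℓ (ℓ y k) y), deleteEdges_adj.2 ⟨?_, ?_⟩⟩
        · exact Or.inr ⟨hℓ.2 y k, rfl, lab_spec hℓ hr1 hd (hℓ.2 y k).symm⟩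
        · refine not_mem_edgeBoundary_of_not_mem_not_mem _ hp ?_
          exact hPc _ _ (G1.ne_of_adj (hℓ.2 y k)).symm
      · -- other cloud: use a cloud edge
        obtain ⟨k', hk'⟩ := exists_adj hr2 hc2 hcard2 k
        refine ⟨(y, k'), deleteEdges_adj.2 ⟨Or.inl ⟨rfl, hk'⟩, ?_⟩⟩
        exact not_mem_edgeBoundary_of_not_mem_not_mem _ hp (hPc _ _ hy)
  have hcut : IsRestrictedEdgeCut (replacementProduct G1 G2 ℓ) F :=
    ⟨edgeBoundary_subset_edgeSet _ P,
      not_connected_deleteEdges_boundary _ P ⟨_, hPmem1⟩ hPcne, hmd⟩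
  -- cardinality bound
  refine ⟨F, hcut, ?_⟩
  set mi : Sym2 (V1 × V2) := s((x0, i0), (ℓ x0 i0, lab ℓ (ℓ x0 i0) x0)) with hmidef
  set mj : Sym2 (V1 × V2) := s((x0, j0), (ℓ x0 j0, lab ℓ (ℓ x0 j0) x0)) with hmjdef
  set Ui : Set (Sym2 (V1 × V2)) :=
    (fun u => s((x0, i0), (x0, u))) '' (G2.neighborSet i0 \ {j0}) with hUidef
  set Uj : Set (Sym2 (V1 × V2)) :=
    (fun u => s((x0, j0), (x0, u))) '' (G2.neighborSet j0 \ {i0}) with hUjdef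
  have hFsub : F ⊆ Ui ∪ Uj ∪ ({mi} ∪ {mj}) := by
    rintro e ⟨he, u, hu, v, hv, rfl⟩
    have hadj : (replacementProduct G1 G2 ℓ).Adj u v := he
    have hkey : ∀ a : V1 × V2, a = (x0, i0) ∨ a = (x0, j0) →
        ∀ b : V1 × V2, b ∉ P → (replacementProduct G1 G2 ℓ).Adj a b →
        s(a, b) ∈ Ui ∪ Uj ∪ ({mi} ∪ {mj}) := by
      rintro a (rfl | rfl) b hb hab
      · rcases hab with ⟨h1, h2⟩ | ⟨h1, h2, h3⟩
        · -- cloud edge from (x0,i0)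
          left; left
          have hb2 : b = (x0, b.2) := by
            rw [Prod.ext_iff]
            exact ⟨h1.symm, rfl⟩
          refine ⟨b.2, ⟨h2, ?_⟩, ?_⟩
          · intro hbj
            exact hb (by rw [hb2, hbj]; exact hPmem2)
          · exact congrArg (fun z => s(((x0 : V1), i0), z)) hb2.symm
        · -- matching edge from (x0,i0)
          right; left
          have hb1 : b.1 = ℓ x0 i0 := h2.symm
          have hb2 : b.2 = lab ℓ (ℓ x0 i0) x0 := by
            apply hℓ.1 b.1
            rw [h3, ← hb1]
            rw [hb1]
            exact (lab_spec hℓ hr1 hd (hℓ.2 x0 i0).symm).symm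
          have : b = (ℓ x0 i0, lab ℓ (ℓ x0 i0) x0) := by
            rw [Prod.ext_iff]
            exact ⟨hb1, hb2⟩
          rw [this]
          rfl
      · rcases hab with ⟨h1, h2⟩ | ⟨h1, h2, h3⟩
        · left; right
          have hb2 : b = (x0, b.2) := by
            rw [Prod.ext_iff]
            exact ⟨h1.symm, rfl⟩
          refine ⟨b.2, ⟨h2, ?_⟩, ?_⟩
          · intro hbj
            exact hb (by rw [hb2, hbj]; exact hPmem1)
          · exact congrArg (fun z => s(((x0 : V1), j0), z)) hb2.symm
        · right; right
          have hb1 : b.1 = ℓ x0 j0 := h2.symm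
          have hb2 : b.2 = lab ℓ (ℓ x0 j0) x0 := by
            apply hℓ.1 b.1
            rw [h3, ← hb1]
            rw [hb1]
            exact (lab_spec hℓ hr1 hd (hℓ.2 x0 j0).symm).symm
          have : b = (ℓ x0 j0, lab ℓ (ℓ x0 j0) x0) := by
            rw [Prod.ext_iff]
            exact ⟨hb1, hb2⟩
          rw [this]
          rfl
    rcases hu with h | h
    · exact hkey u (Or.inl h) v hv hadj
    · exact hkey u (Or.inr h) v hv hadj
  have hj0' : j0 ∈ G2.neighborSet i0 := hj0
  have hi0' : i0 ∈ G2.neighborSet j0 := hj0.symm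
  have hUi : Ui.ncard ≤ δ2 - 1 := by
    refine le_trans (Set.ncard_image_le (Set.toFinite _)) ?_
    rw [Set.ncard_diff_singleton_of_mem hj0', hr2]
  have hUj : Uj.ncard ≤ δ2 - 1 := by
    refine le_trans (Set.ncard_image_le (Set.toFinite _)) ?_
    rw [Set.ncard_diff_singleton_of_mem hi0', hr2]
  calc F.ncard ≤ (Ui ∪ Uj ∪ ({mi} ∪ {mj})).ncard :=
        Set.ncard_le_ncard hFsub (Set.toFinite _)
  _ ≤ (Ui ∪ Uj).ncard + ({mi} ∪ {mj} : Set _).ncard := Set.ncard_union_le _ _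
  _ ≤ (Ui.ncard + Uj.ncard) + ({mi} ∪ {mj} : Set _).ncard := by
      have := Set.ncard_union_le Ui Uj
      omega
  _ ≤ (Ui.ncard + Uj.ncard) + 2 := by
      have h1 := Set.ncard_union_le ({mi} : Set (Sym2 (V1 × V2))) {mj}
      simp only [Set.ncard_singleton] at h1
      omega
  _ ≤ 2 * δ2 := by omega

end Upper

end RPaux

set_option linter.unusedSectionVars false
set_option maxHeartbeats 1000000

namespace RPaux

section Upper2

variable {V1 V2 : Type*} [Fintype V1] [Fintype V2] [Nonempty V2]
  {G1 : SimpleGraph V1} {G2 : SimpleGraph V2} {ℓ : V1 → V2 → V1} {δ1 δ2 : ℕ}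

lemma card_V1_ge (hr1 : ∀ x : V1, (G1.neighborSet x).ncard = δ1)
    (hc1 : G1.Connected) : δ1 + 1 ≤ Fintype.card V1 := by
  obtain ⟨x⟩ := hc1.nonempty
  have hss : G1.neighborSet x ⊂ Set.univ := by
    rw [Set.ssubset_univ_iff]
    intro h
    have : x ∈ G1.neighborSet x := by rw [h]; trivial
    exact G1.irrefl this
  have hlt := Set.ncard_lt_ncard hss (Set.toFinite _)
  rw [hr1, Set.ncard_univ, Nat.card_eq_fintype_card] at hlt
  omega

lemma upper_lam1
    (hℓ : IsRPLabelling G1 ℓ) (hc1 : G1.Connected) (hc2 : G2.Connected)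
    (hr1 : ∀ x : V1, (G1.neighborSet x).ncard = δ1)
    (hr2 : ∀ i : V2, (G2.neighborSet i).ncard = δ2)
    (hd : Fintype.card V2 = δ1) (hδ1 : 4 ≤ δ1) :
    restrictedEdgeConn (replacementProduct G1 G2 ℓ) ≤ edgeConn G1 := by
  classical
  have hcard2 : 4 ≤ Fintype.card V2 := by rw [hd]; exact hδ1
  have hδ2 : 2 ≤ δ2 := delta_ge_two hr2 hc2 hcard2
  have hcard1 : 4 ≤ Fintype.card V1 := by
    have := card_V1_ge hr1 hc1
    omega
  obtain ⟨F1, hF1sub, hF1card', hF1dis⟩ := Nat.sInf_mem (edgeConn_set_nonempty hr1 hc1 hcard1)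
  have hF1card : F1.ncard = edgeConn G1 := hF1card'
  set F : Set (Sym2 (V1 × V2)) := Fmap ℓ '' F1 with hFdef
  have hFsub : F ⊆ (replacementProduct G1 G2 ℓ).edgeSet := by
    rintro e ⟨e1, he1, rfl⟩
    induction e1 with
    | _ a b =>
      have hadj : G1.Adj a b := G1.mem_edgeSet.1 (hF1sub he1)
      rw [Fmap_pair]
      exact Fmap_mem_edgeSet hℓ hr1 hd hadj
  -- key : a product edge between distinct clouds whose G1-edge is in F1 is in F
  have hmatch : ∀ p q : V1 × V2, G1.Adj p.1 q.1 → ℓ p.1 p.2 = q.1 → ℓ q.1 q.2 = p.1 →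
      s(p.1, q.1) ∈ F1 → s(p, q) ∈ F := by
    intro p q hadj h2 h3 hmem
    refine ⟨s(p.1, q.1), hmem, ?_⟩
    rw [Fmap_pair]
    have hl1 : lab ℓ p.1 q.1 = p.2 := by rw [← h2]; exact lab_eq hℓ
    have hl2 : lab ℓ q.1 p.1 = q.2 := by rw [← h3]; exact lab_eq hℓ
    rw [hl1, hl2]
  -- disconnection
  have hnot : ¬ ((replacementProduct G1 G2 ℓ).deleteEdges F).Connected := by
    have hNV1 : Nonempty V1 := hc1.nonempty
    have hpre : ¬ (G1.deleteEdges F1).Preconnected := by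
      intro h
      exact hF1dis ⟨h⟩
    rw [SimpleGraph.Preconnected] at hpre
    push_neg at hpre
    obtain ⟨u, v, huv⟩ := hpre
    refine not_connected_of_closed _ {p : V1 × V2 | (G1.deleteEdges F1).Reachable u p.1}
      ⟨(u, Classical.arbitrary V2), by exact Reachable.refl u⟩
      ⟨(v, Classical.arbitrary V2), huv⟩ ?_
    rintro p q hadj hp
    rw [deleteEdges_adj] at hadj
    obtain ⟨hadj, hnmem⟩ := hadj
    rcases hadj with ⟨h1, h2⟩ | ⟨h1, h2, h3⟩
    · show (G1.deleteEdges F1).Reachable u q.1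
      rw [← h1]
      exact hp
    · have hstep : (G1.deleteEdges F1).Adj p.1 q.1 := by
        rw [deleteEdges_adj]
        refine ⟨h1, fun hmem => hnmem ?_⟩
        exact hmatch p q h1 h2 h3 hmem
      exact hp.trans hstep.reachable
  -- minimum degree
  have hmd : ∀ p : V1 × V2, ∃ q,
      ((replacementProduct G1 G2 ℓ).deleteEdges F).Adj p q := by
    rintro ⟨y, k⟩
    obtain ⟨k', hk'⟩ := exists_adj hr2 hc2 hcard2 k
    refine ⟨(y, k'), deleteEdges_adj.2 ⟨Or.inl ⟨rfl, hk'⟩, ?_⟩⟩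
    intro hmem
    obtain ⟨e1, he1, heq⟩ := hmem
    have : s((y, k), (y, k')) = cloudMap V2 y s(k, k') := by
      rw [cloudMap, Sym2.map_pair_eq]
    rw [this] at heq
    exact cloudMap_ne_Fmap (G1 := G1) (hF1sub he1) heq.symm
  have hcut : IsRestrictedEdgeCut (replacementProduct G1 G2 ℓ) F := ⟨hFsub, hnot, hmd⟩
  refine Nat.sInf_le ⟨F, hcut, ?_⟩
  rw [hFdef, Set.ncard_image_of_injective _ Fmap_injective, hF1card]

end Upper2

end RPaux

/-- Theorem 4.4, equality (4.8). Let `G1` be a connected `δ1`-regular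
graph on `n` vertices with `δ1 ≥ 4` and `G2` a connected `δ2`-regular graph on `δ1`
vertices. If `G2` is `λ'`-optimal and either `κ1 ≥ λ1 - λ2 + 1` (i.e. `κ1 + λ2 ≥ λ1 + 1`)
or `κ1 ≥ λ2 + 1`, then `λ'(G1 ® G2) = min {λ1, 2·δ2}`. -/
theorem restrictedEdgeConn_replacementProduct_eq_of_optimal
    {V1 V2 : Type*} [Fintype V1] [Fintype V2] {n δ1 δ2 : ℕ}
    (G1 : SimpleGraph V1) (G2 : SimpleGraph V2) (ℓ : V1 → V2 → V1)
    (hℓ : IsRPLabelling G1 ℓ)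
    (hc1 : G1.Connected) (hc2 : G2.Connected)
    (hr1 : ∀ x : V1, (G1.neighborSet x).ncard = δ1)
    (hr2 : ∀ i : V2, (G2.neighborSet i).ncard = δ2)
    (hn : Fintype.card V1 = n) (hd : Fintype.card V2 = δ1)
    (hδ1 : 4 ≤ δ1)
    (hopt : LambdaPrimeOptimal G2)
    (hκ : edgeConn G1 + 1 ≤ vertexConn G1 + edgeConn G2 ∨
      edgeConn G2 + 1 ≤ vertexConn G1) :
    restrictedEdgeConn (replacementProduct G1 G2 ℓ) = min (edgeConn G1) (2 * δ2) := by
  classical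
  open RPaux in
  haveI hNV2 : Nonempty V2 := Fintype.card_pos_iff.1 (by omega)
  obtain ⟨F2, hcut2, hcard2'⟩ := RPaux.exists_restricted_cut_2d2 hℓ hc1 hc2 hr1 hr2 hd hδ1
  have hub : restrictedEdgeConn (replacementProduct G1 G2 ℓ) ≤ min (edgeConn G1) (2 * δ2) :=
    le_min (RPaux.upper_lam1 hℓ hc1 hc2 hr1 hr2 hd hδ1)
      (le_trans (Nat.sInf_le ⟨F2, hcut2, rfl⟩) hcard2')
  refine le_antisymm hub ?_
  have hne : {k | ∃ F, IsRestrictedEdgeCut (replacementProduct G1 G2 ℓ) F ∧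
      F.ncard = k}.Nonempty := ⟨F2.ncard, F2, hcut2, rfl⟩
  obtain ⟨F0, hcut0, hc0⟩ := Nat.sInf_mem hne
  obtain ⟨hsub0, hdis0, hmd0⟩ := hcut0
  haveI hNV : Nonempty (V1 × V2) := ⟨(hc1.nonempty.some, Classical.arbitrary V2)⟩
  have hpre : ¬ ((replacementProduct G1 G2 ℓ).deleteEdges F0).Preconnected := by
    intro h
    exact hdis0 ⟨h⟩
  rw [SimpleGraph.Preconnected] at hpre
  push_neg at hpre
  obtain ⟨u, v, huv⟩ := hpre
  set X : Set (V1 × V2) :=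
    {p | ((replacementProduct G1 G2 ℓ).deleteEdges F0).Reachable u p} with hXdef
  have hXcl : ∀ p q : V1 × V2, ((replacementProduct G1 G2 ℓ).deleteEdges F0).Adj p q →
      p ∈ X → q ∈ X := fun p q h hp => hp.trans h.reachable
  have hXne : X.Nonempty := ⟨u, Reachable.refl u⟩
  have hXne' : Xᶜ.Nonempty := ⟨v, huv⟩
  have hXin : ∀ p ∈ X, ∃ q ∈ X, (replacementProduct G1 G2 ℓ).Adj p q := by
    intro p hp
    obtain ⟨q, hq⟩ := hmd0 p
    exact ⟨q, hXcl p q hq hp, (deleteEdges_adj.1 hq).1⟩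
  have hXout : ∀ p ∈ Xᶜ, ∃ q ∈ Xᶜ, (replacementProduct G1 G2 ℓ).Adj p q := by
    intro p hp
    obtain ⟨q, hq⟩ := hmd0 p
    refine ⟨q, ?_, (deleteEdges_adj.1 hq).1⟩
    intro hqX
    exact hp (hqX.trans hq.symm.reachable)
  have hbd := RPaux.boundary_lower_bound hℓ hc1 hc2 hr1 hr2 hd hδ1 hopt hκ
    X hXne hXne' hXin hXout
  have hbsub : edgeBoundary (replacementProduct G1 G2 ℓ) X ⊆ F0 := by
    rintro e ⟨he, a, ha, b, hb, rfl⟩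
    by_contra hmem
    exact hb (hXcl a b (deleteEdges_adj.2 ⟨(replacementProduct G1 G2 ℓ).mem_edgeSet.1 he,
      hmem⟩) ha)
  calc min (edgeConn G1) (2 * δ2)
      ≤ (edgeBoundary (replacementProduct G1 G2 ℓ) X).ncard := hbd
  _ ≤ F0.ncard := Set.ncard_le_ncard hbsub (Set.toFinite _)
  _ = restrictedEdgeConn (replacementProduct G1 G2 ℓ) := hc0
end

section
/- Let G1 be a connected δ1-regular graph and G2 be a connected δ2-regular graph on δ1 vertices. If κ(G1) = λ(G1) and G2 is λ'-optimal, then λ'(G1®G2) = min{λ(G1), 2δ2}. -/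
open SimpleGraph

set_option linter.unusedSectionVars false
set_option linter.unusedVariables false

section Aux
variable {α : Type*}

lemma walk_closed {G : SimpleGraph α} {S : Set α}
    (hS : ∀ u ∈ S, ∀ v, G.Adj u v → v ∈ S) :
    ∀ {u v : α}, G.Reachable u v → u ∈ S → v ∈ S := by
  intro u v h
  obtain ⟨w⟩ := h
  induction w with
  | nil => exact id
  | cons h p ih => exact fun hu => ih (hS _ hu _ h)

lemma not_connected_of_separated {G : SimpleGraph α} {S : Set α}
    (hS : ∀ u ∈ S, ∀ v, G.Adj u v → v ∈ S) {u v : α} (hu : u ∈ S) (hv : v ∉ S) :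
    ¬ G.Connected := fun hc => hv (walk_closed hS (hc.preconnected u v) hu)

lemma ncard_add_ncard_le_of_disjoint {β : Type*} {s t F : Set β} (hs : s ⊆ F) (ht : t ⊆ F)
    (hdis : Disjoint s t) (hF : F.Finite) : s.ncard + t.ncard ≤ F.ncard := by
  rw [← Set.ncard_union_eq hdis (hF.subset hs) (hF.subset ht)]
  exact Set.ncard_le_ncard (Set.union_subset hs ht) hF

end Aux

section Defs2
variable {V1 V2 : Type*}

def cloudCut (F : Set (Sym2 (V1 × V2))) (x : V1) : Set (Sym2 V2) :=
  (Sym2.map (fun i => (x, i))) ⁻¹' F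

def baseCut (G1 : SimpleGraph V1) (ℓ : V1 → V2 → V1) (F : Set (Sym2 (V1 × V2))) :
    Set (Sym2 V1) :=
  {e | ∃ x y i j, e = s(x, y) ∧ G1.Adj x y ∧ ℓ x i = y ∧ ℓ y j = x ∧ s((x,i),(y,j)) ∈ F}

variable {G1 : SimpleGraph V1} {G2 : SimpleGraph V2} {ℓ : V1 → V2 → V1}

lemma rp_adj_same {x : V1} {i j : V2} :
    (replacementProduct G1 G2 ℓ).Adj (x,i) (x,j) ↔ G2.Adj i j := by
  constructor
  · rintro (⟨-, h⟩ | ⟨h, -⟩)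
    · exact h
    · exact absurd rfl h.ne
  · exact fun h => Or.inl ⟨rfl, h⟩

lemma mem_cloudCut_iff {F : Set (Sym2 (V1 × V2))} {x : V1} {i j : V2} :
    s(i, j) ∈ cloudCut F x ↔ s((x,i),(x,j)) ∈ F := by
  simp [cloudCut, Sym2.map_pair_eq]

lemma exists_label [Fintype V1] [Fintype V2] {δ1 : ℕ} (hℓ : IsRPLabelling G1 ℓ)
    (hr1 : ∀ x, (G1.neighborSet x).ncard = δ1) (hd : Fintype.card V2 = δ1)
    {x y : V1} (hxy : G1.Adj x y) : ∃ i, ℓ x i = y := by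
  have hsub : Set.range (ℓ x) ⊆ G1.neighborSet x := by
    rintro _ ⟨i, rfl⟩; exact hℓ.2 x i
  have hcard : (Set.range (ℓ x)).ncard = δ1 := by
    rw [← Set.image_univ, Set.ncard_image_of_injective _ (hℓ.1 x), Set.ncard_univ,
      Nat.card_eq_fintype_card, hd]
  have heq := Set.eq_of_subset_of_ncard_le hsub
    (by rw [hcard, hr1]) (Set.toFinite _)
  have : y ∈ Set.range (ℓ x) := heq ▸ hxy
  exact this

lemma cloud_reach (F : Set (Sym2 (V1 × V2))) {x : V1} {i j : V2}
    (h : (G2.deleteEdges (cloudCut F x)).Reachable i j) :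
    ((replacementProduct G1 G2 ℓ).deleteEdges F).Reachable (x,i) (x,j) := by
  obtain ⟨w⟩ := h
  induction w with
  | nil => exact Reachable.refl _
  | cons h p ih =>
      rw [deleteEdges_adj] at h
      refine Reachable.trans (Adj.reachable ?_) ih
      rw [deleteEdges_adj]
      exact ⟨rp_adj_same.2 h.1, fun hm => h.2 (mem_cloudCut_iff.2 hm)⟩

end Defs2

section Region
variable {V1 V2 : Type*} {G1 : SimpleGraph V1} {G2 : SimpleGraph V2} {ℓ : V1 → V2 → V1}

lemma induce_reachable_walk {G : SimpleGraph V1} {W : Set V1} {a b : W}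
    (h : (G.induce W).Reachable a b) :
    ∃ p : G.Walk a b, ∀ c ∈ p.support, c ∈ W := by
  obtain ⟨w⟩ := h
  induction w with
  | @nil a =>
      refine ⟨Walk.nil, ?_⟩
      intro c hc
      rw [Walk.support_nil, List.mem_singleton] at hc
      subst hc; exact a.2
  | @cons a c b h p ih =>
      obtain ⟨q, hq⟩ := ih
      refine ⟨Walk.cons (by simpa using h) q, ?_⟩
      intro d hd
      rw [Walk.support_cons, List.mem_cons] at hd
      rcases hd with rfl | hd
      · exact a.2
      · exact hq d hd

lemma region_reach [Fintype V1] [Fintype V2] {δ1 : ℕ} (hℓ : IsRPLabelling G1 ℓ)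
    (hr1 : ∀ x, (G1.neighborSet x).ncard = δ1) (hd : Fintype.card V2 = δ1)
    (F : Set (Sym2 (V1 × V2))) (W : Set V1)
    (hW : ∀ x ∈ W, (G2.deleteEdges (cloudCut F x)).Preconnected) :
    ∀ {a b : V1} (p : (G1.deleteEdges (baseCut G1 ℓ F)).Walk a b),
      (∀ c ∈ p.support, c ∈ W) → ∀ i j,
      ((replacementProduct G1 G2 ℓ).deleteEdges F).Reachable (a,i) (b,j) := by
  intro a b p
  induction p with
  | @nil a =>
      intro hsup i j
      exact cloud_reach F (hW a (hsup a (by simp)) i j)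
  | @cons a c b h p ih =>
      intro hsup i j
      have ha : a ∈ W := hsup a (by simp)
      rw [deleteEdges_adj] at h
      obtain ⟨i', hi'⟩ := exists_label hℓ hr1 hd h.1
      obtain ⟨j', hj'⟩ := exists_label hℓ hr1 hd h.1.symm
      have hcross : s(((a : V1), i'), (c, j')) ∉ F := by
        intro hmem
        exact h.2 ⟨a, c, i', j', rfl, h.1, hi', hj', hmem⟩
      have h1 : ((replacementProduct G1 G2 ℓ).deleteEdges F).Reachable (a,i) (a,i') :=
        cloud_reach F (hW a ha i i')
      have h2 : ((replacementProduct G1 G2 ℓ).deleteEdges F).Adj (a,i') (c,j') := by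
        rw [deleteEdges_adj]
        exact ⟨Or.inr ⟨h.1, hi', hj'⟩, hcross⟩
      exact (h1.trans h2.reachable).trans
        (ih (fun d hd' => hsup d (by simp [hd'])) j' j)

end Region

section Count
variable {V1 V2 : Type*} [Fintype V1] [Fintype V2]
variable {G1 : SimpleGraph V1} {G2 : SimpleGraph V2} {ℓ : V1 → V2 → V1}

lemma rp_adj_cross' {p q : V1 × V2} (hne : p.1 ≠ q.1)
    (h : (replacementProduct G1 G2 ℓ).Adj p q) :
    G1.Adj p.1 q.1 ∧ ℓ p.1 p.2 = q.1 ∧ ℓ q.1 q.2 = p.1 := by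
  rcases h with ⟨h1, -⟩ | h
  · exact absurd h1 hne
  · exact h

lemma cloudCut_subset {F : Set (Sym2 (V1 × V2))}
    (hF : F ⊆ (replacementProduct G1 G2 ℓ).edgeSet) (x : V1) :
    cloudCut F x ⊆ G2.edgeSet := by
  intro e he
  induction e using Sym2.ind with
  | _ i j =>
    have h2 : s((x,i),(x,j)) ∈ (replacementProduct G1 G2 ℓ).edgeSet :=
      hF (mem_cloudCut_iff.1 he)
    rw [mem_edgeSet] at h2 ⊢
    exact rp_adj_same.1 h2

lemma baseCut_subset (F : Set (Sym2 (V1 × V2))) : baseCut G1 ℓ F ⊆ G1.edgeSet := by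
  rintro e ⟨x, y, i, j, rfl, hadj, -⟩; exact hadj

/-- the image of the cloud cut of `x` inside `F`. -/
lemma cloudPart_subset (F : Set (Sym2 (V1 × V2))) (x : V1) :
    (Sym2.map (fun i => ((x : V1), i)) '' cloudCut F x) ⊆ F := by
  rintro e ⟨e', he', rfl⟩; exact he'

lemma cloudPart_ncard (F : Set (Sym2 (V1 × V2))) (x : V1) :
    (Sym2.map (fun i => ((x : V1), i)) '' cloudCut F x).ncard = (cloudCut F x).ncard :=
  Set.ncard_image_of_injective _ (Sym2.map.injective (fun a b h => congrArg Prod.snd h))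

def crossPart (F : Set (Sym2 (V1 × V2))) : Set (Sym2 (V1 × V2)) :=
  {e ∈ F | ∃ p q : V1 × V2, e = s(p, q) ∧ p.1 ≠ q.1}

lemma baseCut_eq_image {F : Set (Sym2 (V1 × V2))}
    (hF : F ⊆ (replacementProduct G1 G2 ℓ).edgeSet) :
    baseCut G1 ℓ F = Sym2.map Prod.fst '' crossPart F := by
  ext e
  constructor
  · rintro ⟨x, y, i, j, rfl, hadj, hi, hj, hmem⟩
    exact ⟨s((x,i),(y,j)), ⟨hmem, (x,i), (y,j), rfl, hadj.ne⟩, by rw [Sym2.map_pair_eq]⟩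
  · rintro ⟨c, ⟨hcF, p, q, rfl, hne⟩, rfl⟩
    have hadj : (replacementProduct G1 G2 ℓ).Adj p q := (mem_edgeSet _).1 (hF hcF)
    obtain ⟨h1, h2, h3⟩ := rp_adj_cross' hne hadj
    exact ⟨p.1, q.1, p.2, q.2, by rw [Sym2.map_pair_eq], h1, h2, h3, hcF⟩

lemma disj_cloud_cross (F : Set (Sym2 (V1 × V2))) (x : V1) :
    Disjoint (Sym2.map (fun i => ((x : V1), i)) '' cloudCut F x) (crossPart F) := by
  rw [Set.disjoint_left]
  rintro e ⟨e', -, rfl⟩ ⟨-, p, q, he, hne⟩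
  induction e' using Sym2.ind with
  | _ i j =>
    rw [Sym2.map_pair_eq] at he
    rw [Sym2.eq_iff] at he
    rcases he with ⟨h1, h2⟩ | ⟨h1, h2⟩ <;>
      exact hne (by rw [← h1, ← h2])

lemma disj_cloud_cloud (F : Set (Sym2 (V1 × V2))) {x y : V1} (hxy : x ≠ y) :
    Disjoint (Sym2.map (fun i => ((x : V1), i)) '' cloudCut F x)
      (Sym2.map (fun i => ((y : V1), i)) '' cloudCut F y) := by
  rw [Set.disjoint_left]
  rintro e ⟨e', -, rfl⟩ ⟨e'', -, he⟩
  induction e' using Sym2.ind with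
  | _ i j =>
    induction e'' using Sym2.ind with
    | _ i' j' =>
      rw [Sym2.map_pair_eq, Sym2.map_pair_eq, Sym2.eq_iff] at he
      rcases he with ⟨h1, -⟩ | ⟨h1, -⟩ <;> exact hxy (congrArg Prod.fst h1).symm

lemma count_cloud_base {F : Set (Sym2 (V1 × V2))}
    (hF : F ⊆ (replacementProduct G1 G2 ℓ).edgeSet) (x : V1) :
    (cloudCut F x).ncard + (baseCut G1 ℓ F).ncard ≤ F.ncard := by
  have h1 : (baseCut G1 ℓ F).ncard ≤ (crossPart F).ncard := by
    rw [baseCut_eq_image hF]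
    exact Set.ncard_image_le (Set.toFinite _)
  calc (cloudCut F x).ncard + (baseCut G1 ℓ F).ncard
      ≤ (Sym2.map (fun i => ((x : V1), i)) '' cloudCut F x).ncard + (crossPart F).ncard := by
        rw [cloudPart_ncard]; omega
    _ ≤ F.ncard := ncard_add_ncard_le_of_disjoint (cloudPart_subset F x)
        (fun e he => he.1) (disj_cloud_cross F x) (Set.toFinite _)

lemma count_cloud_cloud {F : Set (Sym2 (V1 × V2))} {x y : V1} (hxy : x ≠ y) :
    (cloudCut F x).ncard + (cloudCut F y).ncard ≤ F.ncard := by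
  calc (cloudCut F x).ncard + (cloudCut F y).ncard
      = (Sym2.map (fun i => ((x : V1), i)) '' cloudCut F x).ncard
        + (Sym2.map (fun i => ((y : V1), i)) '' cloudCut F y).ncard := by
        rw [cloudPart_ncard, cloudPart_ncard]
    _ ≤ F.ncard := ncard_add_ncard_le_of_disjoint (cloudPart_subset F x)
        (cloudPart_subset F y) (disj_cloud_cloud F hxy) (Set.toFinite _)

end Count

section Bounds
variable {V1 V2 : Type*} [Fintype V1] [Fintype V2] {δ1 δ2 : ℕ}
variable {G1 : SimpleGraph V1} {G2 : SimpleGraph V2} {ℓ : V1 → V2 → V1}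

lemma exists_G2_edge (hr2 : ∀ i : V2, (G2.neighborSet i).ncard = δ2)
    (hδ2 : 1 ≤ δ2) (hne : Nonempty V2) : ∃ i j : V2, G2.Adj i j := by
  obtain ⟨i⟩ := hne
  have : (G2.neighborSet i).Nonempty :=
    Set.nonempty_of_ncard_ne_zero (by rw [hr2 i]; omega)
  obtain ⟨j, hj⟩ := this
  exact ⟨i, j, hj⟩

lemma minEdgeDegree_reg (hr2 : ∀ i : V2, (G2.neighborSet i).ncard = δ2)
    (hδ2 : 1 ≤ δ2) (hne : Nonempty V2) : minEdgeDegree G2 = 2 * δ2 - 2 := by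
  obtain ⟨i, j, hij⟩ := exists_G2_edge hr2 hδ2 hne
  have hmem : 2 * δ2 - 2 ∈
      {k | ∃ u v : V2, G2.Adj u v ∧ (G2.neighborSet u).ncard + (G2.neighborSet v).ncard - 2 = k} :=
    ⟨i, j, hij, by rw [hr2 i, hr2 j]; omega⟩
  have hval := Nat.sInf_mem (Set.nonempty_of_mem hmem)
  obtain ⟨u, v, huv, hk⟩ := hval
  have : sInf {k | ∃ u v : V2, G2.Adj u v ∧
      (G2.neighborSet u).ncard + (G2.neighborSet v).ncard - 2 = k} = 2 * δ2 - 2 := by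
    rw [← hk, hr2 u, hr2 v]; omega
  exact this

/-- Any edge set disconnecting `G2` has at least `δ2` edges. -/
lemma cloud_lower (hc2 : G2.Connected) (hr2 : ∀ i : V2, (G2.neighborSet i).ncard = δ2)
    (hopt : LambdaPrimeOptimal G2) (hδ2 : 1 ≤ δ2)
    {F2 : Set (Sym2 V2)} (h2sub : F2 ⊆ G2.edgeSet)
    (hdis : ¬ (G2.deleteEdges F2).Connected) : δ2 ≤ F2.ncard := by
  have h1 : 1 ≤ F2.ncard := by
    rw [Nat.one_le_iff_ne_zero]
    intro h0
    rw [Set.ncard_eq_zero (Set.toFinite _)] at h0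
    rw [h0, deleteEdges_empty] at hdis
    exact hdis hc2
  by_cases hiso : ∃ i : V2, ∀ w, ¬ (G2.deleteEdges F2).Adj i w
  · obtain ⟨i, hi⟩ := hiso
    have himg : (fun j => s((i : V2), j)) '' G2.neighborSet i ⊆ F2 := by
      rintro e ⟨j, hj, rfl⟩
      by_contra hmem
      exact hi j (by rw [deleteEdges_adj]; exact ⟨hj, hmem⟩)
    have hinj : Set.InjOn (fun j => s((i : V2), j)) (G2.neighborSet i) := by
      intro a ha b hb h
      simp only [Sym2.eq_iff] at h
      rcases h with ⟨-, h⟩ | ⟨h1, h2⟩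
      · exact h
      · exfalso; rw [h2] at ha; exact G2.loopless.irrefl i ha
    calc δ2 = (G2.neighborSet i).ncard := (hr2 i).symm
      _ = ((fun j => s((i : V2), j)) '' G2.neighborSet i).ncard :=
          (Set.ncard_image_of_injOn hinj).symm
      _ ≤ F2.ncard := Set.ncard_le_ncard himg (Set.toFinite _)
  · push_neg at hiso
    have hmem : F2.ncard ∈ {k | ∃ F : Set (Sym2 V2), IsRestrictedEdgeCut G2 F ∧ F.ncard = k} :=
      ⟨F2, ⟨h2sub, hdis, hiso⟩, rfl⟩
    have h2 : restrictedEdgeConn G2 ≤ F2.ncard := Nat.sInf_le hmem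
    rw [hopt, minEdgeDegree_reg hr2 hδ2 hc2.nonempty] at h2
    omega

/-- a nonempty finite connected graph with at least one edge has `edgeConn ≥ 1`,
and the defining set is nonempty. -/
lemma edgeConn_set_nonempty (hc1 : G1.Connected)
    (hr1 : ∀ x : V1, (G1.neighborSet x).ncard = δ1) (hδ1 : 1 ≤ δ1) :
    {k | ∃ F : Set (Sym2 V1), F ⊆ G1.edgeSet ∧ F.ncard = k ∧
      ¬(G1.deleteEdges F).Connected}.Nonempty := by
  obtain ⟨x⟩ := hc1.nonempty
  have hy : (G1.neighborSet x).Nonempty :=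
    Set.nonempty_of_ncard_ne_zero (by rw [hr1 x]; omega)
  obtain ⟨y, hy⟩ := hy
  refine ⟨(G1.incidenceSet x).ncard, G1.incidenceSet x, G1.incidenceSet_subset x, rfl, ?_⟩
  refine not_connected_of_separated (S := {x}) ?_ rfl (fun h => G1.ne_of_adj hy h.symm)
  rintro u rfl v hadj
  rw [deleteEdges_adj] at hadj
  exact absurd ⟨(mem_edgeSet _).2 hadj.1, Sym2.mem_iff.2 (Or.inl rfl)⟩ hadj.2

lemma edgeConn_pos (hc1 : G1.Connected)
    (hr1 : ∀ x : V1, (G1.neighborSet x).ncard = δ1) (hδ1 : 1 ≤ δ1) :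
    1 ≤ edgeConn G1 := by
  rw [Nat.one_le_iff_ne_zero]
  intro h0
  have hmem := Nat.sInf_mem (edgeConn_set_nonempty hc1 hr1 hδ1)
  rw [show sInf {k | ∃ F : Set (Sym2 V1), F ⊆ G1.edgeSet ∧ F.ncard = k ∧
      ¬(G1.deleteEdges F).Connected} = edgeConn G1 from rfl, h0] at hmem
  obtain ⟨F, hsub, hcard, hdis⟩ := hmem
  rw [Set.ncard_eq_zero (Set.toFinite _)] at hcard
  rw [hcard, deleteEdges_empty] at hdis
  exact hdis hc1

/-- removing fewer than `edgeConn` edges keeps the graph connected -/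
lemma connected_deleteEdges_of_lt {B : Set (Sym2 V1)} (hB : B ⊆ G1.edgeSet)
    (h : B.ncard < edgeConn G1) : (G1.deleteEdges B).Connected := by
  by_contra hdis
  have h2 : edgeConn G1 ≤ B.ncard := Nat.sInf_le ⟨B, hB, rfl, hdis⟩
  omega

end Bounds

section VertexCut
variable {V1 : Type*} [Fintype V1] {δ1 : ℕ} {G1 : SimpleGraph V1}

lemma induce_compl_connected
    (hkleq : vertexConn G1 = edgeConn G1)
    (hr1 : ∀ x : V1, (G1.neighborSet x).ncard = δ1)
    {B : Set (Sym2 V1)} (hB : B ⊆ G1.edgeSet) (x0 : V1)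
    (h1 : B.ncard + 1 < edgeConn G1) (h2 : B.ncard + 1 < δ1)
    (hWex : ∃ y : V1, y ≠ x0) :
    ((G1.deleteEdges B).induce ({x0}ᶜ : Set V1)).Connected := by
  classical
  by_contra hncon
  obtain ⟨y0, hy0⟩ := hWex
  have hWne : Nonempty ({x0}ᶜ : Set V1) := ⟨⟨y0, hy0⟩⟩
  have hpre : ¬ ((G1.deleteEdges B).induce ({x0}ᶜ : Set V1)).Preconnected := by
    intro hp; exact hncon ((connected_iff _).2 ⟨hp, hWne⟩)
  unfold SimpleGraph.Preconnected at hpre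
  push_neg at hpre
  obtain ⟨u, v, huv⟩ := hpre
  set K := (G1.deleteEdges B).induce ({x0}ᶜ : Set V1) with hK
  set A : Set V1 := {w | ∃ h : w ∈ ({x0}ᶜ : Set V1), K.Reachable u ⟨w, h⟩} with hA
  set A' : Set V1 := ({x0}ᶜ : Set V1) \ A with hA'
  have huA : (u : V1) ∈ A := ⟨u.2, by rw [Subtype.coe_eta]⟩
  have hvA' : (v : V1) ∈ A' := by
    refine ⟨v.2, fun hv => ?_⟩
    obtain ⟨h, hr⟩ := hv
    rw [Subtype.coe_eta] at hr
    exact huv hr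
  have hAW : A ⊆ ({x0}ᶜ : Set V1) := fun w hw => hw.1
  have hedge : ∀ a ∈ A, ∀ b ∈ A', G1.Adj a b → s(a, b) ∈ B := by
    rintro a ha b hb hadj
    by_contra hmem
    apply hb.2
    obtain ⟨haW, hra⟩ := ha
    refine ⟨hb.1, hra.trans (Adj.reachable ?_)⟩
    show K.Adj ⟨a, haW⟩ ⟨b, hb.1⟩
    rw [hK]
    simp only [comap_adj, Function.Embedding.coe_subtype, deleteEdges_adj]
    exact ⟨hadj, hmem⟩
  by_cases hex : ∃ a ∈ A, ∃ b ∈ A', s(a, b) ∉ B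
  · obtain ⟨a, ha, b, hb, hab⟩ := hex
    set B₁ : Set (Sym2 V1) := {e ∈ B | ∃ p ∈ A, ∃ q ∈ A', e = s(p, q)} with hB₁
    have hchoice : ∀ e ∈ B₁, ∃ w, w ∈ e ∧ w ≠ a ∧ w ≠ b := by
      rintro e ⟨heB, p, hp, q, hq, rfl⟩
      by_cases hqb : q = b
      · subst hqb
        refine ⟨p, Sym2.mem_iff.2 (Or.inl rfl), ?_, ?_⟩
        · rintro rfl; exact hab heB
        · rintro rfl; exact hq.2 hp
      · refine ⟨q, Sym2.mem_iff.2 (Or.inr rfl), ?_, hqb⟩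
        rintro rfl; exact hq.2 ha
    set χ : Sym2 V1 → V1 :=
      fun e => if h : ∃ w, w ∈ e ∧ w ≠ a ∧ w ≠ b then h.choose else a with hχdef
    have hχ : ∀ e ∈ B₁, χ e ∈ e ∧ χ e ≠ a ∧ χ e ≠ b := by
      intro e he
      rw [hχdef]
      simp only [dif_pos (hchoice e he)]
      exact (hchoice e he).choose_spec
    set T : Set V1 := χ '' B₁ with hT
    set S : Set V1 := insert x0 T with hS
    have hSn : S.ncard ≤ B.ncard + 1 := by
      calc S.ncard ≤ T.ncard + 1 := Set.ncard_insert_le _ _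
        _ ≤ B₁.ncard + 1 := by
            have hTle : T.ncard ≤ B₁.ncard := by
              rw [hT]; exact Set.ncard_image_le (Set.toFinite _)
            omega
        _ ≤ B.ncard + 1 := by
            have : B₁.ncard ≤ B.ncard :=
              Set.ncard_le_ncard (fun e he => he.1) (Set.toFinite _)
            omega
    have hanS : a ∉ S := by
      rintro (rfl | ⟨e, he, heq⟩)
      · exact ha.1 rfl
      · exact (hχ e he).2.1 heq
    have hbnS : b ∉ S := by
      rintro (rfl | ⟨e, he, heq⟩)
      · exact hb.1 rfl
      · exact (hχ e he).2.2 heq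
    have hd : ¬ (G1.induce (Sᶜ : Set V1)).Connected := by
      refine not_connected_of_separated
        (S := {w : (Sᶜ : Set V1) | (w : V1) ∈ A}) ?_
        (u := ⟨a, hanS⟩) (v := ⟨b, hbnS⟩) ha ?_
      · rintro ⟨p, hp⟩ hpA ⟨q, hq⟩ hadj
        rw [comap_adj] at hadj
        simp only [Function.Embedding.coe_subtype] at hadj
        have hqx0 : q ≠ x0 := fun h => hq (h ▸ Set.mem_insert x0 T)
        by_contra hqA
        have hqA' : q ∈ A' := ⟨hqx0, hqA⟩
        have hmem : s(p, q) ∈ B₁ := ⟨hedge p hpA q hqA' hadj, p, hpA, q, hqA', rfl⟩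
        have hin := (hχ _ hmem).1
        rw [Sym2.mem_iff] at hin
        rcases hin with h | h
        · exact hp (Set.mem_insert_iff.2 (Or.inr ⟨_, hmem, h⟩))
        · exact hq (Set.mem_insert_iff.2 (Or.inr ⟨_, hmem, h⟩))
      · exact hb.2
    have hv : vertexConn G1 ≤ S.ncard := Nat.sInf_le ⟨S, rfl, Or.inl hd⟩
    omega
  · push_neg at hex
    have hinj : Set.InjOn (fun p : V1 × V1 => s(p.1, p.2)) (A ×ˢ A') := by
      rintro ⟨p1, p2⟩ ⟨hp1, hp2⟩ ⟨q1, q2⟩ ⟨hq1, hq2⟩ h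
      simp only [Sym2.eq_iff] at h
      rcases h with ⟨h1, h2⟩ | ⟨h1, h2⟩
      · rw [Prod.mk.injEq]; exact ⟨h1, h2⟩
      · exfalso; rw [h1] at hp1; exact hq2.2 hp1
    have himg : (fun p : V1 × V1 => s(p.1, p.2)) '' (A ×ˢ A') ⊆ B := by
      rintro e ⟨⟨p, q⟩, ⟨hp, hq⟩, rfl⟩
      exact hex p hp q hq
    have hprod : A.ncard * A'.ncard ≤ B.ncard := by
      have h3 : (A ×ˢ A').ncard = A.ncard * A'.ncard := by
        rw [Set.ncard_eq_toFinset_card', Set.toFinset_prod, Finset.card_product,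
          ← Set.ncard_eq_toFinset_card', ← Set.ncard_eq_toFinset_card']
      calc A.ncard * A'.ncard = (A ×ˢ A').ncard := h3.symm
        _ = ((fun p : V1 × V1 => s(p.1, p.2)) '' (A ×ˢ A')).ncard :=
            (Set.ncard_image_of_injOn hinj).symm
        _ ≤ B.ncard := Set.ncard_le_ncard himg (Set.toFinite _)
    have hsub : G1.neighborSet (u : V1) ⊆ (A \ {(u : V1)}) ∪ (A' ∪ {x0}) := by
      intro w hw
      by_cases hwx : w = x0
      · exact Or.inr (Or.inr hwx)
      by_cases hwA : w ∈ A
      · exact Or.inl ⟨hwA, fun h => G1.ne_of_adj hw (by rw [h])⟩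
      · exact Or.inr (Or.inl ⟨hwx, hwA⟩)
    have hδb : δ1 ≤ A.ncard - 1 + (A'.ncard + 1) := by
      calc δ1 = (G1.neighborSet (u : V1)).ncard := (hr1 _).symm
        _ ≤ ((A \ {(u : V1)}) ∪ (A' ∪ {x0})).ncard :=
            Set.ncard_le_ncard hsub (Set.toFinite _)
        _ ≤ (A \ {(u : V1)}).ncard + (A' ∪ {x0}).ncard := Set.ncard_union_le _ _
        _ ≤ A.ncard - 1 + (A'.ncard + 1) := by
            have e1 : (A \ {(u : V1)}).ncard = A.ncard - 1 :=
              Set.ncard_diff_singleton_of_mem huA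
            have e2 : (A' ∪ {x0}).ncard ≤ A'.ncard + 1 := by
              have := Set.ncard_union_le A' ({x0} : Set V1)
              simpa using this
            omega
    have hA1 : 1 ≤ A.ncard := by
      rw [Nat.one_le_iff_ne_zero]
      intro h0
      rw [Set.ncard_eq_zero (Set.toFinite _)] at h0
      rw [h0] at huA; exact huA
    have hA'1 : 1 ≤ A'.ncard := by
      rw [Nat.one_le_iff_ne_zero]
      intro h0
      rw [Set.ncard_eq_zero (Set.toFinite _)] at h0
      rw [h0] at hvA'; exact hvA'
    have harith : A.ncard + A'.ncard ≤ A.ncard * A'.ncard + 1 := by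
      nlinarith
    omega

end VertexCut

section Lower
variable {V1 V2 : Type*} [Fintype V1] [Fintype V2] {δ1 δ2 : ℕ}
variable {G1 : SimpleGraph V1} {G2 : SimpleGraph V2} {ℓ : V1 → V2 → V1}

lemma lower_bound (hℓ : IsRPLabelling G1 ℓ) (hc1 : G1.Connected) (hc2 : G2.Connected)
    (hr1 : ∀ x : V1, (G1.neighborSet x).ncard = δ1)
    (hr2 : ∀ i : V2, (G2.neighborSet i).ncard = δ2)
    (hd : Fintype.card V2 = δ1) (hkleq : vertexConn G1 = edgeConn G1)
    (hopt : LambdaPrimeOptimal G2) (hδ2 : 1 ≤ δ2)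
    {F : Set (Sym2 (V1 × V2))} (hF : IsRestrictedEdgeCut (replacementProduct G1 G2 ℓ) F) :
    min (edgeConn G1) (2 * δ2) ≤ F.ncard := by
  classical
  by_contra hlt
  push_neg at hlt
  rw [lt_min_iff] at hlt
  obtain ⟨hFlam, hF2δ⟩ := hlt
  obtain ⟨hFsub, hFdis, hFdeg⟩ := hF
  have hV2 : Nonempty V2 := hc2.nonempty
  have hV1 : Nonempty V1 := hc1.nonempty
  have hδ1 : 1 ≤ δ1 := by rw [← hd]; exact Fintype.card_pos
  have hδ21 : δ2 + 1 ≤ δ1 := by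
    obtain ⟨i⟩ := hV2
    have hs : G2.neighborSet i ⊆ ({i}ᶜ : Set V2) := by
      intro j hj
      simp only [Set.mem_compl_iff, Set.mem_singleton_iff]
      rintro rfl
      exact G2.loopless.irrefl _ hj
    have h1 : (G2.neighborSet i).ncard ≤ ({i}ᶜ : Set V2).ncard :=
      Set.ncard_le_ncard hs (Set.toFinite _)
    have h2 := Set.ncard_add_ncard_compl ({i} : Set V2)
    rw [Nat.card_eq_fintype_card, hd, Set.ncard_singleton] at h2
    rw [hr2 i] at h1
    omega
  -- base cut facts
  have hBsub := baseCut_subset (G1 := G1) (ℓ := ℓ) F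
  have hBleF : (baseCut G1 ℓ F).ncard ≤ F.ncard := by
    rw [baseCut_eq_image hFsub]
    calc (Sym2.map Prod.fst '' crossPart F).ncard ≤ (crossPart F).ncard :=
          Set.ncard_image_le (Set.toFinite _)
      _ ≤ F.ncard := Set.ncard_le_ncard (fun e he => he.1) (Set.toFinite _)
  have hG1B : (G1.deleteEdges (baseCut G1 ℓ F)).Connected :=
    connected_deleteEdges_of_lt hBsub (by omega)
  by_cases hD : ∀ x : V1, (G2.deleteEdges (cloudCut F x)).Connected
  · -- all clouds fine: G − F is connected, contradiction
    apply hFdis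
    rw [connected_iff]
    refine ⟨?_, ⟨(Classical.arbitrary V1, Classical.arbitrary V2)⟩⟩
    rintro ⟨a, i⟩ ⟨b, j⟩
    obtain ⟨p⟩ := hG1B.preconnected a b
    exact region_reach hℓ hr1 hd F Set.univ (fun x _ => (hD x).preconnected) p
      (fun c _ => trivial) i j
  · push_neg at hD
    obtain ⟨x0, hx0⟩ := hD
    have hkey : ∀ x : V1, ¬ (G2.deleteEdges (cloudCut F x)).Connected →
        δ2 ≤ (cloudCut F x).ncard :=
      fun x hx => cloud_lower hc2 hr2 hopt hδ2 (cloudCut_subset hFsub x) hx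
    have hx0c : δ2 ≤ (cloudCut F x0).ncard := hkey x0 hx0
    have hgood : ∀ x : V1, x ≠ x0 → (G2.deleteEdges (cloudCut F x)).Connected := by
      intro x hx
      by_contra hbad
      have h6 := count_cloud_cloud (F := F) hx
      have h7 := hkey x hbad
      omega
    have hcount := count_cloud_base hFsub x0
    have hBd : (baseCut G1 ℓ F).ncard + δ2 ≤ F.ncard := by omega
    have hBlt2 : (baseCut G1 ℓ F).ncard + 1 < edgeConn G1 := by omega
    have hBlt3 : (baseCut G1 ℓ F).ncard + 1 < δ1 := by omega
    obtain ⟨i₀⟩ := hV2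
    have hy0 : ∃ y : V1, y ≠ x0 := ⟨ℓ x0 i₀, (hℓ.2 x0 i₀).ne'⟩
    have hreg := induce_compl_connected hkleq hr1 hBsub x0 hBlt2 hBlt3 hy0
    have hreach : ∀ (a b : V1), a ≠ x0 → b ≠ x0 → ∀ i j,
        ((replacementProduct G1 G2 ℓ).deleteEdges F).Reachable (a,i) (b,j) := by
      intro a b ha hb i j
      have hr := hreg.preconnected ⟨a, ha⟩ ⟨b, hb⟩
      obtain ⟨p, hp⟩ := induce_reachable_walk hr
      exact region_reach hℓ hr1 hd F ({x0}ᶜ)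
        (fun x hx => (hgood x hx).preconnected) p hp i j
    -- every vertex of the bad cloud attaches to the good region
    have hattach : ∀ i : V2, ∃ q : V1 × V2, q.1 ≠ x0 ∧
        ((replacementProduct G1 G2 ℓ).deleteEdges F).Reachable (x0, i) q := by
      intro i
      set C : Set V2 := {k | (G2.deleteEdges (cloudCut F x0)).Reachable i k} with hCdef
      have hiC : i ∈ C := Reachable.refl i
      by_cases hex : ∃ k ∈ C, ∃ j', ℓ (ℓ x0 k) j' = x0 ∧
          s(((x0 : V1), k), (ℓ x0 k, j')) ∉ F
      · obtain ⟨k, hk, j', hj', hnF⟩ := hex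
        refine ⟨(ℓ x0 k, j'), (hℓ.2 x0 k).ne', ?_⟩
        refine (cloud_reach F hk).trans (Adj.reachable ?_)
        rw [deleteEdges_adj]
        exact ⟨Or.inr ⟨hℓ.2 x0 k, rfl, hj'⟩, hnF⟩
      · exfalso
        push_neg at hex
        have hj'ex : ∀ k : V2, ∃ j', ℓ (ℓ x0 k) j' = x0 :=
          fun k => exists_label hℓ hr1 hd (hℓ.2 x0 k).symm
        set χ2 : V2 → V2 := fun k => (hj'ex k).choose with hχ2def
        have hχ2s : ∀ k, ℓ (ℓ x0 k) (χ2 k) = x0 := fun k => (hj'ex k).choose_spec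
        have hcrossF : ∀ k ∈ C, s(((x0 : V1), k), (ℓ x0 k, χ2 k)) ∈ F :=
          fun k hk => hex k hk (χ2 k) (hχ2s k)
        -- the vertex (x0, i) has a neighbour, necessarily in the cloud
        obtain ⟨⟨w1, w2⟩, hw⟩ := hFdeg (x0, i)
        rw [deleteEdges_adj] at hw
        have hwx0 : w1 = x0 := by
          by_contra hne
          obtain ⟨h1, h2, h3⟩ := rp_adj_cross' (p := ((x0 : V1), i)) (q := (w1, w2))
            (fun h => hne h.symm) hw.1
          apply hw.2
          have hmem := hex i hiC w2 (by rw [h2]; exact h3)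
          rw [h2] at hmem
          exact hmem
        rw [hwx0] at hw
        have hadj2 : G2.Adj i w2 := rp_adj_same.1 hw.1
        have hw2C : w2 ∈ C := Adj.reachable (by
          rw [deleteEdges_adj]
          exact ⟨hadj2, fun hm => hw.2 (mem_cloudCut_iff.1 hm)⟩)
        have hc2' : 2 ≤ C.ncard := by
          have hsub : ({i, w2} : Set V2) ⊆ C := by
            rintro k (rfl | rfl)
            · exact hiC
            · exact hw2C
          calc 2 = ({i, w2} : Set V2).ncard := (Set.ncard_pair (G2.ne_of_adj hadj2)).symm
            _ ≤ C.ncard := Set.ncard_le_ncard hsub (Set.toFinite _)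
        -- C injects into the base cut
        have hCB : Set.InjOn (fun k => s((x0 : V1), ℓ x0 k)) C := by
          intro k1 h1 k2 h2 h
          rw [Sym2.eq_iff] at h
          rcases h with ⟨-, h⟩ | ⟨h1', -⟩
          · exact hℓ.1 x0 h
          · exact absurd h1'.symm (hℓ.2 x0 k2).ne'
        have himgB : (fun k => s((x0 : V1), ℓ x0 k)) '' C ⊆ baseCut G1 ℓ F := by
          rintro e ⟨k, hk, rfl⟩
          exact ⟨x0, ℓ x0 k, k, χ2 k, rfl, hℓ.2 x0 k, rfl, hχ2s k, hcrossF k hk⟩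
        have hcB : C.ncard ≤ (baseCut G1 ℓ F).ncard := by
          calc C.ncard = ((fun k => s((x0 : V1), ℓ x0 k)) '' C).ncard :=
              (Set.ncard_image_of_injOn hCB).symm
            _ ≤ _ := Set.ncard_le_ncard himgB (Set.toFinite _)
        have hcδ : C.ncard < δ2 := by omega
        -- the cross edges out of C, inside F
        set crossC : Set (Sym2 (V1 × V2)) :=
          (fun k => s(((x0 : V1), k), (ℓ x0 k, χ2 k))) '' C with hcrossCdef
        have hcrossC_sub : crossC ⊆ F := by
          rintro e ⟨k, hk, rfl⟩; exact hcrossF k hk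
        have hcrossC_inj :
            Set.InjOn (fun k => s(((x0 : V1), k), (ℓ x0 k, χ2 k))) C := by
          intro k1 h1 k2 h2 h
          rw [Sym2.eq_iff] at h
          rcases h with ⟨h1', -⟩ | ⟨h1', -⟩
          · exact congrArg Prod.snd h1'
          · exact absurd (congrArg Prod.fst h1').symm (hℓ.2 x0 k2).ne'
        have hcrossC_card : crossC.ncard = C.ncard := Set.ncard_image_of_injOn hcrossC_inj
        -- boundary edges of C in the cloud, inside F
        set bnd : Set (Sym2 V2) :=
          {e | ∃ k ∈ C, ∃ w' ∉ C, G2.Adj k w' ∧ e = s(k, w')} with hbnddef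
        have hbnd_sub : bnd ⊆ cloudCut F x0 := by
          rintro e ⟨k, hk, w', hw', hadj, rfl⟩
          by_contra hm
          exact hw' (hk.trans (Adj.reachable (by rw [deleteEdges_adj]; exact ⟨hadj, hm⟩)))
        set cloudBnd : Set (Sym2 (V1 × V2)) :=
          Sym2.map (fun k => ((x0 : V1), k)) '' bnd with hcbdef
        have hcb_sub : cloudBnd ⊆ F := by
          rintro e ⟨e', he', rfl⟩
          exact hbnd_sub he'
        have hcb_card : cloudBnd.ncard = bnd.ncard :=
          Set.ncard_image_of_injective _
            (Sym2.map.injective (fun a b h => congrArg Prod.snd h))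
        have hdisj : Disjoint crossC cloudBnd := by
          rw [Set.disjoint_left]
          rintro e ⟨k, hk, rfl⟩ ⟨e', he', heq⟩
          induction e' using Sym2.ind with
          | _ a b =>
            rw [Sym2.map_pair_eq, Sym2.eq_iff] at heq
            rcases heq with ⟨-, h2'⟩ | ⟨h1', -⟩
            · exact (hℓ.2 x0 k).ne' (congrArg Prod.fst h2').symm
            · exact (hℓ.2 x0 k).ne' (congrArg Prod.fst h1').symm
        have hsum : crossC.ncard + cloudBnd.ncard ≤ F.ncard :=
          ncard_add_ncard_le_of_disjoint hcrossC_sub hcb_sub hdisj (Set.toFinite _)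
        -- lower bound the boundary via degrees
        set Cf : Finset V2 := C.toFinset with hCfdef
        have hCfcard : Cf.card = C.ncard := by
          rw [hCfdef, ← Set.ncard_eq_toFinset_card']
        set fB : V2 → Finset (Sym2 V2) :=
          fun k => ((G2.neighborSet k \ C).toFinset).image (fun w' => s(k, w')) with hfBdef
        have hfB_card : ∀ k, (fB k).card = (G2.neighborSet k \ C).ncard := by
          intro k
          rw [hfBdef]
          rw [Finset.card_image_of_injOn, ← Set.ncard_eq_toFinset_card']
          intro w1 h1 w2 h2 h
          rw [Sym2.eq_iff] at h
          rcases h with ⟨-, h⟩ | ⟨h1', h2'⟩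
          · exact h
          · exact h2'.trans h1'
        have hdisjf : ∀ k1 ∈ Cf, ∀ k2 ∈ Cf, k1 ≠ k2 → Disjoint (fB k1) (fB k2) := by
          intro k1 hk1 k2 hk2 hne
          rw [Finset.disjoint_left]
          rintro e he1 he2
          rw [hfBdef, Finset.mem_image] at he1 he2
          obtain ⟨a1, ha1, rfl⟩ := he1
          obtain ⟨a2, ha2, heq⟩ := he2
          rw [Set.mem_toFinset] at ha1 ha2
          rw [Sym2.eq_iff] at heq
          rcases heq with ⟨h1', -⟩ | ⟨h1', -⟩
          · exact hne h1'.symm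
          · rw [Set.mem_toFinset] at hk2
            exact ha1.2 (h1' ▸ hk2)
        have hbiU_sub : Cf.biUnion fB ⊆ bnd.toFinset := by
          intro e he
          rw [Finset.mem_biUnion] at he
          obtain ⟨k, hkf, he⟩ := he
          rw [hfBdef, Finset.mem_image] at he
          obtain ⟨w', hw', rfl⟩ := he
          rw [Set.mem_toFinset] at hw' hkf ⊢
          exact ⟨k, hkf, w', hw'.2, hw'.1, rfl⟩
        have hSig : ∑ k ∈ Cf, (fB k).card ≤ bnd.ncard := by
          rw [← Finset.card_biUnion hdisjf]
          calc (Cf.biUnion fB).card ≤ bnd.toFinset.card := Finset.card_le_card hbiU_sub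
            _ = bnd.ncard := (Set.ncard_eq_toFinset_card' _).symm
        have hper : ∀ k ∈ Cf, δ2 + 1 - C.ncard ≤ (fB k).card := by
          intro k hk
          rw [Set.mem_toFinset] at hk
          rw [hfB_card]
          have hsub2 : G2.neighborSet k ⊆ (G2.neighborSet k \ C) ∪ (C \ {k}) := by
            intro w' hw'
            by_cases hwC : w' ∈ C
            · exact Or.inr ⟨hwC, fun h => G2.ne_of_adj hw' (by rw [h])⟩
            · exact Or.inl ⟨hw', hwC⟩
          have h8 : δ2 ≤ (G2.neighborSet k \ C).ncard + (C \ {k}).ncard := by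
            rw [← hr2 k]
            calc (G2.neighborSet k).ncard
                ≤ ((G2.neighborSet k \ C) ∪ (C \ {k})).ncard :=
                  Set.ncard_le_ncard hsub2 (Set.toFinite _)
              _ ≤ _ := Set.ncard_union_le _ _
          have h9 : (C \ {k}).ncard = C.ncard - 1 :=
            Set.ncard_diff_singleton_of_mem hk
          omega
        have hSig2 : Cf.card • (δ2 + 1 - C.ncard) ≤ ∑ k ∈ Cf, (fB k).card :=
          Finset.card_nsmul_le_sum _ _ _ hper
        rw [smul_eq_mul, hCfcard] at hSig2
        -- final arithmetic contradiction
        set c := C.ncard with hcdef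
        have he1 : δ2 + 1 - c = (δ2 - c) + 1 := by omega
        rw [he1, Nat.mul_add, Nat.mul_one] at hSig2
        have hmul : 2 * (δ2 - c) ≤ c * (δ2 - c) := Nat.mul_le_mul_right _ (by omega)
        set X := c * (δ2 - c) with hXdef
        omega
    -- assemble connectivity of G − F : contradiction
    apply hFdis
    rw [connected_iff]
    refine ⟨?_, ⟨(x0, i₀)⟩⟩
    have hres : ∀ p : V1 × V2, ∃ q : V1 × V2, q.1 ≠ x0 ∧
        ((replacementProduct G1 G2 ℓ).deleteEdges F).Reachable p q := by
      rintro ⟨a, i⟩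
      by_cases ha : a = x0
      · subst ha; exact hattach i
      · exact ⟨(a, i), ha, Reachable.refl _⟩
    intro p q
    obtain ⟨p', hp1, hp2⟩ := hres p
    obtain ⟨q', hq1, hq2⟩ := hres q
    exact (hp2.trans (hreach p'.1 q'.1 hp1 hq1 p'.2 q'.2)).trans hq2.symm

end Lower

section Upper
variable {V1 V2 : Type*} [Fintype V1] [Fintype V2] {δ1 δ2 : ℕ}
variable {G1 : SimpleGraph V1} {G2 : SimpleGraph V2} {ℓ : V1 → V2 → V1}

lemma mem_image_star {β : Type*} {c w' : β} {T : Set β}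
    (h : s(c, w') ∈ (fun w => s(c, w)) '' T) (hne : w' ≠ c) : w' ∈ T := by
  obtain ⟨w, hw, heq⟩ := h
  rw [Sym2.eq_iff] at heq
  rcases heq with ⟨-, h2⟩ | ⟨h1, -⟩
  · exact h2 ▸ hw
  · exact absurd h1.symm hne

lemma notmem_image_star {β : Type*} {c : β} {T : Set β} {e : Sym2 β}
    (h : c ∉ e) : e ∉ (fun w => s(c, w)) '' T := by
  rintro ⟨w, -, rfl⟩; exact h (Sym2.mem_iff.2 (Or.inl rfl))

lemma rp_neighborSet (hℓ : IsRPLabelling G1 ℓ)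
    (hr1 : ∀ x : V1, (G1.neighborSet x).ncard = δ1) (hd : Fintype.card V2 = δ1)
    (x : V1) (i : V2) :
    ∃ j', ℓ (ℓ x i) j' = x ∧ (replacementProduct G1 G2 ℓ).neighborSet (x, i) =
      (fun k => ((x : V1), k)) '' G2.neighborSet i ∪ {(ℓ x i, j')} := by
  obtain ⟨j', hj'⟩ := exists_label hℓ hr1 hd (hℓ.2 x i).symm
  refine ⟨j', hj', ?_⟩
  ext w
  constructor
  · rintro (⟨h1, h2⟩ | ⟨h1, h2, h3⟩)
    · exact Or.inl ⟨w.2, h2, Prod.ext h1 rfl⟩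
    · refine Or.inr ?_
      have hj'' : ℓ w.1 j' = x := by rw [← h2]; exact hj'
      have hw2 : w.2 = j' := hℓ.1 w.1 (by rw [h3, hj''])
      have hweq : w = (ℓ x i, j') := by
        rw [Prod.ext_iff]; exact ⟨h2.symm, hw2⟩
      exact Set.mem_singleton_iff.2 hweq
  · rintro (⟨k, hk, rfl⟩ | hw)
    · exact Or.inl ⟨rfl, hk⟩
    · rw [Set.mem_singleton_iff] at hw
      subst hw
      exact Or.inr ⟨hℓ.2 x i, rfl, hj'⟩

lemma rp_neighborSet_ncard (hℓ : IsRPLabelling G1 ℓ)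
    (hr1 : ∀ x : V1, (G1.neighborSet x).ncard = δ1) (hd : Fintype.card V2 = δ1)
    (hr2 : ∀ i : V2, (G2.neighborSet i).ncard = δ2) (x : V1) (i : V2) :
    ((replacementProduct G1 G2 ℓ).neighborSet (x, i)).ncard ≤ δ2 + 1 := by
  obtain ⟨j', -, heq⟩ := rp_neighborSet hℓ hr1 hd x i
  rw [heq]
  calc ((fun k => ((x : V1), k)) '' G2.neighborSet i ∪ {(ℓ x i, j')}).ncard
      ≤ ((fun k => ((x : V1), k)) '' G2.neighborSet i).ncard + ({(ℓ x i, j')} : Set _).ncard :=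
        Set.ncard_union_le _ _
    _ ≤ δ2 + 1 := by
        rw [Set.ncard_singleton,
          Set.ncard_image_of_injective _ (fun a b h => congrArg Prod.snd h), hr2]

/-- every vertex of the replacement product has a cross neighbour -/
lemma rp_cross_adj (hℓ : IsRPLabelling G1 ℓ)
    (hr1 : ∀ x : V1, (G1.neighborSet x).ncard = δ1) (hd : Fintype.card V2 = δ1)
    (x : V1) (i : V2) : ∃ j', (replacementProduct G1 G2 ℓ).Adj (x, i) (ℓ x i, j') := by
  obtain ⟨j', hj'⟩ := exists_label hℓ hr1 hd (hℓ.2 x i).symm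
  exact ⟨j', Or.inr ⟨hℓ.2 x i, rfl, hj'⟩⟩

lemma upper_2d (hℓ : IsRPLabelling G1 ℓ) (hc1 : G1.Connected) (hc2 : G2.Connected)
    (hr1 : ∀ x : V1, (G1.neighborSet x).ncard = δ1)
    (hr2 : ∀ i : V2, (G2.neighborSet i).ncard = δ2)
    (hd : Fintype.card V2 = δ1) (hδ2 : 1 ≤ δ2) :
    ∃ F : Set (Sym2 (V1 × V2)), IsRestrictedEdgeCut (replacementProduct G1 G2 ℓ) F ∧
      F.ncard ≤ 2 * δ2 := by
  classical
  obtain ⟨x0⟩ := hc1.nonempty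
  obtain ⟨i0, j0, hij⟩ := exists_G2_edge hr2 hδ2 hc2.nonempty
  set G := replacementProduct G1 G2 ℓ with hG
  set Ni := G.neighborSet (x0, i0) with hNi
  set Nj := G.neighborSet (x0, j0) with hNj
  set Fi := (fun w => s(((x0 : V1), i0), w)) '' (Ni \ {((x0 : V1), j0)}) with hFi
  set Fj := (fun w => s(((x0 : V1), j0), w)) '' (Nj \ {((x0 : V1), i0)}) with hFj
  set F := Fi ∪ Fj with hF
  have hij' : ((x0 : V1), j0) ∈ Ni := Or.inl ⟨rfl, hij⟩
  have hji' : ((x0 : V1), i0) ∈ Nj := Or.inl ⟨rfl, hij.symm⟩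
  -- the special edge is not in F
  have hspec : s(((x0 : V1), i0), ((x0 : V1), j0)) ∉ F := by
    rintro (h | h)
    · exact (mem_image_star h (fun hh => G2.ne_of_adj hij (congrArg Prod.snd hh).symm)).2 rfl
    · rw [Sym2.eq_swap] at h
      exact (mem_image_star h (fun hh => G2.ne_of_adj hij (congrArg Prod.snd hh))).2 rfl
  have hFsub : F ⊆ G.edgeSet := by
    rintro e (⟨w, hw, rfl⟩ | ⟨w, hw, rfl⟩)
    · exact (mem_edgeSet _).2 hw.1
    · exact (mem_edgeSet _).2 hw.1
  have hFcard : F.ncard ≤ 2 * δ2 := by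
    have hni : (Ni \ {((x0 : V1), j0)}).ncard ≤ δ2 := by
      have h1 : (Ni \ {((x0 : V1), j0)}).ncard = Ni.ncard - 1 :=
        Set.ncard_diff_singleton_of_mem hij'
      have h2 := rp_neighborSet_ncard hℓ hr1 hd hr2 x0 i0
      rw [← hNi] at h2
      omega
    have hnj : (Nj \ {((x0 : V1), i0)}).ncard ≤ δ2 := by
      have h1 : (Nj \ {((x0 : V1), i0)}).ncard = Nj.ncard - 1 :=
        Set.ncard_diff_singleton_of_mem hji'
      have h2 := rp_neighborSet_ncard hℓ hr1 hd hr2 x0 j0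
      rw [← hNj] at h2
      omega
    calc F.ncard ≤ Fi.ncard + Fj.ncard := Set.ncard_union_le _ _
      _ ≤ 2 * δ2 := by
          have e1 : Fi.ncard ≤ (Ni \ {((x0 : V1), j0)}).ncard := by
            rw [hFi]; exact Set.ncard_image_le (Set.toFinite _)
          have e2 : Fj.ncard ≤ (Nj \ {((x0 : V1), i0)}).ncard := by
            rw [hFj]; exact Set.ncard_image_le (Set.toFinite _)
          omega
  -- edges incident to the pair and leaving it are all in F
  have hclosed : ∀ u ∈ ({((x0 : V1), i0), ((x0 : V1), j0)} : Set (V1 × V2)), ∀ w,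
      (G.deleteEdges F).Adj u w → w ∈ ({((x0 : V1), i0), ((x0 : V1), j0)} : Set (V1 × V2)) := by
    rintro u hu w hadj
    rw [deleteEdges_adj] at hadj
    by_contra hw
    simp only [Set.mem_insert_iff, Set.mem_singleton_iff] at hw hu
    push_neg at hw
    rcases hu with rfl | rfl
    · exact hadj.2 (Or.inl ⟨w, ⟨hadj.1, hw.2⟩, rfl⟩)
    · exact hadj.2 (Or.inr ⟨w, ⟨hadj.1, hw.1⟩, rfl⟩)
  obtain ⟨j', hj'adj⟩ := rp_cross_adj (G2 := G2) hℓ hr1 hd x0 i0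
  have hout : (ℓ x0 i0, j') ∉ ({((x0 : V1), i0), ((x0 : V1), j0)} : Set (V1 × V2)) := by
    simp only [Set.mem_insert_iff, Set.mem_singleton_iff]
    push_neg
    constructor <;> exact fun h => (hℓ.2 x0 i0).ne' (congrArg Prod.fst h)
  refine ⟨F, ⟨hFsub, ?_, ?_⟩, hFcard⟩
  · exact not_connected_of_separated hclosed (Set.mem_insert _ _) hout
  · -- no isolated vertices
    rintro ⟨a, k⟩
    by_cases hax : a = x0
    · subst hax
      by_cases hk : k = i0 ∨ k = j0
      · -- the special pair: joined to each other
        rcases hk with rfl | rfl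
        · exact ⟨((a : V1), j0), by rw [deleteEdges_adj]; exact ⟨Or.inl ⟨rfl, hij⟩, hspec⟩⟩
        · refine ⟨((a : V1), i0), ?_⟩
          rw [deleteEdges_adj]
          refine ⟨Or.inl ⟨rfl, hij.symm⟩, fun hm => hspec ?_⟩
          rwa [Sym2.eq_swap] at hm
      · push_neg at hk
        -- cross neighbour survives
        obtain ⟨j'', hadj⟩ := rp_cross_adj (G2 := G2) hℓ hr1 hd a k
        refine ⟨(ℓ a k, j''), ?_⟩
        rw [deleteEdges_adj]
        refine ⟨hadj, ?_⟩
        rintro (h | h)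
        · refine notmem_image_star ?_ h
          rw [Sym2.mem_iff]
          push_neg
          constructor
          · exact fun hh => hk.1 (congrArg Prod.snd hh).symm
          · exact fun hh => (hℓ.2 a k).ne' (congrArg Prod.fst hh).symm
        · refine notmem_image_star ?_ h
          rw [Sym2.mem_iff]
          push_neg
          constructor
          · exact fun hh => hk.2 (congrArg Prod.snd hh).symm
          · exact fun hh => (hℓ.2 a k).ne' (congrArg Prod.fst hh).symm
    · -- other cloud: cloud neighbour survives
      have hne : (G2.neighborSet k).Nonempty :=
        Set.nonempty_of_ncard_ne_zero (by rw [hr2 k]; omega)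
      obtain ⟨m, hm⟩ := hne
      refine ⟨(a, m), ?_⟩
      rw [deleteEdges_adj]
      refine ⟨Or.inl ⟨rfl, hm⟩, ?_⟩
      rintro (h | h) <;>
      · refine notmem_image_star ?_ h
        rw [Sym2.mem_iff]
        push_neg
        constructor <;> exact fun hh => hax (congrArg Prod.fst hh).symm

end Upper

section UpperLam
variable {V1 V2 : Type*} [Fintype V1] [Fintype V2] {δ1 δ2 : ℕ}
variable {G1 : SimpleGraph V1} {G2 : SimpleGraph V2} {ℓ : V1 → V2 → V1}

lemma upper_lam (hℓ : IsRPLabelling G1 ℓ) (hc1 : G1.Connected) (hc2 : G2.Connected)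
    (hr1 : ∀ x : V1, (G1.neighborSet x).ncard = δ1)
    (hr2 : ∀ i : V2, (G2.neighborSet i).ncard = δ2)
    (hd : Fintype.card V2 = δ1) (hδ1 : 1 ≤ δ1) (hδ2 : 1 ≤ δ2) :
    ∃ F : Set (Sym2 (V1 × V2)), IsRestrictedEdgeCut (replacementProduct G1 G2 ℓ) F ∧
      F.ncard ≤ edgeConn G1 := by
  classical
  have hV2 : Nonempty V2 := hc2.nonempty
  obtain ⟨F1, h1sub, h1card, h1dis⟩ := Nat.sInf_mem (edgeConn_set_nonempty hc1 hr1 hδ1)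
  set lab : V1 → V1 → V2 := fun x y =>
    if h : ∃ i, ℓ x i = y then h.choose else Classical.arbitrary V2 with hlabdef
  have hlab : ∀ {x y : V1}, G1.Adj x y → ℓ x (lab x y) = y := by
    intro x y hxy
    have h := exists_label hℓ hr1 hd hxy
    rw [hlabdef]
    simp only [dif_pos h]
    exact h.choose_spec
  set lift : Sym2 V1 → Sym2 (V1 × V2) :=
    Sym2.lift ⟨fun x y => s((x, lab x y), (y, lab y x)), fun x y => Sym2.eq_swap⟩
    with hliftdef
  have hliftval : ∀ x y : V1, lift s(x, y) = s((x, lab x y), (y, lab y x)) := by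
    intro x y
    rw [hliftdef, Sym2.lift_mk]
  set F := lift '' F1 with hFdef
  have hFcard : F.ncard ≤ edgeConn G1 := by
    have h := Set.ncard_image_le (s := F1) (f := lift) (Set.toFinite _)
    rw [h1card] at h
    exact h
  have hFsub : F ⊆ (replacementProduct G1 G2 ℓ).edgeSet := by
    rintro e ⟨e', he', rfl⟩
    induction e' using Sym2.ind with
    | _ x y =>
      have hadj : G1.Adj x y := (mem_edgeSet _).1 (h1sub he')
      rw [hliftval, mem_edgeSet]
      exact Or.inr ⟨hadj, hlab hadj, hlab hadj.symm⟩
  -- projection of reachability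
  have hproj : ∀ p q : V1 × V2,
      ((replacementProduct G1 G2 ℓ).deleteEdges F).Reachable p q →
      (G1.deleteEdges F1).Reachable p.1 q.1 := by
    intro p q h
    obtain ⟨w⟩ := h
    induction w with
    | nil => exact Reachable.refl _
    | @cons p r q h hw ih =>
        rw [deleteEdges_adj] at h
        rcases h.1 with ⟨he, -⟩ | ⟨hadj, h2, h3⟩
        · exact he ▸ ih
        · refine Reachable.trans (Adj.reachable ?_) ih
          rw [deleteEdges_adj]
          refine ⟨hadj, fun hm => h.2 ?_⟩
          have heq : lift s(p.1, r.1) = s(p, r) := by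
            rw [hliftval]
            have e1 : lab p.1 r.1 = p.2 := hℓ.1 p.1 (by rw [hlab hadj, h2])
            have e2 : lab r.1 p.1 = r.2 := hℓ.1 r.1 (by rw [hlab hadj.symm, h3])
            rw [e1, e2]
          exact heq ▸ Set.mem_image_of_mem _ hm
  have hV1 : Nonempty V1 := hc1.nonempty
  obtain ⟨i₀⟩ := hV2
  refine ⟨F, ⟨hFsub, ?_, ?_⟩, hFcard⟩
  · -- not connected
    have hpre : ¬ (G1.deleteEdges F1).Preconnected := by
      intro hp
      exact h1dis ((connected_iff _).2 ⟨hp, hV1⟩)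
    unfold SimpleGraph.Preconnected at hpre
    push_neg at hpre
    obtain ⟨x, y, hxy⟩ := hpre
    intro hcon
    exact hxy (hproj (x, i₀) (y, i₀) (hcon.preconnected _ _))
  · -- no isolated vertices: cloud neighbours survive
    rintro ⟨a, k⟩
    have hne : (G2.neighborSet k).Nonempty :=
      Set.nonempty_of_ncard_ne_zero (by rw [hr2 k]; omega)
    obtain ⟨m, hm⟩ := hne
    refine ⟨(a, m), ?_⟩
    rw [deleteEdges_adj]
    refine ⟨Or.inl ⟨rfl, hm⟩, ?_⟩
    rintro ⟨e', he', heq⟩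
    induction e' using Sym2.ind with
    | _ x y =>
      have hadj : G1.Adj x y := (mem_edgeSet _).1 (h1sub he')
      rw [hliftval, Sym2.eq_iff] at heq
      rcases heq with ⟨h1, h2⟩ | ⟨h1, h2⟩
      · exact hadj.ne ((congrArg Prod.fst h1).trans (congrArg Prod.fst h2).symm)
      · exact hadj.ne ((congrArg Prod.fst h1).trans (congrArg Prod.fst h2).symm)

end UpperLam

section Degenerate
variable {V1 V2 : Type*} [Fintype V1] [Fintype V2] {δ1 : ℕ}
variable {G1 : SimpleGraph V1} {G2 : SimpleGraph V2} {ℓ : V1 → V2 → V1}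

lemma degenerate_case (hℓ : IsRPLabelling G1 ℓ) (hc1 : G1.Connected) (hc2 : G2.Connected)
    (hr1 : ∀ x : V1, (G1.neighborSet x).ncard = δ1)
    (hr2 : ∀ i : V2, (G2.neighborSet i).ncard = 0)
    (hd : Fintype.card V2 = δ1) :
    restrictedEdgeConn (replacementProduct G1 G2 ℓ) = 0 := by
  classical
  have hnoadj : ∀ i j : V2, ¬ G2.Adj i j := by
    intro i j h
    have h0 := hr2 i
    rw [Set.ncard_eq_zero (Set.toFinite _)] at h0
    exact absurd (h0 ▸ h : j ∈ (∅ : Set V2)) (Set.notMem_empty j)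
  have hsing : ∀ i j : V2, i = j := by
    intro i j
    exact (walk_closed (S := {i}) (fun u _ v hadj => absurd hadj (hnoadj u v))
      (hc2.preconnected i j) rfl).symm
  have huniq : ∀ x y : V1, G1.Adj x y → ∀ i : V2, ℓ x i = y := by
    intro x y hy i
    obtain ⟨i', hi'⟩ := exists_label hℓ hr1 hd hy
    rw [← hi']
    exact congrArg (ℓ x) (hsing i i')
  have hset : {k | ∃ F : Set (Sym2 (V1 × V2)),
      IsRestrictedEdgeCut (replacementProduct G1 G2 ℓ) F ∧ F.ncard = k} = ∅ := by
    rw [Set.eq_empty_iff_forall_notMem]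
    rintro k ⟨F, ⟨hFsub, hFdis, hFdeg⟩, -⟩
    apply hFdis
    have hedge : ∀ p q : V1 × V2, (replacementProduct G1 G2 ℓ).Adj p q →
        ((replacementProduct G1 G2 ℓ).deleteEdges F).Adj p q := by
      intro p q hpq
      obtain ⟨w, hw⟩ := hFdeg p
      rw [deleteEdges_adj] at hw
      have hwq : w = q := by
        rcases hw.1 with ⟨-, h⟩ | ⟨h1, h2, h3⟩
        · exact absurd h (hnoadj _ _)
        rcases hpq with ⟨-, h⟩ | ⟨h1', h2', h3'⟩
        · exact absurd h (hnoadj _ _)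
        · rw [Prod.ext_iff]
          exact ⟨h2.symm.trans h2', hsing _ _⟩
      rw [deleteEdges_adj]
      exact ⟨hpq, by rw [← hwq]; exact hw.2⟩
    have hmap : ∀ a b : V1, G1.Reachable a b → ∀ ia ib : V2,
        ((replacementProduct G1 G2 ℓ).deleteEdges F).Reachable (a, ia) (b, ib) := by
      intro a b h
      obtain ⟨w⟩ := h
      induction w with
      | @nil a =>
          intro ia ib
          rw [hsing ia ib]
      | @cons a c b h p ih =>
          intro ia ib
          refine Reachable.trans (Adj.reachable (hedge (a, ia) (c, ia) ?_)) (ih ia ib)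
          exact Or.inr ⟨h, huniq a c h ia, huniq c a h.symm ia⟩
    rw [connected_iff]
    obtain ⟨x⟩ := hc1.nonempty
    obtain ⟨i⟩ := hc2.nonempty
    refine ⟨?_, ⟨(x, i)⟩⟩
    rintro ⟨a, ia⟩ ⟨b, ib⟩
    exact hmap a b (hc1.preconnected a b) ia ib
  have : restrictedEdgeConn (replacementProduct G1 G2 ℓ) = sInf ∅ := by
    rw [← hset]; rfl
  rw [this, Nat.sInf_empty]

end Degenerate

/-- Corollary 4.5. Let `G1` be a connected `δ1`-regular graph and `G2`
a connected `δ2`-regular graph on `δ1` vertices. If `κ(G1) = λ(G1)` and `G2` is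
`λ'`-optimal, then `λ'(G1 ® G2) = min {λ(G1), 2·δ2}`. -/
theorem restrictedEdgeConn_replacementProduct_eq_of_kappa_eq_lambda
    {V1 V2 : Type*} [Fintype V1] [Fintype V2] {δ1 δ2 : ℕ}
    (G1 : SimpleGraph V1) (G2 : SimpleGraph V2) (ℓ : V1 → V2 → V1)
    (hℓ : IsRPLabelling G1 ℓ)
    (hc1 : G1.Connected) (hc2 : G2.Connected)
    (hr1 : ∀ x : V1, (G1.neighborSet x).ncard = δ1)
    (hr2 : ∀ i : V2, (G2.neighborSet i).ncard = δ2)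
    (hd : Fintype.card V2 = δ1)
    (hkleq : vertexConn G1 = edgeConn G1)
    (hopt : LambdaPrimeOptimal G2) :
    restrictedEdgeConn (replacementProduct G1 G2 ℓ) = min (edgeConn G1) (2 * δ2) := by
  classical
  have hδ1 : 1 ≤ δ1 := by
    rw [← hd]
    have : Nonempty V2 := hc2.nonempty
    exact Fintype.card_pos
  rcases Nat.eq_zero_or_pos δ2 with hδ2 | hδ2
  · subst hδ2
    rw [degenerate_case hℓ hc1 hc2 hr1 hr2 hd]
    omega
  · have hup : restrictedEdgeConn (replacementProduct G1 G2 ℓ) ≤ min (edgeConn G1) (2 * δ2) := by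
      rcases le_or_gt (edgeConn G1) (2 * δ2) with hle | hlt
      · obtain ⟨F, hcut, hcard⟩ := upper_lam hℓ hc1 hc2 hr1 hr2 hd hδ1 hδ2
        have h2 : restrictedEdgeConn (replacementProduct G1 G2 ℓ) ≤ F.ncard :=
          Nat.sInf_le ⟨F, hcut, rfl⟩
        omega
      · obtain ⟨F, hcut, hcard⟩ := upper_2d hℓ hc1 hc2 hr1 hr2 hd hδ2
        have h2 : restrictedEdgeConn (replacementProduct G1 G2 ℓ) ≤ F.ncard :=
          Nat.sInf_le ⟨F, hcut, rfl⟩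
        omega
    have hlow : min (edgeConn G1) (2 * δ2) ≤
        restrictedEdgeConn (replacementProduct G1 G2 ℓ) := by
      obtain ⟨F0, hcut0, -⟩ := upper_2d hℓ hc1 hc2 hr1 hr2 hd hδ2
      have hne : {k | ∃ F : Set (Sym2 (V1 × V2)),
          IsRestrictedEdgeCut (replacementProduct G1 G2 ℓ) F ∧ F.ncard = k}.Nonempty :=
        ⟨F0.ncard, F0, hcut0, rfl⟩
      obtain ⟨F, hcut, hcard⟩ := Nat.sInf_mem hne
      have h := lower_bound hℓ hc1 hc2 hr1 hr2 hd hkleq hopt hδ2 hcut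
      rw [hcard] at h
      exact h
    omega
end

section
/- Let A and B be finite groups with generating sets S_A and S_B respectively, with |S_A| = |B| ≥ 2, let φ : B → Aut(A) be an action of B on A such that S_A equals the orbit x^B = {φ_b(x) : b ∈ B} of some x ∈ S_A, and let S = {(e_A, b) : b ∈ S_B} ∪ {(x, e_B)} ⊆ A⋊_φB. Then S generates the semidirect product A⋊_φB. Moreover, if S_B = S_B^{-1} and x = x^{-1}, then S = S^{-1} and the Cayley graph C_{A⋊_φB}(S) is a replacement product of the Cayley graphs C_A(S_A) and C_B(S_B). -/
open SimpleGraph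

/-- The (undirected) Cayley graph of a group `Γ` with connection set `S`: vertices are the
elements of `Γ`, and distinct `x, y` are adjacent iff `x⁻¹ * y ∈ S` (or symmetrically
`y⁻¹ * x ∈ S`; when `S = S⁻¹` the two conditions agree). -/
def cayleyGraph {Γ : Type*} [Group Γ] (S : Set Γ) : SimpleGraph Γ where
  Adj x y := x ≠ y ∧ (x⁻¹ * y ∈ S ∨ y⁻¹ * x ∈ S)
  symm := by
    constructor
    rintro x y ⟨h1, h2⟩
    exact ⟨h1.symm, h2.symm⟩
  loopless := by
    constructor
    rintro x ⟨h, -⟩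
    exact h rfl

/-- Theorem 5.4. Let `A` and `B` be finite groups with generating sets
`SA` and `SB`, with `|SA| = |B| ≥ 2`, let `φ` be an action of `B` on `A` such that `SA`
is the orbit of some `x ∈ SA`, and let `S = {(1, b) : b ∈ SB} ∪ {(x, 1)} ⊆ A ⋊[φ] B`.
Then `S` generates `A ⋊[φ] B`; moreover, if `SB = SB⁻¹` and `x = x⁻¹`, then `S = S⁻¹`
and the Cayley graph of `A ⋊[φ] B` with connection set `S` is a replacement product of
the Cayley graphs `C_A(SA)` and `C_B(SB)`. -/
theorem cayleyGraph_semidirectProduct_replacementProduct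
    {A B : Type*} [Group A] [Group B] [Fintype A] [Fintype B]
    (SA : Set A) (SB : Set B) (φ : B →* MulAut A) (x : A)
    (hgenA : Subgroup.closure SA = ⊤) (hgenB : Subgroup.closure SB = ⊤)
    (hcard : SA.ncard = Fintype.card B) (hB2 : 2 ≤ Fintype.card B)
    (hx : x ∈ SA) (horb : SA = Set.range fun b : B => φ b x)
    (S : Set (A ⋊[φ] B))
    (hS : S = {p : A ⋊[φ] B | ∃ b ∈ SB, p = ⟨1, b⟩} ∪ {(⟨x, 1⟩ : A ⋊[φ] B)}) :
    Subgroup.closure S = ⊤ ∧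
    (SB = SB⁻¹ → x = x⁻¹ →
      S = S⁻¹ ∧
      ∃ ℓ : A → B → A, IsRPLabelling (cayleyGraph SA) ℓ ∧
        Nonempty (cayleyGraph S ≃g
          replacementProduct (cayleyGraph SA) (cayleyGraph SB) ℓ)) := by
  -- the map b ↦ φ b x is injective
  have hinj : Function.Injective (fun b : B => φ b x) := by
    have h1 : ((fun b : B => φ b x) '' Set.univ).ncard = (Set.univ : Set B).ncard := by
      rw [Set.image_univ, ← horb, hcard, Set.ncard_univ, Nat.card_eq_fintype_card]
    rw [← Set.injOn_univ]
    exact (Set.ncard_image_iff Set.finite_univ).1 h1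
  -- x ≠ 1
  have hx1 : x ≠ 1 := by
    rintro rfl
    have hsub : SA ⊆ {1} := by
      rw [horb]; rintro _ ⟨b, rfl⟩; simp
    have := Set.ncard_le_ncard hsub (Set.finite_singleton 1)
    simp [hcard] at this
    omega
  have hφx1 : ∀ b : B, φ b x ≠ 1 := by
    intro b h
    exact hx1 ((φ b).injective (by simpa using h))
  have hxS : (⟨x, 1⟩ : A ⋊[φ] B) ∈ S := by rw [hS]; right; rfl
  -- generation
  have hinrmem : ∀ b : B, (SemidirectProduct.inr b : A ⋊[φ] B) ∈ Subgroup.closure S := by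
    have hle : (Subgroup.closure SB).map (SemidirectProduct.inr (φ := φ)) ≤
        Subgroup.closure S := by
      rw [MonoidHom.map_closure]
      apply (Subgroup.closure_le _).2
      rintro _ ⟨b, hb, rfl⟩
      apply Subgroup.subset_closure
      rw [hS]; left
      exact ⟨b, hb, by ext <;> simp⟩
    intro b
    exact hle ⟨b, by rw [hgenB]; trivial, rfl⟩
  have hconj : ∀ b : B, (SemidirectProduct.inl (φ b x) : A ⋊[φ] B) ∈ Subgroup.closure S := by
    intro b
    have h := mul_mem (mul_mem (hinrmem b) (Subgroup.subset_closure hxS)) (inv_mem (hinrmem b))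
    convert h using 1
    ext <;> simp
  have hinlmem : ∀ a : A, (SemidirectProduct.inl a : A ⋊[φ] B) ∈ Subgroup.closure S := by
    have hle : (Subgroup.closure SA).map (SemidirectProduct.inl (φ := φ)) ≤
        Subgroup.closure S := by
      rw [MonoidHom.map_closure]
      apply (Subgroup.closure_le _).2
      rintro _ ⟨a, ha, rfl⟩
      rw [horb] at ha
      obtain ⟨b, rfl⟩ := ha
      exact hconj b
    intro a
    exact hle ⟨a, by rw [hgenA]; trivial, rfl⟩
  have hgen : Subgroup.closure S = ⊤ := by
    rw [Subgroup.eq_top_iff']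
    intro g
    rw [← SemidirectProduct.inl_left_mul_inr_right g]
    exact mul_mem (hinlmem g.left) (hinrmem g.right)
  refine ⟨hgen, fun hSB hxx => ?_⟩
  have hxx2 : x * x = 1 := by nth_rewrite 2 [hxx]; exact mul_inv_cancel x
  -- S is symmetric
  have hSsymm : ∀ p : A ⋊[φ] B, p ∈ S → p⁻¹ ∈ S := by
    intro p hp
    rw [hS] at hp ⊢
    rcases hp with ⟨b, hb, rfl⟩ | hp
    · left
      refine ⟨b⁻¹, ?_, by ext <;> simp⟩
      rw [hSB, Set.mem_inv]
      simpa using hb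
    · rw [Set.mem_singleton_iff] at hp
      subst hp
      right
      show _ = _
      ext <;> simp [← hxx]
  have hSinv : S = S⁻¹ := by
    ext p
    rw [Set.mem_inv]
    exact ⟨fun h => hSsymm p h, fun h => by simpa using hSsymm p⁻¹ h⟩
  -- membership characterization
  have hmem : ∀ p q : A ⋊[φ] B, p⁻¹ * q ∈ S ↔
      (p.left = q.left ∧ p.right⁻¹ * q.right ∈ SB) ∨
      (q.left = p.left * φ p.right x ∧ p.right = q.right) := by
    intro p q
    rw [hS]
    constructor
    · rintro (⟨b, hb, he⟩ | he)
      · rw [inv_mul_eq_iff_eq_mul] at he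
        left
        constructor
        · rw [he]; simp
        · rw [he]; simpa using hb
      · rw [Set.mem_singleton_iff, inv_mul_eq_iff_eq_mul] at he
        right
        constructor
        · rw [he]; simp
        · rw [he]; simp
    · rintro (⟨h1, h2⟩ | ⟨h1, h2⟩)
      · left
        refine ⟨p.right⁻¹ * q.right, h2, ?_⟩
        ext
        · simp [h1, ← map_mul]
        · simp
      · right
        show _ = _
        ext
        · simp only [SemidirectProduct.mul_left, SemidirectProduct.inv_left,
            SemidirectProduct.inv_right, h1]
          rw [← map_mul]
          simp [← MulAut.mul_apply, ← map_mul]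
        · simp [← h2]
  refine ⟨hSinv, fun a b => a * φ b x, ⟨?_, ?_⟩, ⟨?_⟩⟩
  · intro a b b' h
    exact hinj (mul_left_cancel h)
  · intro a i
    refine ⟨fun h => hφx1 i ?_, Or.inl ?_⟩
    · have h' : a * 1 = a * φ i x := by rw [mul_one]; exact h
      exact (mul_left_cancel h').symm
    · rw [horb]
      refine ⟨i, ?_⟩
      simp
  · refine ⟨⟨fun g => (g.left, g.right), fun q => ⟨q.1, q.2⟩, fun g => rfl, fun q => rfl⟩, ?_⟩
    intro p q
    show ((p.left = q.left ∧ (cayleyGraph SB).Adj p.right q.right) ∨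
      ((cayleyGraph SA).Adj p.left q.left ∧ p.left * φ p.right x = q.left ∧
        q.left * φ q.right x = p.left)) ↔ (cayleyGraph S).Adj p q
    constructor
    · rintro (⟨h1, h2, h3⟩ | ⟨h1, h2, h3⟩)
      · refine ⟨fun he => h2 (congrArg SemidirectProduct.right he), ?_⟩
        rcases h3 with h3 | h3
        · exact Or.inl ((hmem p q).2 (Or.inl ⟨h1, h3⟩))
        · exact Or.inr ((hmem q p).2 (Or.inl ⟨h1.symm, h3⟩))
      · -- from the labelling conditions, p.right = q.right
        have key : φ q.right x = φ p.right x := by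
          have h5 : φ p.right x * φ q.right x = 1 := by
            have h4 : p.left * (φ p.right x * φ q.right x) = p.left * 1 := by
              rw [mul_one, ← mul_assoc, h2, h3]
            exact mul_left_cancel h4
          calc φ q.right x
              = (φ p.right x)⁻¹ * (φ p.right x * φ q.right x) := by
                rw [← mul_assoc, inv_mul_cancel, one_mul]
            _ = (φ p.right x)⁻¹ := by rw [h5, mul_one]
            _ = φ p.right x⁻¹ := (map_inv _ _).symm
            _ = φ p.right x := by rw [← hxx]
        have hpr : p.right = q.right := (hinj key).symm
        refine ⟨fun he => h1.1 (congrArg SemidirectProduct.left he), ?_⟩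
        exact Or.inl ((hmem p q).2 (Or.inr ⟨h2.symm, hpr⟩))
    · rintro ⟨hne, h | h⟩
      · rw [hmem] at h
        rcases h with ⟨h1, h2⟩ | ⟨h1, h2⟩
        · exact Or.inl ⟨h1, fun he => hne (SemidirectProduct.ext h1 he), Or.inl h2⟩
        · refine Or.inr ⟨⟨fun he => hne (SemidirectProduct.ext he h2), Or.inl ?_⟩,
            h1.symm, ?_⟩
          · rw [h1, horb]
            exact ⟨p.right, by simp⟩
          · rw [h1, ← h2, mul_assoc, ← map_mul, hxx2, map_one, mul_one]
      · rw [hmem] at h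
        rcases h with ⟨h1, h2⟩ | ⟨h1, h2⟩
        · exact Or.inl ⟨h1.symm, fun he => hne (SemidirectProduct.ext h1.symm he), Or.inr h2⟩
        · refine Or.inr ⟨⟨fun he => hne (SemidirectProduct.ext he h2.symm), Or.inr ?_⟩,
            ?_, h1.symm⟩
          · rw [h1, horb]
            exact ⟨q.right, by simp⟩
          · rw [h1, ← h2, mul_assoc, ← map_mul, hxx2, map_one, mul_one]
end
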